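/- arXiv:math/0605276 — 4 statements merged into one kernel-verified Lean document; each statement's English description precedes it below -/
import Mathlib

section
/- Let Γ be a group acting on the circle S¹ by homeomorphisms such that every Γ-orbit is infinite. Then either every Γ-orbit is dense in S¹, or there is exactly one minimal set K for the action (a nonempty closed Γ-invariant set containing no proper nonempty closed Γ-invariant subset), and this unique minimal set K is homeomorphic to the Cantor set (equivalently, K is a nonempty compact, perfect, totally disconnected proper subset of S¹). -/
noncomputable section

open MeasureTheory Set Function
open scoped ENNReal

/-- The group of self-homeomorphisms of a topological space, under composition. -/
instance homeoGroup {X : Type*} [TopologicalSpace X] : Group (X ≃ₜ X) where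
  mul f g := g.trans f
  one := Homeomorph.refl X
  inv := Homeomorph.symm
  mul_assoc f g h := rfl
  one_mul f := by ext x; rfl
  mul_one f := by ext x; rfl
  inv_mul_cancel f := by ext x; exact f.symm_apply_apply x

@[simp] lemma homeo_mul_apply {X : Type*} [TopologicalSpace X] (f g : X ≃ₜ X) (x : X) :
    (f * g) x = f (g x) := rfl

/-- The circle `S¹ = ℝ/ℤ`. -/
abbrev Circle' := UnitAddCircle

/-- A homeomorphism of the circle `ℝ/ℤ` is orientation-preserving if it lifts to a strictly
increasing homeomorphism `F` of `ℝ` with `F (x + 1) = F x + 1`. -/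
def IsOrientationPreserving (h : Circle' ≃ₜ Circle') : Prop :=
  ∃ F : ℝ ≃ₜ ℝ, StrictMono F ∧ (∀ x : ℝ, F (x + 1) = F x + 1) ∧
    ∀ x : ℝ, h (x : Circle') = ((F x : ℝ) : Circle')

/-- An action on the circle is minimal and strongly proximal if every proper closed subset
can be moved inside any nonempty open subset by some group element. -/
def IsMinimalStronglyProximal {Γ : Type*} [Group Γ] (ρ : Γ →* (Circle' ≃ₜ Circle')) : Prop :=
  ∀ K : Set Circle', IsClosed K → K ≠ Set.univ → ∀ U : Set Circle', IsOpen U → U.Nonempty →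
    ∃ γ : Γ, (ρ γ) '' K ⊆ U

/-- A minimal set for an action by homeomorphisms: a nonempty closed invariant set containing
no proper nonempty closed invariant subset. -/
def IsMinimalSet {Γ X : Type*} [Group Γ] [TopologicalSpace X]
    (ρ : Γ →* (X ≃ₜ X)) (K : Set X) : Prop :=
  K.Nonempty ∧ IsClosed K ∧ (∀ γ : Γ, (ρ γ) '' K ⊆ K) ∧
    ∀ K' : Set X, K' ⊆ K → K'.Nonempty → IsClosed K' → (∀ γ : Γ, (ρ γ) '' K' ⊆ K') → K' = K

/-! ### Auxiliary general topology lemmas -/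

lemma homeo_image_connectedComponentIn_subset {X Y : Type*} [TopologicalSpace X]
    [TopologicalSpace Y] (h : X ≃ₜ Y) (F : Set X) (x : X) (hx : x ∈ F) :
    h '' connectedComponentIn F x ⊆ connectedComponentIn (h '' F) (h x) := by
  apply IsPreconnected.subset_connectedComponentIn
  · exact (isPreconnected_connectedComponentIn).image _ h.continuous.continuousOn
  · exact ⟨x, mem_connectedComponentIn hx, rfl⟩
  · exact image_mono (connectedComponentIn_subset F x)

lemma homeo_image_connectedComponentIn {X Y : Type*} [TopologicalSpace X] [TopologicalSpace Y]
    (h : X ≃ₜ Y) (F : Set X) (x : X) (hx : x ∈ F) :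
    h '' connectedComponentIn F x = connectedComponentIn (h '' F) (h x) := by
  apply subset_antisymm (homeo_image_connectedComponentIn_subset h F x hx)
  have h2 := homeo_image_connectedComponentIn_subset h.symm (h '' F) (h x) ⟨x, hx, rfl⟩
  rw [h.symm_apply_apply] at h2
  have h3 : h.symm '' (h '' F) = F := by
    rw [← Set.image_comp]; simp
  rw [h3] at h2
  intro z hz
  have := h2 ⟨z, hz, rfl⟩
  exact ⟨h.symm z, this, h.apply_symm_apply z⟩

lemma homeo_image_derivedSet_subset {X Y : Type*} [TopologicalSpace X] [TopologicalSpace Y]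
    (h : X ≃ₜ Y) (F : Set X) :
    h '' derivedSet F ⊆ derivedSet (h '' F) := by
  rintro _ ⟨x, hx, rfl⟩
  rw [mem_derivedSet] at hx ⊢
  rw [accPt_iff_nhds] at hx ⊢
  intro U hU
  obtain ⟨y, ⟨hy1, hy2⟩, hy3⟩ := hx (h ⁻¹' U) (h.continuous.continuousAt.preimage_mem_nhds hU)
  exact ⟨h y, ⟨hy1, ⟨y, hy2, rfl⟩⟩, fun e => hy3 (h.injective e)⟩

/-- Frontier of a preconnected bounded subset of `ℝ` lies in `{sInf D, sSup D}`. -/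
lemma frontier_subset_of_preconnected_real {D : Set ℝ} (hD : IsPreconnected D)
    (hb : BddAbove D) (hb' : BddBelow D) : frontier D ⊆ {sInf D, sSup D} := by
  rcases D.eq_empty_or_nonempty with rfl | hne
  · simp
  intro x hx
  by_contra hmem
  simp only [mem_insert_iff, mem_singleton_iff, not_or] at hmem
  have hcl : closure D ⊆ Icc (sInf D) (sSup D) :=
    closure_minimal (fun y hy => ⟨csInf_le hb' hy, le_csSup hb hy⟩) isClosed_Icc
  have hxc := hcl hx.1
  have h1 : sInf D < x := lt_of_le_of_ne hxc.1 (Ne.symm hmem.1)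
  have h2 : x < sSup D := lt_of_le_of_ne hxc.2 hmem.2
  obtain ⟨u, huD, hux⟩ := exists_lt_of_csInf_lt hne h1
  obtain ⟨v, hvD, hxv⟩ := exists_lt_of_lt_csSup hne h2
  have hsub : Ioo u v ⊆ D := fun y hy =>
    hD.ordConnected.out huD hvD ⟨le_of_lt hy.1, le_of_lt hy.2⟩
  exact hx.2 (mem_interior.mpr ⟨Ioo u v, hsub, isOpen_Ioo, hux, hxv⟩)

/-! ### The chart on the circle minus a point -/

lemma circle_frontier_finite {C : Set Circle'} (hC : IsPreconnected C) {a : ℝ}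
    (ha : ((a : ℝ) : Circle') ∉ C) : (frontier C).Finite := by
  set e := AddCircle.openPartialHomeomorphCoe (1 : ℝ) a with he
  have hCt : C ⊆ e.target := by
    intro z hz
    simp only [he, AddCircle.openPartialHomeomorphCoe_target, mem_compl_iff, mem_singleton_iff]
    rintro rfl; exact ha hz
  set D : Set ℝ := e.symm '' C with hD
  have hDpre : IsPreconnected D := hC.image _ (e.continuousOn_symm.mono hCt)
  have hDs : D ⊆ e.source := by
    rintro _ ⟨z, hz, rfl⟩; exact e.map_target (hCt hz)
  have hsrc : e.source = Ioo a (a + 1) := by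
    simp [he]
  have hED : e '' D = C := by
    apply subset_antisymm
    · rintro _ ⟨_, ⟨z, hz, rfl⟩, rfl⟩
      rw [e.right_inv (hCt hz)]; exact hz
    · intro z hz
      exact ⟨e.symm z, mem_image_of_mem _ hz, e.right_inv (hCt hz)⟩
  have hba : BddAbove D := ⟨a + 1, fun y hy => le_of_lt (hsrc ▸ hDs hy).2⟩
  have hbb : BddBelow D := ⟨a, fun y hy => le_of_lt (hsrc ▸ hDs hy).1⟩
  have key : frontier C ⊆ insert ((a : ℝ) : Circle') (e '' {sInf D, sSup D}) := by
    intro z hz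
    by_cases hza : z = ((a : ℝ) : Circle')
    · exact Or.inl hza
    have hzt : z ∈ e.target := by
      simp only [he, AddCircle.openPartialHomeomorphCoe_target, mem_compl_iff, mem_singleton_iff]
      exact hza
    have h1 : e.symm z ∈ closure D :=
      mem_closure_image (e.continuousAt_symm hzt) hz.1
    have h2 : e.symm z ∉ interior D := by
      intro hint
      have hop : IsOpen (e '' interior D) :=
        e.isOpen_image_of_subset_source isOpen_interior (interior_subset.trans hDs)
      have hzin : z ∈ e '' interior D := ⟨e.symm z, hint, e.right_inv hzt⟩
      have : z ∈ interior C :=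
        mem_interior.mpr ⟨e '' interior D, (image_mono interior_subset).trans hED.le, hop, hzin⟩
      exact hz.2 this
    have hfr : e.symm z ∈ frontier D := ⟨h1, h2⟩
    have := frontier_subset_of_preconnected_real hDpre hba hbb hfr
    exact Or.inr ⟨e.symm z, this, e.right_inv hzt⟩
  exact Set.Finite.subset (((Set.finite_singleton _).insert _).image _ |>.insert _) key

lemma circle_interior_nonempty {C : Set Circle'} (hC : IsPreconnected C) {a : ℝ}
    (ha : ((a : ℝ) : Circle') ∉ C) {x y : Circle'} (hx : x ∈ C) (hy : y ∈ C) (hxy : x ≠ y) :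
    (interior C).Nonempty := by
  set e := AddCircle.openPartialHomeomorphCoe (1 : ℝ) a with he
  have hCt : C ⊆ e.target := by
    intro z hz
    simp only [he, AddCircle.openPartialHomeomorphCoe_target, mem_compl_iff, mem_singleton_iff]
    rintro rfl; exact ha hz
  set D : Set ℝ := e.symm '' C with hD
  have hDpre : IsPreconnected D := hC.image _ (e.continuousOn_symm.mono hCt)
  have hDs : D ⊆ e.source := by
    rintro _ ⟨z, hz, rfl⟩; exact e.map_target (hCt hz)
  have hED : e '' D ⊆ C := by
    rintro _ ⟨_, ⟨z, hz, rfl⟩, rfl⟩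
    rw [e.right_inv (hCt hz)]; exact hz
  have hst : e.symm x ≠ e.symm y := by
    intro hcon
    apply hxy
    rw [← e.right_inv (hCt hx), ← e.right_inv (hCt hy), hcon]
  -- wlog order
  have main : ∀ s t : ℝ, s ∈ D → t ∈ D → s < t → (interior C).Nonempty := by
    intro s t hs ht hst'
    have hIoo : Ioo s t ⊆ D := fun w hw =>
      hDpre.ordConnected.out hs ht ⟨le_of_lt hw.1, le_of_lt hw.2⟩
    have hop : IsOpen (e '' Ioo s t) :=
      e.isOpen_image_of_subset_source isOpen_Ioo (hIoo.trans hDs)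
    obtain ⟨w, hw⟩ := nonempty_Ioo.mpr hst'
    refine ⟨e w, mem_interior.mpr ⟨e '' Ioo s t, ?_, hop, mem_image_of_mem _ hw⟩⟩
    exact (image_mono hIoo).trans hED
  rcases lt_trichotomy (e.symm x) (e.symm y) with h | h | h
  · exact main _ _ ⟨x, hx, rfl⟩ ⟨y, hy, rfl⟩ h
  · exact absurd h hst
  · exact main _ _ ⟨y, hy, rfl⟩ ⟨x, hx, rfl⟩ h

/-! ### The circle is locally connected -/

instance : LocallyConnectedSpace Circle' := by
  rw [locallyConnectedSpace_iff_connected_subsets]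
  intro x U hU
  obtain ⟨a, rfl⟩ := QuotientAddGroup.mk_surjective x
  have hq : IsOpenQuotientMap ((↑) : ℝ → Circle') := QuotientAddGroup.isOpenQuotientMap_mk
  have hpre : ((↑) : ℝ → Circle') ⁻¹' U ∈ nhds a := hq.continuous.continuousAt.preimage_mem_nhds hU
  obtain ⟨V, hV, hVpre, hVsub⟩ := locallyConnectedSpace_iff_connected_subsets.mp
    (inferInstance : LocallyConnectedSpace ℝ) a _ hpre
  refine ⟨((↑) : ℝ → Circle') '' V, ?_, hVpre.image _ hq.continuous.continuousOn, ?_⟩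
  · rw [← hq.map_nhds_eq]; exact Filter.image_mem_map hV
  · exact (image_mono hVsub).trans (image_preimage_subset _ _)

/-! ### Dynamics helpers -/

section Dynamics

variable {Γ : Type*} [Group Γ] (ρ : Γ →* (Circle' ≃ₜ Circle'))

lemma inv_image_eq {A : Set Circle'} (hA : ∀ γ : Γ, (ρ γ) '' A ⊆ A) (γ : Γ) :
    (ρ γ) '' A = A := by
  apply subset_antisymm (hA γ)
  intro z hz
  refine ⟨ρ γ⁻¹ z, hA γ⁻¹ ⟨z, hz, rfl⟩, ?_⟩
  have h1 : ρ γ * ρ γ⁻¹ = 1 := by rw [← map_mul, mul_inv_cancel, map_one]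
  calc (ρ γ) ((ρ γ⁻¹) z) = (ρ γ * ρ γ⁻¹) z := rfl
    _ = z := by rw [h1]; rfl

/-- Orbit of a point. -/
def orb (x : Circle') : Set Circle' := Set.range fun γ : Γ => ρ γ x

lemma orb_inv (x : Circle') (γ : Γ) : (ρ γ) '' orb ρ x ⊆ orb ρ x := by
  rintro _ ⟨_, ⟨δ, rfl⟩, rfl⟩
  exact ⟨γ * δ, by show ρ (γ * δ) x = _; rw [map_mul]; rfl⟩

lemma orb_closure_inv (x : Circle') (γ : Γ) :
    (ρ γ) '' closure (orb ρ x) ⊆ closure (orb ρ x) := by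
  rw [Homeomorph.image_closure]
  exact closure_mono (orb_inv ρ x γ)

lemma orb_closure_subset {A : Set Circle'} (hcl : IsClosed A)
    (hA : ∀ γ : Γ, (ρ γ) '' A ⊆ A) {x : Circle'} (hx : x ∈ A) :
    closure (orb ρ x) ⊆ A := by
  apply closure_minimal _ hcl
  rintro _ ⟨γ, rfl⟩
  exact hA γ ⟨x, hx, rfl⟩

/-- Zorn's lemma: every nonempty closed invariant set contains a minimal set. -/
lemma exists_minimal_subset {L : Set Circle'} (hne : L.Nonempty) (hcl : IsClosed L)
    (hinv : ∀ γ : Γ, (ρ γ) '' L ⊆ L) : ∃ K ⊆ L, IsMinimalSet ρ K := by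
  set S : Set (Set Circle') := {A | A.Nonempty ∧ IsClosed A ∧ ∀ γ : Γ, (ρ γ) '' A ⊆ A} with hS
  have hzorn := zorn_superset_nonempty S ?_ L ⟨hne, hcl, hinv⟩
  · obtain ⟨m, hmL, hm⟩ := hzorn
    refine ⟨m, hmL, hm.1.1, hm.1.2.1, hm.1.2.2, fun K' hK'm hne' hcl' hinv' => ?_⟩
    exact subset_antisymm hK'm (hm.2 ⟨hne', hcl', hinv'⟩ hK'm)
  · intro c hcS hchain hcne
    refine ⟨⋂₀ c, ⟨?_, ?_, ?_⟩, fun s hs => sInter_subset_of_mem hs⟩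
    · haveI : Nonempty c := hcne.to_subtype
      rw [sInter_eq_iInter]
      apply IsCompact.nonempty_iInter_of_directed_nonempty_isCompact_isClosed
      · rintro ⟨i, hi⟩ ⟨j, hj⟩
        rcases hchain.total hi hj with h | h
        · exact ⟨⟨i, hi⟩, subset_rfl, h⟩
        · exact ⟨⟨j, hj⟩, h, subset_rfl⟩
      · exact fun i => (hcS i.2).1
      · exact fun i => (hcS i.2).2.1.isCompact
      · exact fun i => (hcS i.2).2.1
    · exact isClosed_sInter fun A hA => (hcS hA).2.1
    · rintro γ _ ⟨w, hw, rfl⟩ A hA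
      exact (hcS hA).2.2 γ ⟨w, hw A hA, rfl⟩

lemma minimal_infinite (horb : ∀ p : Circle', (Set.range fun γ : Γ => ρ γ p).Infinite)
    {K : Set Circle'} (hK : IsMinimalSet ρ K) : K.Infinite := by
  obtain ⟨p, hp⟩ := hK.1
  refine Set.Infinite.mono ?_ (horb p)
  rintro _ ⟨γ, rfl⟩
  exact hK.2.2.1 γ ⟨p, hp, rfl⟩

lemma minimal_perfect (horb : ∀ p : Circle', (Set.range fun γ : Γ => ρ γ p).Infinite) {K : Set Circle'} (hK : IsMinimalSet ρ K) : Perfect K := by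
  have hder : derivedSet K = K := by
    apply hK.2.2.2
    · exact (derivedSet_subset_closure K).trans hK.2.1.closure_subset
    · obtain ⟨x, -, hx⟩ := (minimal_infinite ρ horb hK).exists_accPt_of_subset_isCompact
        hK.2.1.isCompact subset_rfl
      exact ⟨x, mem_derivedSet.mpr hx⟩
    · exact isClosed_derivedSet K
    · intro γ
      have h1 := homeo_image_derivedSet_subset (ρ γ) K
      rw [inv_image_eq ρ hK.2.2.1 γ] at h1
      exact h1
  refine ⟨hK.2.1, fun x hx => ?_⟩
  rw [← hder] at hx
  exact mem_derivedSet.mp hx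

lemma minimal_interior_empty {K : Set Circle'} (hK : IsMinimalSet ρ K)
    (hKu : K ≠ Set.univ) : interior K = ∅ := by
  have hfr : frontier K = K := by
    apply hK.2.2.2
    · intro x hx
      rw [← hK.2.1.closure_eq]
      exact hx.1
    · by_contra hemp
      rw [not_nonempty_iff_eq_empty] at hemp
      have : IsClopen K := isClopen_iff_frontier_eq_empty.mpr hemp
      rcases isClopen_iff.mp this with h | h
      · exact hK.1.ne_empty h
      · exact hKu h
    · exact isClosed_frontier
    · intro γ
      rw [Homeomorph.image_frontier, inv_image_eq ρ hK.2.2.1 γ]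
  rw [← subset_empty_iff]
  intro x hx
  have hxK : x ∈ K := interior_subset hx
  rw [← hfr] at hxK
  exact hxK.2 hx

lemma minimal_totallyDisconnected {K : Set Circle'} (hK : IsMinimalSet ρ K)
    (hKu : K ≠ Set.univ) : IsTotallyDisconnected K := by
  intro t hts htpre x hx y hy
  by_contra hxy
  obtain ⟨z, hz⟩ : ∃ z : Circle', z ∉ K := by
    by_contra h
    push_neg at h
    exact hKu (eq_univ_of_forall h)
  obtain ⟨a, rfl⟩ := QuotientAddGroup.mk_surjective z
  have ha : ((a : ℝ) : Circle') ∉ t := fun h => hz (hts h)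
  obtain ⟨w, hw⟩ := circle_interior_nonempty htpre ha hx hy hxy
  have : w ∈ interior K := interior_mono hts hw
  rw [minimal_interior_empty ρ hK hKu] at this
  exact this

/-- Key claim: an exceptional minimal set is contained in every orbit closure. -/
lemma minimal_subset_orbit_closure (horb : ∀ p : Circle', (Set.range fun γ : Γ => ρ γ p).Infinite) {K : Set Circle'} (hK : IsMinimalSet ρ K)
    (hKu : K ≠ Set.univ) (x : Circle') : K ⊆ closure (orb ρ x) := by
  set L : Set Circle' := closure (orb ρ x) with hL
  have hLne : L.Nonempty := ⟨ρ 1 x, subset_closure ⟨1, rfl⟩⟩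
  have hLcl : IsClosed L := isClosed_closure
  have hLinv : ∀ γ : Γ, (ρ γ) '' L ⊆ L := orb_closure_inv ρ x
  -- it suffices that L meets K
  suffices hmeet : (L ∩ K).Nonempty by
    have : L ∩ K = K := by
      apply hK.2.2.2 _ inter_subset_right hmeet (hLcl.inter hK.2.1)
      intro γ
      rintro _ ⟨w, hw, rfl⟩
      exact ⟨hLinv γ ⟨w, hw.1, rfl⟩, hK.2.2.1 γ ⟨w, hw.2, rfl⟩⟩
    intro k hk
    rw [← this] at hk
    exact hk.1
  by_contra hemp
  rw [not_nonempty_iff_eq_empty] at hemp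
  set U : Set Circle' := Kᶜ with hU
  have hUopen : IsOpen U := hK.2.1.isOpen_compl
  have hLU : L ⊆ U := fun z hz hzK => (eq_empty_iff_forall_notMem.mp hemp z) ⟨hz, hzK⟩
  have hUinv : ∀ γ : Γ, (ρ γ) '' U = U := by
    intro γ
    rw [hU, Homeomorph.image_compl, inv_image_eq ρ hK.2.2.1 γ]
  -- the family of connected components of U meeting L
  set 𝒮 : Set (Set Circle') := {J | ∃ z ∈ L, J = connectedComponentIn U z} with h𝒮
  -- L is compact, covered by the open components
  have hLcomp : IsCompact L := hLcl.isCompact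
  obtain ⟨s, hs⟩ := hLcomp.elim_finite_subcover
    (fun z : L => connectedComponentIn U (z : Circle'))
    (fun z => hUopen.connectedComponentIn)
    (fun z hz => mem_iUnion.mpr ⟨⟨z, hz⟩, mem_connectedComponentIn (hLU hz)⟩)
  -- 𝒮 is finite
  have h𝒮fin : 𝒮.Finite := by
    have : 𝒮 ⊆ (fun z : L => connectedComponentIn U (z : Circle')) '' (s : Set L) := by
      rintro J ⟨z, hzL, rfl⟩
      obtain ⟨w, hwmem⟩ : ∃ w ∈ s, z ∈ connectedComponentIn U ((w : L) : Circle') := by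
        have := hs hzL
        simp only [mem_iUnion] at this
        obtain ⟨i, hi, h⟩ := this
        exact ⟨i, hi, h⟩
      obtain ⟨hws, hzw⟩ := hwmem
      exact ⟨w, hws, connectedComponentIn_eq hzw⟩
    exact Set.Finite.subset ((s : Set L).toFinite.image _) this
  -- each member of 𝒮 has finite frontier
  obtain ⟨p, hpK⟩ := hK.1
  obtain ⟨a, rfl⟩ := QuotientAddGroup.mk_surjective p
  have hfrfin : ∀ J ∈ 𝒮, (frontier J).Finite := by
    rintro J ⟨z, hzL, rfl⟩
    apply circle_frontier_finite isPreconnected_connectedComponentIn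
    intro hmem
    exact (connectedComponentIn_subset U z hmem) hpK
  -- frontiers lie in K
  have hfrK : ∀ J ∈ 𝒮, frontier J ⊆ K := by
    rintro J ⟨z, hzL, rfl⟩ y hy
    by_contra hyK
    have hyU : y ∈ U := hyK
    have hyJ : y ∈ connectedComponentIn U y := mem_connectedComponentIn hyU
    have hyint : connectedComponentIn U y ∈ nhds y :=
      hUopen.connectedComponentIn.mem_nhds hyJ
    obtain ⟨w, hw1, hw2⟩ := mem_closure_iff_nhds.mp hy.1 _ hyint
    have heq : connectedComponentIn U y = connectedComponentIn U z := by
      rw [connectedComponentIn_eq hw1, ← connectedComponentIn_eq hw2]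
    have : y ∈ connectedComponentIn U z := heq ▸ hyJ
    rw [← hUopen.connectedComponentIn.interior_eq] at this
    exact hy.2 this
  -- E: the union of the frontiers
  set E : Set Circle' := ⋃ J ∈ 𝒮, frontier J with hE
  have hEfin : E.Finite := Set.Finite.biUnion h𝒮fin hfrfin
  have hEK : E ⊆ K := by
    intro y hy
    simp only [hE, mem_iUnion] at hy
    obtain ⟨J, hJ, hyJ⟩ := hy
    exact hfrK J hJ hyJ
  have hEne : E.Nonempty := by
    obtain ⟨z₀, hz₀⟩ := hLne
    have hJS : connectedComponentIn U z₀ ∈ 𝒮 := ⟨z₀, hz₀, rfl⟩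
    have hfr : (frontier (connectedComponentIn U z₀)).Nonempty := by
      by_contra hc
      rw [not_nonempty_iff_eq_empty] at hc
      rcases isClopen_iff.mp (isClopen_iff_frontier_eq_empty.mpr hc) with h | h
      · exact absurd (mem_connectedComponentIn (hLU hz₀)) (h ▸ notMem_empty z₀)
      · have : ((a : ℝ) : Circle') ∈ U :=
          connectedComponentIn_subset U z₀ (h ▸ mem_univ _)
        exact this hpK
    obtain ⟨y, hy⟩ := hfr
    exact ⟨y, mem_iUnion₂.mpr ⟨_, hJS, hy⟩⟩
  have hEinv : ∀ γ : Γ, (ρ γ) '' E ⊆ E := by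
    rintro γ _ ⟨y, hy, rfl⟩
    obtain ⟨J, hJ, hyJ⟩ := mem_iUnion₂.mp hy
    obtain ⟨z, hzL, rfl⟩ := hJ
    have himg : (ρ γ) '' connectedComponentIn U z = connectedComponentIn U (ρ γ z) := by
      rw [homeo_image_connectedComponentIn (ρ γ) U z (hLU hzL), hUinv γ]
    have h1 : ρ γ y ∈ frontier ((ρ γ) '' connectedComponentIn U z) := by
      rw [← Homeomorph.image_frontier]
      exact mem_image_of_mem _ hyJ
    rw [himg] at h1
    exact mem_iUnion₂.mpr ⟨_, ⟨ρ γ z, hLinv γ ⟨z, hzL, rfl⟩, rfl⟩, h1⟩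
  have hEeq : E = K := hK.2.2.2 E hEK hEne hEfin.isClosed hEinv
  exact (minimal_infinite ρ horb hK) (hEeq ▸ hEfin)

end Dynamics

/-- If a group `Γ` acts on the circle by homeomorphisms with all orbits infinite, then either
every orbit is dense, or there is exactly one minimal set which is homeomorphic to a Cantor
set (a nonempty compact, perfect, totally disconnected proper subset of the circle). -/
theorem statement2 {Γ : Type*} [Group Γ] (ρ : Γ →* (Circle' ≃ₜ Circle'))
    (horb : ∀ p : Circle', (Set.range fun γ : Γ => ρ γ p).Infinite) :
    (∀ p : Circle', Dense (Set.range fun γ : Γ => ρ γ p)) ∨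
      ((∃! K : Set Circle', IsMinimalSet ρ K) ∧
        ∀ K : Set Circle', IsMinimalSet ρ K →
          K.Nonempty ∧ IsCompact K ∧ Perfect K ∧ IsTotallyDisconnected K ∧ K ≠ Set.univ) := by
  by_cases hdense : ∀ p : Circle', Dense (Set.range fun γ : Γ => ρ γ p)
  · exact Or.inl hdense
  right
  push_neg at hdense
  obtain ⟨p₀, hp₀⟩ := hdense
  set L₀ : Set Circle' := closure (orb ρ p₀) with hL₀
  have hL₀ne : L₀.Nonempty := ⟨ρ 1 p₀, subset_closure ⟨1, rfl⟩⟩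
  have hL₀u : L₀ ≠ Set.univ := fun h => hp₀ (dense_iff_closure_eq.mpr h)
  obtain ⟨K, hKL₀, hK⟩ := exists_minimal_subset ρ hL₀ne isClosed_closure (orb_closure_inv ρ p₀)
  have hKu : K ≠ Set.univ := fun h => hL₀u (univ_subset_iff.mp (h ▸ hKL₀))
  -- every minimal set equals K
  have huniq : ∀ M : Set Circle', IsMinimalSet ρ M → M = K := by
    intro M hM
    obtain ⟨m, hm⟩ := hM.1
    have h1 : K ⊆ closure (orb ρ m) := minimal_subset_orbit_closure ρ horb hK hKu m
    have h2 : closure (orb ρ m) ⊆ M := orb_closure_subset ρ hM.2.1 hM.2.2.1 hm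
    exact (hM.2.2.2 K (h1.trans h2) hK.1 hK.2.1 hK.2.2.1).symm
  refine ⟨⟨K, hK, huniq⟩, ?_⟩
  intro M hM
  have hMu : M ≠ Set.univ := by rw [huniq M hM]; exact hKu
  exact ⟨hM.1, hM.2.1.isCompact, minimal_perfect ρ horb hM,
    minimal_totallyDisconnected ρ hM hMu, hMu⟩
end
end

section
/- Let Γ be a group acting on the circle S¹ = ℝ/ℤ by orientation-preserving homeomorphisms and leaving invariant a Borel probability measure μ on S¹. Then either Γ has a finite orbit on S¹, or there exist a continuous degree-one monotone surjection f : S¹ → S¹ (i.e. f admits a continuous nondecreasing lift F : ℝ → ℝ with F(x+1) = F(x)+1 for all x) and a group homomorphism r : Γ → ℝ/ℤ with dense image such that f(γ·x) = r(γ) + f(x) for all γ ∈ Γ and all x ∈ S¹. Moreover, if Γ has no finite orbit and μ has full support (supp μ = S¹), then f can be taken to be a homeomorphism, so Γ is conjugate in Homeo(S¹) to a group of rotations. -/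
noncomputable section

open MeasureTheory Set Function
open scoped ENNReal

namespace S3

def ee : Circle' → ℝ := fun y => (AddCircle.equivIco 1 0 y : ℝ)
lemma measurable_ee : Measurable ee :=
  measurable_subtype_coe.comp (AddCircle.measurableEquivIco (T := 1) 0).measurable
lemma ee_mem (y : Circle') : ee y ∈ Ico (0:ℝ) 1 := by
  have := (AddCircle.equivIco 1 0 y).2; simpa [ee] using this
lemma coe_ee (y : Circle') : ((ee y : ℝ) : Circle') = y :=
  (AddCircle.equivIco 1 0).symm_apply_apply y
lemma coe_eq_iff' {a b : ℝ} : ((a:ℝ):Circle') = ((b:ℝ):Circle') ↔ ∃ m:ℤ, b = a + m := by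
  constructor
  · intro h
    have h2 : a - b ∈ AddSubgroup.zmultiples (1:ℝ) := by
      rwa [QuotientAddGroup.eq_iff_sub_mem] at h
    obtain ⟨m, hm⟩ := AddSubgroup.mem_zmultiples_iff.mp h2
    simp only [zsmul_eq_mul, mul_one] at hm
    exact ⟨-m, by push_cast; linarith⟩
  · rintro ⟨m, rfl⟩
    rw [eq_comm, QuotientAddGroup.eq_iff_sub_mem]
    simpa using AddSubgroup.zsmul_mem_zmultiples (1:ℝ) m
lemma coe_add' (a b : ℝ) : ((a + b : ℝ) : Circle') = ((a:ℝ):Circle') + ((b:ℝ):Circle') := rfl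
lemma coe_surj : Function.Surjective ((↑) : ℝ → Circle') := QuotientAddGroup.mk_surjective
lemma quot_map : Topology.IsQuotientMap ((↑) : ℝ → Circle') := QuotientAddGroup.isQuotientMap_mk _
lemma open_map : IsOpenMap ((↑) : ℝ → Circle') := QuotientAddGroup.isOpenQuotientMap_mk.isOpenMap

variable (μ : Measure Circle') [IsProbabilityMeasure μ]

def mt : Measure ℝ :=
  Measure.sum fun n : ℤ => Measure.map (fun x : ℝ => x + (n:ℝ)) (Measure.map ee μ)

lemma mt_apply {s : Set ℝ} (hs : MeasurableSet s) :
    mt μ s = ∑' n : ℤ, μ {y | ee y + (n:ℝ) ∈ s} := by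
  rw [mt, Measure.sum_apply _ hs]
  congr 1; ext n
  rw [Measure.map_apply (measurable_add_const _) hs,
    Measure.map_apply measurable_ee ((measurable_add_const _) hs)]
  rfl

lemma mt_fiber {s : Set ℝ} (hs : MeasurableSet s) :
    mt μ s = ∫⁻ y, ∑' n : ℤ, s.indicator (fun _ => (1:ℝ≥0∞)) (ee y + (n:ℝ)) ∂μ := by
  rw [mt_apply μ hs]
  rw [lintegral_tsum]
  · congr 1; ext n
    have : ∀ y : Circle', s.indicator (fun _ => (1:ℝ≥0∞)) (ee y + (n:ℝ))
        = ({y | ee y + (n:ℝ) ∈ s} : Set Circle').indicator (fun _ => (1:ℝ≥0∞)) y := by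
      intro y
      by_cases h : ee y + (n:ℝ) ∈ s <;> simp [Set.indicator_apply, h]
    simp_rw [this]
    exact (lintegral_indicator_one ((measurable_ee.add_const _) hs)).symm
  · intro n
    exact ((measurable_const.indicator hs).comp (measurable_ee.add_const _)).aemeasurable

lemma measurable_H {s : Set ℝ} (hs : MeasurableSet s) :
    Measurable (fun y : Circle' => ∑' n : ℤ, s.indicator (fun _ => (1:ℝ≥0∞)) (ee y + (n:ℝ))) :=
  Measurable.ennreal_tsum fun n => (measurable_const.indicator hs).comp (measurable_ee.add_const _)

lemma lift_int {L : ℝ → ℝ} (hL1 : ∀ t, L (t + 1) = L t + 1) :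
    ∀ (n : ℤ) (t : ℝ), L (t + n) = L t + n := by
  have hdown : ∀ t, L (t - 1) = L t - 1 := by
    intro t; have := hL1 (t - 1); rw [sub_add_cancel] at this; linarith
  intro n
  induction n using Int.induction_on with
  | zero => simp
  | succ k ih =>
      intro t; push_cast at ih ⊢
      have e : t + ((k:ℝ) + 1) = (t + (k:ℝ)) + 1 := by ring
      rw [e, hL1]; linarith [ih t]
  | pred k ih =>
      intro t; push_cast at ih ⊢
      have e : t + (-(k:ℝ) - 1) = (t + -(k:ℝ)) - 1 := by ring
      rw [e, hdown]; linarith [ih t]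

lemma mt_invariant {L : ℝ → ℝ} (hLm : Measurable L)
    (hL1 : ∀ t, L (t + 1) = L t + 1)
    {g : Circle' → Circle'} (hg : Measurable g) (hgμ : Measure.map g μ = μ)
    (hLg : ∀ t : ℝ, ((L t : ℝ) : Circle') = g ((t : ℝ) : Circle'))
    {s : Set ℝ} (hs : MeasurableSet s) : mt μ (L ⁻¹' s) = mt μ s := by
  rw [mt_fiber μ (hLm hs), mt_fiber μ hs]
  have key : ∀ y : Circle',
      (∑' n : ℤ, (L ⁻¹' s).indicator (fun _ => (1:ℝ≥0∞)) (ee y + (n:ℝ)))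
      = ∑' n : ℤ, s.indicator (fun _ => (1:ℝ≥0∞)) (ee (g y) + (n:ℝ)) := by
    intro y
    have h1 : ((L (ee y) : ℝ) : Circle') = ((ee (g y) : ℝ) : Circle') := by
      rw [hLg (ee y), coe_ee, coe_ee]
    obtain ⟨m, hm⟩ := coe_eq_iff'.mp h1
    have h2 : ∀ n : ℤ, (L ⁻¹' s).indicator (fun _ => (1:ℝ≥0∞)) (ee y + (n:ℝ))
        = s.indicator (fun _ => (1:ℝ≥0∞)) (ee (g y) + ((n - m : ℤ):ℝ)) := by
      intro n
      have : ee (g y) + ((n - m : ℤ):ℝ) = L (ee y + (n:ℝ)) := by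
        rw [lift_int hL1 n (ee y), hm]; push_cast; ring
      rw [this]
      by_cases h : L (ee y + (n:ℝ)) ∈ s <;> simp [Set.indicator_apply, h]
    calc (∑' n : ℤ, (L ⁻¹' s).indicator (fun _ => (1:ℝ≥0∞)) (ee y + (n:ℝ)))
        = ∑' n : ℤ, s.indicator (fun _ => (1:ℝ≥0∞)) (ee (g y) + ((n - m : ℤ):ℝ)) := by
          simp_rw [h2]
      _ = ∑' n : ℤ, s.indicator (fun _ => (1:ℝ≥0∞)) (ee (g y) + (n:ℝ)) := by
          exact (Equiv.subRight m).tsum_eq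
            (fun k : ℤ => s.indicator (fun _ => (1:ℝ≥0∞)) (ee (g y) + (k:ℝ)))
  simp_rw [key]
  have h3 := lintegral_map (μ := μ)
    (f := fun z : Circle' => ∑' n : ℤ, s.indicator (fun _ => (1:ℝ≥0∞)) (ee z + (n:ℝ)))
    (measurable_H hs) hg
  rw [hgμ] at h3
  exact h3.symm



lemma mt_Ico_zero_one : mt μ (Ico (0:ℝ) 1) = 1 := by
  rw [mt_apply μ measurableSet_Ico]
  rw [tsum_eq_single (0:ℤ)]
  · have : {y : Circle' | ee y + ((0:ℤ):ℝ) ∈ Ico (0:ℝ) 1} = univ := by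
      ext y; simpa using ee_mem y
    rw [this]; exact measure_univ
  · intro n hn
    have : {y : Circle' | ee y + (n:ℝ) ∈ Ico (0:ℝ) 1} = ∅ := by
      ext y
      simp only [mem_setOf_eq, mem_Ico, mem_empty_iff_false, iff_false, not_and, not_lt]
      intro h0
      have h1 := (ee_mem y).1; have h2 := (ee_mem y).2
      have hn2 : n ≤ -1 ∨ 1 ≤ n := by omega
      rcases hn2 with h | h
      · have : (n:ℝ) ≤ -1 := by exact_mod_cast h
        linarith
      · have : (1:ℝ) ≤ (n:ℝ) := by exact_mod_cast h
        linarith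
    rw [this]; exact measure_empty

lemma mt_translate (m : ℤ) {s : Set ℝ} (hs : MeasurableSet s) :
    mt μ ((fun x : ℝ => x + (m:ℝ)) ⁻¹' s) = mt μ s := by
  apply mt_invariant μ (measurable_add_const _) (by intro t; ring)
    measurable_id (Measure.map_id) _ hs
  intro t
  exact coe_eq_iff'.mpr ⟨-m, by push_cast; ring⟩

lemma mt_Ico_union {a b c : ℝ} (hab : a ≤ b) (hbc : b ≤ c) :
    mt μ (Ico a c) = mt μ (Ico a b) + mt μ (Ico b c) := by
  rw [← Set.Ico_union_Ico_eq_Ico hab hbc,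
    measure_union (Set.Ico_disjoint_Ico_same) measurableSet_Ico]

lemma mt_Ico_one (a : ℝ) : mt μ (Ico a (a + 1)) = 1 := by
  -- reduce to fract
  obtain ⟨b, hb0, hb1, m, rfl⟩ : ∃ b, 0 ≤ b ∧ b < 1 ∧ ∃ m : ℤ, a = b + m := by
    exact ⟨Int.fract a, Int.fract_nonneg a, Int.fract_lt_one a, ⌊a⌋,
      (Int.fract_add_floor a).symm⟩
  have ht : (fun x : ℝ => x + (m:ℝ)) ⁻¹' (Ico (b + m) (b + m + 1)) = Ico b (b+1) := by
    ext x; simp only [mem_preimage, mem_Ico]; constructor <;> intro h <;> constructor <;> linarith [h.1, h.2]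
  have h1 : mt μ (Ico (b + (m:ℝ)) (b + m + 1)) = mt μ (Ico b (b+1)) := by
    rw [← ht, mt_translate μ m measurableSet_Ico]
  rw [h1]
  have h2 : mt μ (Ico b (b+1)) = mt μ (Ico b 1) + mt μ (Ico 1 (b+1)) :=
    mt_Ico_union μ (by linarith) (by linarith)
  have ht2 : (fun x : ℝ => x + ((1:ℤ):ℝ)) ⁻¹' (Ico 1 (b+1)) = Ico 0 b := by
    ext x; simp only [mem_preimage, mem_Ico]; push_cast; constructor <;> intro h <;> constructor <;> linarith [h.1, h.2]
  have h3 : mt μ (Ico (1:ℝ) (b+1)) = mt μ (Ico 0 b) := by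
    rw [← ht2, mt_translate μ 1 measurableSet_Ico]
  rw [h2, h3, add_comm, ← mt_Ico_union μ hb0 (le_of_lt hb1), mt_Ico_zero_one]

lemma mt_Ico_nat (a : ℝ) (n : ℕ) : mt μ (Ico a (a + n)) = n := by
  induction n with
  | zero => simp
  | succ k ih =>
      have hcast : ((k+1 : ℕ) : ℝ) = (k:ℝ) + 1 := by push_cast; ring
      have hk0 : (0:ℝ) ≤ (k:ℝ) := Nat.cast_nonneg k
      have step : mt μ (Ico a (a + (k:ℝ) + 1)) =
          mt μ (Ico a (a + (k:ℝ))) + mt μ (Ico (a + (k:ℝ)) (a + (k:ℝ) + 1)) :=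
        mt_Ico_union μ (by linarith) (by linarith)
      rw [hcast, show a + ((k:ℝ) + 1) = a + (k:ℝ) + 1 by ring, step, ih, mt_Ico_one]
      push_cast
      rw [add_comm]

lemma mt_Ico_ne_top (a b : ℝ) : mt μ (Ico a b) ≠ ⊤ := by
  have h1 : mt μ (Ico a b) ≤ mt μ (Ico a (a + (⌈b - a⌉₊ : ℕ))) := by
    apply measure_mono
    apply Ico_subset_Ico le_rfl
    linarith [Nat.le_ceil (b - a)]
  rw [mt_Ico_nat] at h1
  exact ne_top_of_le_ne_top (by simp) h1

def FF (x : ℝ) : ℝ := (mt μ (Ico 0 x)).toReal - (mt μ (Ico x 0)).toReal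

lemma FF_sub {a b : ℝ} (hab : a ≤ b) : FF μ b - FF μ a = (mt μ (Ico a b)).toReal := by
  have fin : ∀ u v : ℝ, mt μ (Ico u v) ≠ ⊤ := mt_Ico_ne_top μ
  rcases le_or_gt 0 a with h0a | ha0
  · have e1 : mt μ (Ico (0:ℝ) b) = mt μ (Ico 0 a) + mt μ (Ico a b) := mt_Ico_union μ h0a hab
    have key : (mt μ (Ico (0:ℝ) b)).toReal
        = (mt μ (Ico (0:ℝ) a)).toReal + (mt μ (Ico a b)).toReal := by
      rw [e1]; exact ENNReal.toReal_add (fin _ _) (fin _ _)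
    have e2 : Ico b (0:ℝ) = ∅ := Ico_eq_empty (by linarith)
    have e3 : Ico a (0:ℝ) = ∅ := Ico_eq_empty (by linarith)
    simp only [FF, e2, e3, measure_empty, ENNReal.toReal_zero]
    linarith
  · rcases le_or_gt 0 b with h0b | hb0
    · have e1 : mt μ (Ico a b) = mt μ (Ico a 0) + mt μ (Ico 0 b) :=
        mt_Ico_union μ (le_of_lt ha0) h0b
      have key : (mt μ (Ico a b)).toReal
          = (mt μ (Ico a (0:ℝ))).toReal + (mt μ (Ico (0:ℝ) b)).toReal := by
        rw [e1]; exact ENNReal.toReal_add (fin _ _) (fin _ _)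
      have e2 : Ico (0:ℝ) a = ∅ := Ico_eq_empty (by linarith)
      have e3 : Ico b (0:ℝ) = ∅ := Ico_eq_empty (by linarith)
      simp only [FF, e2, e3, measure_empty, ENNReal.toReal_zero]
      linarith
    · have e1 : mt μ (Ico a 0) = mt μ (Ico a b) + mt μ (Ico b 0) :=
        mt_Ico_union μ hab (le_of_lt hb0)
      have key : (mt μ (Ico a (0:ℝ))).toReal
          = (mt μ (Ico a b)).toReal + (mt μ (Ico b (0:ℝ))).toReal := by
        rw [e1]; exact ENNReal.toReal_add (fin _ _) (fin _ _)
      have e2 : Ico (0:ℝ) a = ∅ := Ico_eq_empty (by linarith)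
      have e3 : Ico (0:ℝ) b = ∅ := Ico_eq_empty (by linarith)
      simp only [FF, e2, e3, measure_empty, ENNReal.toReal_zero]
      linarith

lemma FF_mono : Monotone (FF μ) := by
  intro a b hab
  have := FF_sub μ hab
  have h2 : (0:ℝ) ≤ (mt μ (Ico a b)).toReal := ENNReal.toReal_nonneg
  linarith

lemma FF_add_one (x : ℝ) : FF μ (x + 1) = FF μ x + 1 := by
  have := FF_sub μ (le_of_lt (lt_add_one x))
  rw [mt_Ico_one] at this
  simp at this; linarith

lemma FF_add_int (x : ℝ) (n : ℤ) : FF μ (x + n) = FF μ x + n :=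
  lift_int (FF_add_one μ) n x

lemma FF_equivariant (L : ℝ ≃ₜ ℝ) (hmono : StrictMono L)
    (hL1 : ∀ t, L (t + 1) = L t + 1)
    {g : Circle' → Circle'} (hg : Measurable g) (hgμ : Measure.map g μ = μ)
    (hLg : ∀ t : ℝ, ((L t : ℝ) : Circle') = g ((t : ℝ) : Circle')) :
    ∀ x, FF μ (L x) = FF μ x + (FF μ (L 0) - FF μ 0) := by
  have key : ∀ a b : ℝ, a ≤ b → FF μ (L b) - FF μ (L a) = FF μ b - FF μ a := by
    intro a b hab
    have hpre : L ⁻¹' (Ico (L a) (L b)) = Ico a b := by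
      ext x
      simp only [mem_preimage, mem_Ico, hmono.le_iff_le, hmono.lt_iff_lt]
    rw [FF_sub μ hab, FF_sub μ (hmono.monotone hab),
      ← mt_invariant μ L.continuous.measurable hL1 hg hgμ hLg measurableSet_Ico, hpre]
  intro x
  rcases le_or_gt 0 x with h | h
  · have := key 0 x h; linarith
  · have := key x 0 (le_of_lt h); linarith



lemma mt_singleton (hna : ∀ p : Circle', μ {p} = 0) (x : ℝ) : mt μ {x} = 0 := by
  rw [mt_apply μ (measurableSet_singleton x)]
  have : ∀ n : ℤ, μ {y : Circle' | ee y + (n:ℝ) ∈ ({x} : Set ℝ)} = 0 := by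
    intro n
    have hsub : {y : Circle' | ee y + (n:ℝ) ∈ ({x} : Set ℝ)} ⊆ {((x - n : ℝ) : Circle')} := by
      intro y hy
      simp only [mem_setOf_eq, mem_singleton_iff] at hy ⊢
      have : ee y = x - n := by linarith
      rw [← this, coe_ee]
    exact measure_mono_null hsub (hna _)
  simp only [this, tsum_zero]

lemma FF_cont (hna : ∀ p : Circle', μ {p} = 0) : Continuous (FF μ) := by
  rw [continuous_iff_continuousAt]
  intro x
  rw [Metric.continuousAt_iff]
  intro ε hε
  have hd : ∀ n m : ℕ, n ≤ m → 1/((m:ℝ)+1) ≤ 1/((n:ℝ)+1) := by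
    intro n m hnm
    apply one_div_le_one_div_of_le (by positivity)
    have : (n:ℝ) ≤ (m:ℝ) := Nat.cast_le.mpr hnm
    linarith
  have hanti : Antitone (fun n : ℕ => Ico (x - 1/((n:ℝ)+1)) (x + 1/((n:ℝ)+1))) := by
    intro n m hnm
    apply Ico_subset_Ico
    · linarith [hd n m hnm]
    · linarith [hd n m hnm]
  have hint : (⋂ n : ℕ, Ico (x - 1/((n:ℝ)+1)) (x + 1/((n:ℝ)+1))) = {x} := by
    ext y
    simp only [mem_iInter, mem_Ico, mem_singleton_iff]
    constructor
    · intro h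
      by_contra hy
      obtain ⟨n, hn⟩ := exists_nat_one_div_lt
        (show 0 < |y - x| from abs_pos.mpr (sub_ne_zero.mpr hy))
      have h1 := (h n).1; have h2 := (h n).2
      have hh : |y - x| ≤ 1/((n:ℝ)+1) := abs_sub_le_iff.mpr ⟨by linarith, by linarith⟩
      exact absurd hh (not_le.mpr hn)
    · rintro rfl
      intro n
      have : (0:ℝ) < 1/((n:ℝ)+1) := by positivity
      exact ⟨by linarith, by linarith⟩
  have hmeas : ∀ n : ℕ, NullMeasurableSet (Ico (x - 1/((n:ℝ)+1)) (x + 1/((n:ℝ)+1))) (mt μ) :=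
    fun n => measurableSet_Ico.nullMeasurableSet
  have hfin : ∃ n : ℕ, mt μ (Ico (x - 1/((n:ℝ)+1)) (x + 1/((n:ℝ)+1))) ≠ ⊤ :=
    ⟨0, mt_Ico_ne_top μ _ _⟩
  have htend := MeasureTheory.tendsto_measure_iInter_atTop hmeas hanti hfin
  rw [hint, mt_singleton μ hna] at htend
  have hlt : ∀ᶠ n : ℕ in Filter.atTop,
      mt μ (Ico (x - 1/((n:ℝ)+1)) (x + 1/((n:ℝ)+1))) < ENNReal.ofReal ε :=
    htend.eventually_lt_const (by simp [ENNReal.ofReal_pos, hε])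
  obtain ⟨n, hn⟩ := hlt.exists
  refine ⟨1/((n:ℝ)+1), by positivity, ?_⟩
  intro y hy
  rw [Real.dist_eq] at hy ⊢
  have hb : (mt μ (Ico (x - 1/((n:ℝ)+1)) (x + 1/((n:ℝ)+1)))).toReal < ε :=
    ENNReal.toReal_lt_of_lt_ofReal hn
  have habs := abs_sub_lt_iff.mp hy
  rcases le_or_gt x y with hxy | hyx
  · have e1 : FF μ y - FF μ x = (mt μ (Ico x y)).toReal := FF_sub μ hxy
    have hsub : Ico x y ⊆ Ico (x - 1/((n:ℝ)+1)) (x + 1/((n:ℝ)+1)) := by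
      apply Ico_subset_Ico (by linarith [one_div_pos.mpr (show (0:ℝ) < (n:ℝ)+1 by positivity)])
      linarith [habs.1]
    have : (mt μ (Ico x y)).toReal ≤
        (mt μ (Ico (x - 1/((n:ℝ)+1)) (x + 1/((n:ℝ)+1)))).toReal :=
      ENNReal.toReal_mono (mt_Ico_ne_top μ _ _) (measure_mono hsub)
    rw [abs_sub_lt_iff]
    constructor <;> [linarith [e1, this]; linarith [e1, this, ENNReal.toReal_nonneg.trans (le_of_eq (rfl : (mt μ (Ico x y)).toReal = (mt μ (Ico x y)).toReal))]]
  · have e1 : FF μ x - FF μ y = (mt μ (Ico y x)).toReal := FF_sub μ (le_of_lt hyx)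
    have hsub : Ico y x ⊆ Ico (x - 1/((n:ℝ)+1)) (x + 1/((n:ℝ)+1)) := by
      apply Ico_subset_Ico (by linarith [habs.2])
      linarith [one_div_pos.mpr (show (0:ℝ) < (n:ℝ)+1 by positivity)]
    have : (mt μ (Ico y x)).toReal ≤
        (mt μ (Ico (x - 1/((n:ℝ)+1)) (x + 1/((n:ℝ)+1)))).toReal :=
      ENNReal.toReal_mono (mt_Ico_ne_top μ _ _) (measure_mono hsub)
    have hnn : (0:ℝ) ≤ (mt μ (Ico y x)).toReal := ENNReal.toReal_nonneg
    rw [abs_sub_lt_iff]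
    exact ⟨by linarith, by linarith⟩

lemma FF_bounds (x : ℝ) : FF μ 0 + x - 1 ≤ FF μ x ∧ FF μ x ≤ FF μ 0 + x + 1 := by
  constructor
  · have h1 : FF μ ((⌊x⌋ : ℝ)) ≤ FF μ x := FF_mono μ (Int.floor_le x)
    have h2 : FF μ ((⌊x⌋ : ℝ)) = FF μ 0 + ⌊x⌋ := by
      have := FF_add_int μ 0 ⌊x⌋; simpa using this
    have h3 : x - 1 ≤ (⌊x⌋ : ℝ) := by linarith [Int.sub_one_lt_floor x]
    linarith
  · have h1 : FF μ x ≤ FF μ ((⌈x⌉ : ℝ)) := FF_mono μ (Int.le_ceil x)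
    have h2 : FF μ ((⌈x⌉ : ℝ)) = FF μ 0 + ⌈x⌉ := by
      have := FF_add_int μ 0 ⌈x⌉; simpa using this
    have h3 : (⌈x⌉ : ℝ) ≤ x + 1 := by linarith [Int.ceil_lt_add_one x]
    linarith

lemma FF_surj (hc : Continuous (FF μ)) : Function.Surjective (FF μ) := by
  apply Continuous.surjective hc
  · apply Filter.tendsto_atTop_mono (fun x => (FF_bounds μ x).1)
    have e : (fun x : ℝ => FF μ 0 + x - 1) = fun x : ℝ => x + (FF μ 0 - 1) :=
      funext fun x => by ring
    rw [e]
    exact Filter.tendsto_atTop_add_const_right _ _ Filter.tendsto_id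
  · apply Filter.tendsto_atBot_mono (fun x => (FF_bounds μ x).2)
    have e : (fun x : ℝ => FF μ 0 + x + 1) = fun x : ℝ => x + (FF μ 0 + 1) :=
      funext fun x => by ring
    rw [e]
    exact Filter.tendsto_atBot_add_const_right _ _ Filter.tendsto_id

lemma mu_image_le {s : Set ℝ} (hs : MeasurableSet s)
    (hi : MeasurableSet ((fun t : ℝ => ((t : ℝ) : Circle')) '' s)) :
    μ ((fun t : ℝ => ((t : ℝ) : Circle')) '' s) ≤ mt μ s := by
  rw [mt_fiber μ hs, ← lintegral_indicator_one hi]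
  apply lintegral_mono
  intro y
  by_cases hy : y ∈ (fun t : ℝ => ((t : ℝ) : Circle')) '' s
  · obtain ⟨u, hu, huy⟩ := hy
    have h1 : ((u : ℝ) : Circle') = ((ee y : ℝ) : Circle') := by rw [coe_ee y]; exact huy
    obtain ⟨m, hm⟩ := coe_eq_iff'.mp h1
    have h2 : s.indicator (fun _ => (1:ℝ≥0∞)) (ee y + ((-m:ℤ):ℝ)) = 1 := by
      have : ee y + ((-m:ℤ):ℝ) = u := by push_cast; linarith [hm]
      rw [this]; simp [Set.indicator_apply, hu]
    calc Set.indicator _ (fun _ => (1:ℝ≥0∞)) y ≤ 1 := by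
          by_cases h : y ∈ (fun t : ℝ => ((t : ℝ) : Circle')) '' s <;> simp [Set.indicator_apply, h]
      _ = s.indicator (fun _ => (1:ℝ≥0∞)) (ee y + ((-m:ℤ):ℝ)) := h2.symm
      _ ≤ ∑' n : ℤ, s.indicator (fun _ => (1:ℝ≥0∞)) (ee y + (n:ℝ)) := ENNReal.le_tsum (-m)
  · simp [Set.indicator_apply, hy]

def ff : Circle' → Circle' := fun y => ((FF μ (ee y) : ℝ) : Circle')

lemma ff_coe (x : ℝ) : ff μ ((x : ℝ) : Circle') = ((FF μ x : ℝ) : Circle') := by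
  obtain ⟨m, hm⟩ := coe_eq_iff'.mp (coe_ee ((x : ℝ) : Circle'))
  have h2 : FF μ x = FF μ (ee ((x:ℝ) : Circle')) + m := by
    conv_lhs => rw [hm]
    rw [FF_add_int]
  exact coe_eq_iff'.mpr ⟨m, h2⟩

lemma ff_cont (hc : Continuous (FF μ)) : Continuous (ff μ) := by
  rw [quot_map.continuous_iff]
  have : (ff μ) ∘ ((↑) : ℝ → Circle') = (fun t : ℝ => ((t:ℝ) : Circle')) ∘ (FF μ) := by
    funext x; exact ff_coe μ x
  rw [this]
  exact (AddCircle.continuous_mk' 1).comp hc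

lemma ff_surj (hs : Function.Surjective (FF μ)) : Function.Surjective (ff μ) := by
  intro z
  obtain ⟨w, rfl⟩ := coe_surj z
  obtain ⟨x, hx⟩ := hs w
  exact ⟨((x:ℝ) : Circle'), by rw [ff_coe, hx]⟩

def suppSet : Set Circle' := {z | ∀ U : Set Circle', IsOpen U → z ∈ U → μ U ≠ 0}

lemma suppSet_nonempty : (suppSet μ).Nonempty := by
  by_contra h
  rw [not_nonempty_iff_eq_empty] at h
  have hcov : ∀ z : Circle', ∃ U : Set Circle', IsOpen U ∧ z ∈ U ∧ μ U = 0 := by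
    intro z
    have : z ∉ suppSet μ := by rw [h]; exact notMem_empty z
    simp only [suppSet, mem_setOf_eq, not_forall] at this
    obtain ⟨U, hU, hz, hμ⟩ := this
    exact ⟨U, hU, hz, by simpa using hμ⟩
  choose U hUo hUz hUμ using hcov
  obtain ⟨t, ht⟩ := isCompact_univ.elim_finite_subcover U hUo
    (fun z _ => mem_iUnion.mpr ⟨z, hUz z⟩)
  have : μ univ = 0 := by
    apply measure_mono_null ht
    exact (measure_biUnion_null_iff t.countable_toSet).mpr fun z _ => hUμ z
  simp [measure_univ] at this

lemma ee_unique {u : ℝ} (hu : u ∈ Ico (0:ℝ) 1) {y : Circle'} (h : ((u:ℝ):Circle') = y) :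
    ee y = u := by
  obtain ⟨m, hm⟩ := coe_eq_iff'.mp (h ▸ (coe_ee y) : ((ee y : ℝ):Circle') = ((u:ℝ):Circle')).symm
  -- hm : ee y = u + m
  have h1 := (ee_mem y).1; have h2 := (ee_mem y).2
  have hm0 : m = 0 := by
    by_contra hm0
    have : m ≤ -1 ∨ 1 ≤ m := by omega
    rcases this with h | h
    · have : (m:ℝ) ≤ -1 := by exact_mod_cast h
      have := hu.2; linarith [hm ▸ h1]
    · have : (1:ℝ) ≤ (m:ℝ) := by exact_mod_cast h
      have := hu.1; linarith [hm ▸ h2]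
  rw [hm, hm0]; simp

lemma trap (hFc : Continuous (FF μ)) (P Q : ℝ → ℝ) (hP : StrictMono P)
    (hQP : ∀ t, Q (P t) = t) (hPQ : ∀ t, P (Q t) = t)
    (hFP : ∀ t, FF μ (P t) = FF μ t)
    (x : ℝ) (hx : ((x:ℝ):Circle') ∈ suppSet μ) (hgt : x < P x) : False := by
  have hQ : StrictMono Q := by
    intro a b hab
    have : P (Q a) < P (Q b) := by rw [hPQ, hPQ]; exact hab
    exact hP.lt_iff_lt.mp this
  have hFQ : ∀ t, FF μ (Q t) = FF μ t := by
    intro t; have := hFP (Q t); rw [hPQ] at this; exact this.symm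
  -- forward orbit
  set xs : ℕ → ℝ := fun n => P^[n] x with hxs
  have hxsF : ∀ n, FF μ (xs n) = FF μ x := by
    intro n; induction n with
    | zero => rfl
    | succ k ih => rw [hxs]; simp only [Function.iterate_succ_apply']; rw [hFP]; exact ih
  have hxsmono : StrictMono xs := by
    have step : ∀ n, xs n < xs (n+1) := by
      intro n; induction n with
      | zero => simpa [hxs] using hgt
      | succ k ih =>
          have h2 : P (xs k) < P (xs (k+1)) := hP ih
          simpa only [hxs, Function.iterate_succ_apply'] using h2
    exact strictMono_nat_of_lt_succ step
  have hub : ∀ n, xs n ≤ x + 1 := by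
    intro n
    by_contra hcon
    push_neg at hcon
    have h1 : FF μ (x+1) ≤ FF μ (xs n) := FF_mono μ (le_of_lt hcon)
    rw [FF_add_one, hxsF] at h1
    linarith
  have hbdd : BddAbove (Set.range xs) := ⟨x + 1, by rintro _ ⟨n, rfl⟩; exact hub n⟩
  set q := ⨆ n, xs n with hqdef
  have hq : Filter.Tendsto xs Filter.atTop (nhds q) :=
    tendsto_atTop_ciSup hxsmono.monotone hbdd
  have hFFq : FF μ q = FF μ x := by
    have h1 : Filter.Tendsto (fun n => FF μ (xs n)) Filter.atTop (nhds (FF μ q)) :=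
      (hFc.continuousAt.tendsto).comp hq
    have h2 : (fun n => FF μ (xs n)) = fun _ => FF μ x := funext hxsF
    rw [h2] at h1
    exact tendsto_nhds_unique h1 tendsto_const_nhds
  have hPxq : P x ≤ q := by
    have : xs 1 ≤ q := le_ciSup hbdd 1
    simpa [hxs] using this
  have hxq : x < q := lt_of_lt_of_le hgt hPxq
  have hIco1 : mt μ (Ico x q) = 0 := by
    have h1 : (mt μ (Ico x q)).toReal = 0 := by
      rw [← FF_sub μ (le_of_lt hxq), hFFq]; ring
    rcases (ENNReal.toReal_eq_zero_iff _).mp h1 with h | h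
    · exact h
    · exact absurd h (mt_Ico_ne_top μ _ _)
  -- backward orbit
  set ys : ℕ → ℝ := fun n => Q^[n] x with hys
  have hysF : ∀ n, FF μ (ys n) = FF μ x := by
    intro n; induction n with
    | zero => rfl
    | succ k ih => rw [hys]; simp only [Function.iterate_succ_apply']; rw [hFQ]; exact ih
  have hQx : Q x < x := by
    have : Q x < Q (P x) := hQ hgt
    rwa [hQP] at this
  have hysmono : StrictAnti ys := by
    have step : ∀ n, ys (n+1) < ys n := by
      intro n; induction n with
      | zero => simpa [hys] using hQx
      | succ k ih =>
          have h2 : Q (ys (k+1)) < Q (ys k) := hQ ih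
          simpa only [hys, Function.iterate_succ_apply'] using h2
    exact strictAnti_nat_of_succ_lt step
  have hlb : ∀ n, x - 1 ≤ ys n := by
    intro n
    by_contra hcon
    push_neg at hcon
    have h1 : FF μ (ys n) ≤ FF μ (x - 1) := FF_mono μ (le_of_lt hcon)
    have h2 : FF μ (x - 1) = FF μ x - 1 := by
      have := FF_add_one μ (x-1); rw [sub_add_cancel] at this; linarith
    rw [hysF] at h1
    linarith
  have hbddb : BddBelow (Set.range ys) := ⟨x - 1, by rintro _ ⟨n, rfl⟩; exact hlb n⟩
  set q' := ⨅ n, ys n with hq'def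
  have hq' : Filter.Tendsto ys Filter.atTop (nhds q') :=
    tendsto_atTop_ciInf hysmono.antitone hbddb
  have hFFq' : FF μ q' = FF μ x := by
    have h1 : Filter.Tendsto (fun n => FF μ (ys n)) Filter.atTop (nhds (FF μ q')) :=
      (hFc.continuousAt.tendsto).comp hq'
    have h2 : (fun n => FF μ (ys n)) = fun _ => FF μ x := funext hysF
    rw [h2] at h1
    exact tendsto_nhds_unique h1 tendsto_const_nhds
  have hq'Qx : q' ≤ Q x := by
    have : q' ≤ ys 1 := ciInf_le hbddb 1
    simpa [hys] using this
  have hq'x : q' < x := lt_of_le_of_lt hq'Qx hQx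
  have hIco2 : mt μ (Ico q' x) = 0 := by
    have h1 : (mt μ (Ico q' x)).toReal = 0 := by
      rw [← FF_sub μ (le_of_lt hq'x), hFFq']; ring
    rcases (ENNReal.toReal_eq_zero_iff _).mp h1 with h | h
    · exact h
    · exact absurd h (mt_Ico_ne_top μ _ _)
  -- the open interval around x is null
  have hIoo : mt μ (Ioo q' q) = 0 := by
    have hsub : Ioo q' q ⊆ Ico q' x ∪ Ico x q := by
      intro t ht
      rcases lt_or_ge t x with h | h
      · exact Or.inl ⟨le_of_lt ht.1, h⟩
      · exact Or.inr ⟨h, ht.2⟩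
    apply measure_mono_null hsub
    exact measure_union_null hIco2 hIco1
  have hU : IsOpen ((fun t : ℝ => ((t:ℝ):Circle')) '' Ioo q' q) := open_map _ isOpen_Ioo
  have hxU : ((x:ℝ):Circle') ∈ (fun t : ℝ => ((t:ℝ):Circle')) '' Ioo q' q :=
    ⟨x, ⟨hq'x, hxq⟩, rfl⟩
  have hμU : μ ((fun t : ℝ => ((t:ℝ):Circle')) '' Ioo q' q) = 0 := by
    have := mu_image_le μ (measurableSet_Ioo (a := q') (b := q)) hU.measurableSet
    rw [hIoo] at this
    exact le_antisymm this (zero_le)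
  exact hx _ hU hxU hμU

lemma FF_strict (hfull : ∀ U : Set Circle', IsOpen U → U.Nonempty → μ U ≠ 0) :
    StrictMono (FF μ) := by
  intro a b hab
  have key : mt μ (Ico a b) ≠ 0 := by
    set c := (a + b) / 2 with hc
    set m := ⌊c⌋ with hm
    set d := min b ((m:ℝ) + 1) with hd
    have hcd : c < d := lt_min (by rw [hc]; linarith) (Int.lt_floor_add_one c)
    have hsub : Ioo c d ⊆ Ico a b := fun t ht =>
      ⟨le_of_lt (lt_of_le_of_lt (by rw [hc]; linarith) ht.1),
        lt_of_lt_of_le ht.2 (min_le_left _ _)⟩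
    have hpre : (fun x : ℝ => x + (m:ℝ)) ⁻¹' (Ioo c d) = Ioo (c - m) (d - m) := by
      ext t; simp only [mem_preimage, mem_Ioo]; constructor <;> intro h <;>
        exact ⟨by linarith [h.1], by linarith [h.2]⟩
    have htrans : mt μ (Ioo (c - m) (d - m)) = mt μ (Ioo c d) := by
      rw [← hpre, mt_translate μ m measurableSet_Ioo]
    have hα : (0:ℝ) ≤ c - m := by
      have := Int.floor_le c; linarith
    have hβ : d - (m:ℝ) ≤ 1 := by
      have := min_le_right b ((m:ℝ)+1); rw [hd]; linarith [min_le_right b ((m:ℝ)+1)]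
    -- lower bound by μ of the open image
    have himg : (fun t : ℝ => ((t:ℝ):Circle')) '' Ioo (c - m) (d - m) ⊆
        ee ⁻¹' (Ioo (c - m) (d - m)) := by
      rintro _ ⟨u, hu, rfl⟩
      have : ee ((u:ℝ):Circle') = u :=
        ee_unique ⟨le_trans hα (le_of_lt hu.1), lt_of_lt_of_le hu.2 hβ⟩ rfl
      simpa [mem_preimage, this] using hu
    have hterm : μ (ee ⁻¹' (Ioo (c - m) (d - m))) ≤ mt μ (Ioo (c - m) (d - m)) := by
      have hle := Measure.le_sum (μ := fun n : ℤ =>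
        Measure.map (fun x : ℝ => x + (n:ℝ)) (Measure.map ee μ)) 0
      have h0 : (Measure.map (fun x : ℝ => x + ((0:ℤ):ℝ)) (Measure.map ee μ))
          (Ioo (c - m) (d - m)) = μ (ee ⁻¹' (Ioo (c - m) (d - m))) := by
        rw [Measure.map_apply (measurable_add_const _) measurableSet_Ioo,
          Measure.map_apply measurable_ee]
        · congr 1
          ext t; simp
        · exact (measurable_add_const _) measurableSet_Ioo
      calc μ (ee ⁻¹' (Ioo (c - m) (d - m))) =
            (Measure.map (fun x : ℝ => x + ((0:ℤ):ℝ)) (Measure.map ee μ))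
              (Ioo (c - m) (d - m)) := h0.symm
        _ ≤ mt μ (Ioo (c - m) (d - m)) := hle _
    have hopen : IsOpen ((fun t : ℝ => ((t:ℝ):Circle')) '' Ioo (c - m) (d - m)) :=
      open_map _ isOpen_Ioo
    have hne : ((fun t : ℝ => ((t:ℝ):Circle')) '' Ioo (c - m) (d - m)).Nonempty :=
      (Set.nonempty_Ioo.mpr (by linarith)).image _
    have hpos := hfull _ hopen hne
    intro h0
    apply hpos
    have : mt μ (Ioo c d) = 0 := measure_mono_null hsub h0
    rw [← htrans] at this
    apply le_antisymm _ (zero_le)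
    calc μ _ ≤ mt μ (Ioo (c - m) (d - m)) := le_trans (measure_mono himg) hterm
      _ = 0 := this
  have hsub := FF_sub μ (le_of_lt hab)
  have hpos : 0 < (mt μ (Ico a b)).toReal :=
    ENNReal.toReal_pos key (mt_Ico_ne_top μ _ _)
  linarith

lemma range_finite_of_periodic {X : Type*} (g : ℤ → X) (k : ℤ) (hk : 0 < k)
    (hper : ∀ j, g (j + k) = g j) : (Set.range g).Finite := by
  have hmul : ∀ (t : ℤ) (j : ℤ), g (j + k * t) = g j := by
    have hdown : ∀ j, g (j - k) = g j := by
      intro j; have := hper (j - k); rw [sub_add_cancel] at this; exact this.symm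
    intro t
    induction t using Int.induction_on with
    | zero => simp
    | succ n ih =>
        intro j
        have e : j + k * ((n:ℤ) + 1) = (j + k * n) + k := by ring
        rw [e, hper, ih]
    | pred n ih =>
        intro j
        have e : j + k * (-(n:ℤ) - 1) = (j + k * (-(n:ℤ))) - k := by ring
        rw [e, hdown, ih]
  have hsub : Set.range g ⊆ g '' (Set.Ico (0:ℤ) k) := by
    rintro _ ⟨j, rfl⟩
    refine ⟨j % k, ⟨Int.emod_nonneg j (ne_of_gt hk), Int.emod_lt_of_pos j hk⟩, ?_⟩
    have e : j % k = j + k * (-(j / k)) := by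
      rw [Int.emod_def]; ring
    rw [e, hmul]
  exact Set.Finite.subset ((Set.finite_Ico (0:ℤ) k).image g) hsub

lemma orbit_finite_of_atom {Γ : Type*} [Group Γ] (ρ : Γ →* (Circle' ≃ₜ Circle'))
    (hinv : ∀ γ : Γ, Measure.map (ρ γ) μ = μ) (p : Circle') (hp : μ {p} ≠ 0) :
    (Set.range fun γ : Γ => ρ γ p).Finite := by
  have horb : ∀ γ : Γ, μ {ρ γ p} = μ {p} := by
    intro γ
    have h1 : μ {ρ γ p} = (Measure.map (ρ γ) μ) {ρ γ p} := by rw [hinv γ]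
    rw [h1, Measure.map_apply (ρ γ).continuous.measurable (measurableSet_singleton _)]
    congr 1
    ext z
    simp only [mem_preimage, mem_singleton_iff]
    exact ⟨fun h => (ρ γ).injective h, fun h => by rw [h]⟩
  have hsub : (Set.range fun γ : Γ => ρ γ p) ⊆ {x : Circle' | μ {p} ≤ μ {x}} := by
    rintro _ ⟨γ, rfl⟩
    exact le_of_eq (horb γ).symm
  apply Set.Finite.subset _ hsub
  by_contra hinf
  rw [← Set.not_infinite, not_not] at hinf
  have f := hinf.natEmbedding
  have hdisj : Pairwise (Disjoint on fun n : ℕ => ({((f n : _) : Circle')} : Set Circle')) := by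
    intro i j hij
    simp only [Function.onFun, Set.disjoint_singleton]
    exact fun h => hij (f.injective (Subtype.ext h))
  have hmeas : μ (⋃ n : ℕ, ({((f n : _) : Circle')} : Set Circle'))
      = ∑' n : ℕ, μ {((f n : _) : Circle')} :=
    measure_iUnion hdisj fun n => measurableSet_singleton _
  have hge : ∀ n : ℕ, μ {p} ≤ μ {((f n : _) : Circle')} := fun n => (f n).2
  have htop : (⊤:ℝ≥0∞) ≤ ∑' n : ℕ, μ {((f n : _) : Circle')} := by
    calc (⊤:ℝ≥0∞) = ∑' _ : ℕ, μ {p} := (ENNReal.tsum_const_eq_top_of_ne_zero hp).symm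
      _ ≤ _ := ENNReal.tsum_le_tsum hge
  have hle : μ (⋃ n : ℕ, ({((f n : _) : Circle')} : Set Circle')) ≤ 1 := by
    rw [← measure_univ (μ := μ)]
    exact measure_mono (subset_univ _)
  rw [hmeas] at hle
  have : (⊤:ℝ≥0∞) ≤ 1 := le_trans htop hle
  simp at this

end S3


lemma S3construction {Γ : Type*} [Group Γ] (ρ : Γ →* (Circle' ≃ₜ Circle'))
    (hop : ∀ γ : Γ, ∃ F : ℝ ≃ₜ ℝ, StrictMono F ∧ (∀ x : ℝ, F (x + 1) = F x + 1) ∧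
      ∀ x : ℝ, ρ γ (x : Circle') = ((F x : ℝ) : Circle'))
    (μ : Measure Circle') [IsProbabilityMeasure μ]
    (hinv : ∀ γ : Γ, Measure.map (ρ γ) μ = μ)
    (hfin : ¬ ∃ p : Circle', (Set.range fun γ : Γ => ρ γ p).Finite) :
    ∃ (r : Γ → Circle'),
        (∀ γ δ : Γ, r (γ * δ) = r γ + r δ) ∧ Dense (Set.range r) ∧
        (∀ (γ : Γ) (x : Circle'), S3.ff μ (ρ γ x) = r γ + S3.ff μ x) := by
  classical
  have hna : ∀ p : Circle', μ {p} = 0 := by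
    intro p; by_contra hp
    exact hfin ⟨p, S3.orbit_finite_of_atom μ ρ hinv p hp⟩
  have hFc : Continuous (S3.FF μ) := S3.FF_cont μ hna
  choose L hLmono hLper hLlift using hop
  set c : Γ → ℝ := fun γ => S3.FF μ (L γ 0) - S3.FF μ 0 with hc
  have hkey : ∀ (γ : Γ) (x : ℝ), S3.FF μ (L γ x) = S3.FF μ x + c γ := fun γ =>
    S3.FF_equivariant μ (L γ) (hLmono γ) (hLper γ)
      (ρ γ).continuous.measurable (hinv γ) (fun t => (hLlift γ t).symm)
  set r : Γ → Circle' := fun γ => ((c γ : ℝ) : Circle') with hr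
  have hequiv : ∀ (γ : Γ) (y : Circle'), S3.ff μ (ρ γ y) = r γ + S3.ff μ y := by
    intro γ y
    obtain ⟨x, rfl⟩ := S3.coe_surj y
    rw [hLlift γ x, S3.ff_coe, S3.ff_coe, hkey γ x]
    rw [show (S3.FF μ x + c γ) = (c γ + S3.FF μ x) from by ring]
    exact S3.coe_add' _ _
  have hhom : ∀ γ δ : Γ, r (γ * δ) = r γ + r δ := by
    intro γ δ
    have h1 := hequiv (γ * δ) 0
    have h2 : ρ (γ * δ) (0 : Circle') = ρ γ (ρ δ 0) := by rw [map_mul]; rfl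
    rw [h2, hequiv γ, hequiv δ] at h1
    -- h1 : r γ + (r δ + ff 0) = r (γ*δ) + ff 0
    rw [← add_assoc] at h1
    exact (add_right_cancel h1).symm
  have hr1 : r (1 : Γ) = 0 := by
    have := hhom 1 1
    rw [mul_one] at this
    exact (left_eq_add.mp this)
  have hrneg : ∀ γ : Γ, r γ⁻¹ = - r γ := by
    intro γ
    have h := hhom γ γ⁻¹
    rw [mul_inv_cancel, hr1] at h
    exact eq_neg_of_add_eq_zero_right h.symm
  -- support facts
  have hSinv : ∀ (δ : Γ) z, z ∈ S3.suppSet μ → ρ δ z ∈ S3.suppSet μ := by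
    intro δ z hz U hU hzU
    have h2 : μ ((ρ δ) ⁻¹' U) = μ U := by
      conv_rhs => rw [← hinv δ]
      rw [Measure.map_apply (ρ δ).continuous.measurable hU.measurableSet]
    have hpre : μ ((ρ δ) ⁻¹' U) ≠ 0 :=
      hz _ (hU.preimage (ρ δ).continuous) (by simpa [mem_preimage] using hzU)
    rwa [h2] at hpre
  have hfix : ∀ γ : Γ, r γ = 0 → ∀ z ∈ S3.suppSet μ, ρ γ z = z := by
    intro γ hγ z hz
    have hγ' : ((c γ : ℝ) : Circle') = ((0 : ℝ) : Circle') := hγ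
    obtain ⟨m, hm⟩ := S3.coe_eq_iff'.mp hγ'
    -- hm : 0 = c γ + m
    set P : ℝ → ℝ := fun t => L γ t + m with hP
    set Q : ℝ → ℝ := fun t => (L γ).symm (t - m) with hQ
    have hPmono : StrictMono P := fun s t hst => by
      simp only [hP]; exact add_lt_add_left (hLmono γ hst) _
    have hQP : ∀ t, Q (P t) = t := by
      intro t; simp [hP, hQ]
    have hPQ : ∀ t, P (Q t) = t := by
      intro t; simp [hP, hQ]
    have hFP : ∀ t, S3.FF μ (P t) = S3.FF μ t := by
      intro t
      have : P t = L γ t + (m : ℤ) := rfl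
      rw [this, S3.FF_add_int, hkey γ t]
      have : c γ = -(m:ℝ) := by linarith [hm]
      rw [this]; ring
    have hQmono : StrictMono Q := fun s t hst => by
      have : P (Q s) < P (Q t) := by rw [hPQ, hPQ]; exact hst
      exact hPmono.lt_iff_lt.mp this
    have hFQ : ∀ t, S3.FF μ (Q t) = S3.FF μ t := by
      intro t; have := hFP (Q t); rw [hPQ] at this; exact this.symm
    have hzc : ((S3.ee z : ℝ) : Circle') ∈ S3.suppSet μ := by
      rw [S3.coe_ee]; exact hz
    rcases lt_trichotomy (S3.ee z) (P (S3.ee z)) with h | h | h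
    · exact absurd (S3.trap μ hFc P Q hPmono hQP hPQ hFP (S3.ee z) hzc h) (fun x => x)
    · -- P x = x
      have hLx : L γ (S3.ee z) = S3.ee z - m := by
        have : L γ (S3.ee z) + (m:ℝ) = S3.ee z := h.symm
        linarith
      have h1 : ρ γ z = ((L γ (S3.ee z) : ℝ) : Circle') := by
        conv_lhs => rw [← S3.coe_ee z]
        exact hLlift γ (S3.ee z)
      rw [h1, hLx]
      have : ((S3.ee z - (m:ℝ) : ℝ) : Circle') = ((S3.ee z : ℝ) : Circle') :=
        S3.coe_eq_iff'.mpr ⟨m, by ring⟩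
      rw [this, S3.coe_ee]
    · -- P x < x, use swapped trap
      have hgt : S3.ee z < Q (S3.ee z) := by
        have h2 : Q (P (S3.ee z)) < Q (S3.ee z) := hQmono h
        rwa [hQP] at h2
      exact absurd (S3.trap μ hFc Q P hQmono hPQ hQP hFQ (S3.ee z) hzc hgt) (fun x => x)
  -- dense range
  have hdense : Dense (Set.range r) := by
    set R : AddSubgroup Circle' :=
      { carrier := Set.range r
        add_mem' := by rintro _ _ ⟨γ, rfl⟩ ⟨δ, rfl⟩; exact ⟨γ * δ, hhom γ δ⟩
        zero_mem' := ⟨1, hr1⟩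
        neg_mem' := by rintro _ ⟨γ, rfl⟩; exact ⟨γ⁻¹, hrneg γ⟩ } with hR
    set A : AddSubgroup ℝ := AddSubgroup.closure (Set.range c ∪ {1}) with hA
    have hAR : A ≤ R.comap (QuotientAddGroup.mk' (AddSubgroup.zmultiples (1:ℝ))) := by
      rw [hA, AddSubgroup.closure_le]
      rintro z (⟨γ, rfl⟩ | hz)
      · exact ⟨γ, rfl⟩
      · rw [mem_singleton_iff] at hz
        subst hz
        show ((1:ℝ) : Circle') ∈ Set.range r
        have : ((1:ℝ) : Circle') = ((0:ℝ) : Circle') :=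
          S3.coe_eq_iff'.mpr ⟨-1, by push_cast; ring⟩
        rw [this]
        exact ⟨1, hr1⟩
    have hmemr : ∀ z ∈ (A : Set ℝ), ((z : ℝ) : Circle') ∈ Set.range r := fun z hz => hAR hz
    rcases AddSubgroup.dense_or_cyclic A with hd | ⟨a, hcyc⟩
    · have h1 : Dense ((fun t : ℝ => ((t:ℝ):Circle')) '' (A : Set ℝ)) := by
        apply DenseRange.dense_image
        · exact S3.coe_surj.denseRange
        · exact AddCircle.continuous_mk' 1
        · exact hd
      apply Dense.mono _ h1
      rintro _ ⟨z, hz, rfl⟩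
      exact hmemr z hz
    · exfalso
      have h1A : (1:ℝ) ∈ A := AddSubgroup.subset_closure (Or.inr rfl)
      rw [hcyc, AddSubgroup.mem_closure_singleton] at h1A
      obtain ⟨k, hk⟩ := h1A
      have hk' : (k:ℝ) * a = 1 := by rw [← hk]; simp [zsmul_eq_mul]
      have hk0 : k ≠ 0 := by
        intro h; rw [h] at hk'; simp at hk'
      have hcA : ∀ γ : Γ, ∃ m : ℤ, (m:ℝ) * a = c γ := by
        intro γ
        have hmem : c γ ∈ A := AddSubgroup.subset_closure (Or.inl ⟨γ, rfl⟩)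
        rw [hcyc, AddSubgroup.mem_closure_singleton] at hmem
        obtain ⟨m, hm⟩ := hmem
        exact ⟨m, by rw [← hm]; simp [zsmul_eq_mul]⟩
      -- range r is finite
      set g : ℤ → Circle' := fun j => (((j:ℝ) * a : ℝ) : Circle') with hg
      have hper : ∀ j, g (j + |k|) = g j := by
        intro j
        have habs : ((|k|:ℤ):ℝ) * a = 1 ∨ ((|k|:ℤ):ℝ) * a = -1 := by
          rcases abs_choice k with h | h
          · left; rw [h]; exact hk'
          · right; rw [h]; push_cast; linarith [hk']
        rcases habs with h | h
        · apply S3.coe_eq_iff'.mpr ⟨1, by push_cast; push_cast at h; linarith [h]⟩ |>.symm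
        · apply S3.coe_eq_iff'.mpr ⟨-1, by push_cast; push_cast at h; linarith [h]⟩ |>.symm
      have hrfin : (Set.range r).Finite := by
        apply Set.Finite.subset (S3.range_finite_of_periodic g |k| (abs_pos.mpr hk0) hper)
        rintro _ ⟨γ, rfl⟩
        obtain ⟨m, hm⟩ := hcA γ
        exact ⟨m, by rw [hg]; show (((m:ℝ) * a : ℝ) : Circle') = r γ; rw [hm]⟩
      -- finite orbit
      obtain ⟨x0, hx0⟩ := S3.suppSet_nonempty μ
      have hfactor : ∀ γ δ : Γ, r γ = r δ → ρ γ x0 = ρ δ x0 := by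
        intro γ δ h
        have h0 : r (γ * δ⁻¹) = 0 := by
          rw [hhom, hrneg, h]; simp
        have hfixpt := hfix (γ * δ⁻¹) h0 (ρ δ x0) (hSinv δ x0 hx0)
        have h2 : ρ (γ * δ⁻¹) (ρ δ x0) = ρ γ x0 := by
          rw [← homeo_mul_apply, ← map_mul]
          congr 1
          group
        rwa [h2] at hfixpt
      have horb : (Set.range fun γ : Γ => ρ γ x0).Finite := by
        have hchoice : ∀ z : Circle', z ∈ Set.range r → ∃ γ : Γ, r γ = z := fun z hz => hz
        set φ : Circle' → Circle' := fun z =>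
          if h : ∃ γ : Γ, r γ = z then ρ h.choose x0 else x0 with hφ
        apply Set.Finite.subset (hrfin.image φ)
        rintro _ ⟨γ, rfl⟩
        refine ⟨r γ, ⟨γ, rfl⟩, ?_⟩
        rw [hφ]
        have hex : ∃ δ : Γ, r δ = r γ := ⟨γ, rfl⟩
        simp only [dif_pos hex]
        exact hfactor hex.choose γ hex.choose_spec
      exact hfin ⟨x0, horb⟩
  exact ⟨r, hhom, hdense, hequiv⟩


/-- A group acting on the circle by orientation-preserving homeomorphisms preserving a Borel
probability measure either has a finite orbit, or is semi-conjugate (via a degree-one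
monotone map) to an action by rotations through a homomorphism with dense image; if moreover
there is no finite orbit and the invariant measure has full support, the semi-conjugacy can
be taken to be a homeomorphism. -/
theorem statement3 {Γ : Type*} [Group Γ] (ρ : Γ →* (Circle' ≃ₜ Circle'))
    (hop : ∀ γ : Γ, IsOrientationPreserving (ρ γ))
    (μ : Measure Circle') [IsProbabilityMeasure μ]
    (hinv : ∀ γ : Γ, Measure.map (ρ γ) μ = μ) :
    ((∃ p : Circle', (Set.range fun γ : Γ => ρ γ p).Finite) ∨
      ∃ (F : ℝ → ℝ) (f : Circle' → Circle') (r : Γ → Circle'),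
        Continuous F ∧ Monotone F ∧ (∀ x : ℝ, F (x + 1) = F x + 1) ∧
        (∀ x : ℝ, f (x : Circle') = ((F x : ℝ) : Circle')) ∧
        Continuous f ∧ Function.Surjective f ∧
        (∀ γ δ : Γ, r (γ * δ) = r γ + r δ) ∧ Dense (Set.range r) ∧
        (∀ (γ : Γ) (x : Circle'), f (ρ γ x) = r γ + f x)) ∧
    (((∀ p : Circle', (Set.range fun γ : Γ => ρ γ p).Infinite) ∧
        (∀ U : Set Circle', IsOpen U → U.Nonempty → 0 < μ U)) →
      ∃ (f : Circle' ≃ₜ Circle') (r : Γ → Circle'),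
        (∀ γ δ : Γ, r (γ * δ) = r γ + r δ) ∧ Dense (Set.range r) ∧
        (∀ (γ : Γ) (x : Circle'), f (ρ γ x) = r γ + f x)) := by
  classical
  have hop' : ∀ γ : Γ, ∃ F : ℝ ≃ₜ ℝ, StrictMono F ∧ (∀ x : ℝ, F (x + 1) = F x + 1) ∧
      ∀ x : ℝ, ρ γ (x : Circle') = ((F x : ℝ) : Circle') := hop
  constructor
  · by_cases hfin : ∃ p : Circle', (Set.range fun γ : Γ => ρ γ p).Finite
    · exact Or.inl hfin
    · right
      have hna : ∀ p : Circle', μ {p} = 0 := fun p => by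
        by_contra hp; exact hfin ⟨p, S3.orbit_finite_of_atom μ ρ hinv p hp⟩
      have hFc : Continuous (S3.FF μ) := S3.FF_cont μ hna
      obtain ⟨r, hhom, hdense, hequiv⟩ := S3construction ρ hop' μ hinv hfin
      exact ⟨S3.FF μ, S3.ff μ, r, hFc, S3.FF_mono μ, S3.FF_add_one μ, S3.ff_coe μ,
        S3.ff_cont μ hFc, S3.ff_surj μ (S3.FF_surj μ hFc), hhom, hdense, hequiv⟩
  · rintro ⟨hinf, hfull⟩
    have hfin : ¬ ∃ p : Circle', (Set.range fun γ : Γ => ρ γ p).Finite := by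
      rintro ⟨p, hp⟩; exact hinf p hp
    have hna : ∀ p : Circle', μ {p} = 0 := fun p => by
      by_contra hp; exact hfin ⟨p, S3.orbit_finite_of_atom μ ρ hinv p hp⟩
    have hFc : Continuous (S3.FF μ) := S3.FF_cont μ hna
    obtain ⟨r, hhom, hdense, hequiv⟩ := S3construction ρ hop' μ hinv hfin
    have hfull' : ∀ U : Set Circle', IsOpen U → U.Nonempty → μ U ≠ 0 :=
      fun U hU hne => (hfull U hU hne).ne'
    have hstrict := S3.FF_strict μ hfull'
    have hsurj := S3.ff_surj μ (S3.FF_surj μ hFc)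
    have hinj : Function.Injective (S3.ff μ) := by
      intro y1 y2 h
      obtain ⟨x1, rfl⟩ := S3.coe_surj y1
      obtain ⟨x2, rfl⟩ := S3.coe_surj y2
      rw [S3.ff_coe, S3.ff_coe] at h
      obtain ⟨m, hm⟩ := S3.coe_eq_iff'.mp h
      have h2 : S3.FF μ (x1 + m) = S3.FF μ x2 := by rw [S3.FF_add_int]; exact hm.symm
      have hx : x1 + m = x2 := hstrict.injective h2
      rw [← hx]
      exact S3.coe_eq_iff'.mpr ⟨m, rfl⟩
    let fE : Circle' ≃ Circle' := Equiv.ofBijective (S3.ff μ) ⟨hinj, hsurj⟩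
    have hcontE : Continuous fE := S3.ff_cont μ hFc
    refine ⟨hcontE.homeoOfEquivCompactToT2, r, hhom, hdense, fun γ x => ?_⟩
    show S3.ff μ (ρ γ x) = r γ + S3.ff μ x
    exact hequiv γ x
end
end

section
/- Let Γ be a countable group, ρ : Γ → Homeo(S¹) an action by homeomorphisms of the circle which is minimal and strongly proximal, and (B, ν) a standard probability space with a measurable quasi-invariant Γ-action such that the diagonal Γ-action on (B×B, ν⊗ν) is ergodic. If Φ : B → Prob(S¹) is a measurable Γ-equivariant map, then for (ν⊗ν)-almost every pair (x, y) ∈ B×B the supports of Φ(x) and Φ(y) are finite and unlinked: there exist two disjoint closed arcs I, J ⊂ S¹ with supp Φ(x) ⊆ I and supp Φ(y) ⊆ J. -/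
noncomputable section

open MeasureTheory Set Function
open scoped ENNReal

/-- A closed arc: a nonempty proper closed connected subset of the circle. -/
def IsClosedArc (I : Set Circle') : Prop :=
  I.Nonempty ∧ IsClosed I ∧ IsPreconnected I ∧ I ≠ Set.univ

/-- The (topological) support of a Borel measure on the circle. -/
def measSupport (μ : Measure Circle') : Set Circle' :=
  {p : Circle' | ∀ U : Set Circle', IsOpen U → p ∈ U → μ U ≠ 0}

namespace S9

lemma fact01 : Fact ((0:ℝ) < 1) := ⟨zero_lt_one⟩

lemma coe_eq_coe {x y : ℝ} : (x : Circle') = (y : Circle') ↔ ∃ n : ℤ, y - x = n := by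
  constructor
  · intro h
    have := (QuotientAddGroup.eq_iff_sub_mem).1 h.symm
    obtain ⟨n, hn⟩ := AddSubgroup.mem_zmultiples_iff.1 this
    exact ⟨n, by simpa using hn.symm⟩
  · rintro ⟨n, hn⟩
    refine (QuotientAddGroup.eq_iff_sub_mem).2 ?_ |>.symm
    exact AddSubgroup.mem_zmultiples_iff.2 ⟨n, by simpa using hn.symm⟩

lemma coe_eq_window {x y : ℝ} (h1 : x - 1 < y) (h2 : y < x + 1) (h : (x : Circle') = (y : Circle')) :
    x = y := by
  obtain ⟨n, hn⟩ := coe_eq_coe.1 h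
  have hn1 : (n : ℝ) < 1 := by rw [← hn]; linarith
  have hn2 : (-1 : ℝ) < n := by rw [← hn]; linarith
  have h1' : n < 1 := by exact_mod_cast hn1
  have h2' : -1 < n := by exact_mod_cast hn2
  have : n = 0 := by omega
  rw [this] at hn
  simp at hn
  linarith

lemma exists_lift (a : ℝ) (z : Circle') : ∃ r : ℝ, r ∈ Ico a (a + 1) ∧ (r : Circle') = z := by
  haveI := fact01
  refine ⟨(AddCircle.equivIco 1 a z : ℝ), (AddCircle.equivIco 1 a z).2, ?_⟩
  exact (AddCircle.equivIco 1 a).symm_apply_apply z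

def arcO (s t : ℝ) : Set Circle' := (fun r : ℝ => (r : Circle')) '' Ioo s t
def arcC (s t : ℝ) : Set Circle' := (fun r : ℝ => (r : Circle')) '' Icc s t

lemma isOpenMap_coe : IsOpenMap (fun r : ℝ => (r : Circle')) := by
  exact QuotientAddGroup.isOpenMap_coe

lemma continuous_coe : Continuous (fun r : ℝ => (r : Circle')) := AddCircle.continuous_mk' 1

lemma isOpen_arcO (s t : ℝ) : IsOpen (arcO s t) := isOpenMap_coe _ isOpen_Ioo

lemma isClosed_arcC (s t : ℝ) : IsClosed (arcC s t) :=
  (isCompact_Icc.image continuous_coe).isClosed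

lemma measurableSet_arcO (s t : ℝ) : MeasurableSet (arcO s t) := (isOpen_arcO s t).measurableSet
lemma measurableSet_arcC (s t : ℝ) : MeasurableSet (arcC s t) := (isClosed_arcC s t).measurableSet

lemma isPreconnected_arcO (s t : ℝ) : IsPreconnected (arcO s t) :=
  isPreconnected_Ioo.image _ (continuous_coe.continuousOn)

lemma isPreconnected_arcC (s t : ℝ) : IsPreconnected (arcC s t) :=
  isPreconnected_Icc.image _ (continuous_coe.continuousOn)

lemma mem_arcO {s t : ℝ} {z : Circle'} : z ∈ arcO s t ↔ ∃ r, s < r ∧ r < t ∧ (r : Circle') = z := by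
  simp [arcO, mem_image]; tauto

lemma mem_arcC {s t : ℝ} {z : Circle'} : z ∈ arcC s t ↔ ∃ r, s ≤ r ∧ r ≤ t ∧ (r : Circle') = z := by
  simp [arcC, mem_image]; tauto

lemma coe_mem_arcO {s t r : ℝ} (h1 : s < r) (h2 : r < t) : (r : Circle') ∈ arcO s t :=
  mem_arcO.2 ⟨r, h1, h2, rfl⟩

lemma coe_mem_arcC {s t r : ℝ} (h1 : s ≤ r) (h2 : r ≤ t) : (r : Circle') ∈ arcC s t :=
  mem_arcC.2 ⟨r, h1, h2, rfl⟩

lemma arcO_subset_arcC (s t : ℝ) : arcO s t ⊆ arcC s t :=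
  image_mono Ioo_subset_Icc_self

lemma arcO_nonempty {s t : ℝ} (h : s < t) : (arcO s t).Nonempty :=
  (nonempty_Ioo.2 h).image _

lemma arcC_nonempty {s t : ℝ} (h : s ≤ t) : (arcC s t).Nonempty :=
  (nonempty_Icc.2 h).image _

/-- `{c,d}` is separated by `{a,b}` on the circle. -/
def Sep (a b c d : Circle') : Prop :=
  ∀ A : Set Circle', IsPreconnected A → c ∈ A → d ∈ A → (A ∩ {a, b}).Nonempty

lemma sep_of_lifts {a c b d : ℝ} (h1 : a < c) (h2 : c < b) (h3 : b < d) (h4 : d < a + 1) :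
    Sep (a : Circle') (b : Circle') (c : Circle') (d : Circle') := by
  intro A hA hc hd
  by_contra hne
  rw [Set.not_nonempty_iff_eq_empty] at hne
  have hnotmem : ∀ z ∈ A, z ≠ (a : Circle') ∧ z ≠ (b : Circle') := by
    intro z hz
    have := Set.eq_empty_iff_forall_notMem.1 hne z
    simp only [mem_inter_iff, mem_insert_iff, mem_singleton_iff, not_and, not_or] at this
    exact this hz
  have hsub : A ⊆ arcO a b ∪ arcO b (a + 1) := by
    intro z hz
    obtain ⟨r, hr, hrz⟩ := exists_lift a z
    obtain ⟨hz1, hz2⟩ := hnotmem z hz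
    have hra : r ≠ a := by rintro rfl; exact hz1 hrz.symm
    have hrb : r ≠ b := by rintro rfl; exact hz2 hrz.symm
    rcases lt_or_gt_of_ne hrb with h | h
    · exact Or.inl (hrz ▸ coe_mem_arcO (lt_of_le_of_ne hr.1 (Ne.symm hra)) h)
    · exact Or.inr (hrz ▸ coe_mem_arcO h hr.2)
  have hne1 : (A ∩ arcO a b).Nonempty := ⟨c, hc, coe_mem_arcO h1 h2⟩
  have hne2 : (A ∩ arcO b (a + 1)).Nonempty := ⟨d, hd, coe_mem_arcO h3 h4⟩
  obtain ⟨z, -, hz1, hz2⟩ := hA _ _ (isOpen_arcO a b) (isOpen_arcO b (a + 1)) hsub hne1 hne2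
  obtain ⟨u, hu1, hu2, hu⟩ := mem_arcO.1 hz1
  obtain ⟨v, hv1, hv2, hv⟩ := mem_arcO.1 hz2
  have := coe_eq_window (x := u) (y := v) (by linarith) (by linarith) (by rw [hu, hv])
  linarith

lemma sep_comap {a b c d : Circle'} (h : Circle' ≃ₜ Circle')
    (hs : Sep (h a) (h b) (h c) (h d)) : Sep a b c d := by
  intro A hA hc hd
  have himg : IsPreconnected (h '' A) := hA.image _ h.continuous.continuousOn
  obtain ⟨w, hwA, hw⟩ := hs (h '' A) himg ⟨c, hc, rfl⟩ ⟨d, hd, rfl⟩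
  obtain ⟨u, hu, rfl⟩ := hwA
  rcases hw with hw | hw
  · exact ⟨u, hu, Or.inl (h.injective hw)⟩
  · exact ⟨u, hu, Or.inr (h.injective (by simpa using hw))⟩

lemma sep_map {a b c d : Circle'} (h : Circle' ≃ₜ Circle')
    (hs : Sep a b c d) : Sep (h a) (h b) (h c) (h d) := by
  have := sep_comap h.symm (a := h a) (b := h b) (c := h c) (d := h d)
  simp only [Homeomorph.symm_apply_apply] at this
  exact this hs

lemma sep_absurd {a b c d : Circle'}
    (ha : a ∈ arcC (1/8) (3/8)) (hb : b ∈ arcC (1/8) (3/8))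
    (hc : c ∈ arcC (5/8) (7/8)) (hd : d ∈ arcC (5/8) (7/8)) : ¬ Sep a b c d := by
  intro hs
  have hsubV : arcC (5/8) (7/8) ⊆ arcO (3/8) (9/8) := by
    intro z hz
    obtain ⟨r, h1, h2, hr⟩ := mem_arcC.1 hz
    exact hr ▸ coe_mem_arcO (by linarith) (by linarith)
  obtain ⟨w, hwA, hw⟩ := hs (arcO (3/8) (9/8)) (isPreconnected_arcO _ _) (hsubV hc) (hsubV hd)
  obtain ⟨v, hv1, hv2, hv⟩ := mem_arcO.1 hwA
  have : ∀ z ∈ arcC (1/8 : ℝ) (3/8), w ≠ z := by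
    intro z hz he
    obtain ⟨u, hu1, hu2, hu⟩ := mem_arcC.1 hz
    have : u = v := coe_eq_window (by linarith) (by linarith) (by rw [hu, hv, he])
    linarith
  rcases hw with hw | hw
  · exact this a ha hw
  · exact this b hb (by simpa using hw)

lemma UV_disjoint : arcC (1/8 : ℝ) (3/8) ∩ arcC (5/8) (7/8) = ∅ := by
  rw [Set.eq_empty_iff_forall_notMem]
  rintro z ⟨h1, h2⟩
  obtain ⟨u, hu1, hu2, hu⟩ := mem_arcC.1 h1
  obtain ⟨v, hv1, hv2, hv⟩ := mem_arcC.1 h2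
  have : u = v := coe_eq_window (by linarith) (by linarith) (by rw [hu, hv])
  linarith

/-! ### Support lemmas -/

lemma null_of_open_disjoint_supp {μ : Measure Circle'} {U : Set Circle'} (hU : IsOpen U)
    (h : U ∩ measSupport μ = ∅) : μ U = 0 := by
  obtain ⟨ℬ, hctble, -, hbasis⟩ := TopologicalSpace.exists_countable_basis Circle'
  set S : Set (Set Circle') := {V ∈ ℬ | V ⊆ U ∧ μ V = 0} with hS
  have hsub : U ⊆ ⋃₀ S := by
    intro q hq
    have hq' : q ∉ measSupport μ := by
      intro hmem
      exact absurd (Set.eq_empty_iff_forall_notMem.1 h q) (by simp [hq, hmem])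
    simp only [measSupport, mem_setOf_eq, not_forall] at hq'
    obtain ⟨W, hWopen, hqW, hWnull⟩ := hq'
    rw [not_not] at hWnull
    obtain ⟨V, hVB, hqV, hVsub⟩ := hbasis.exists_subset_of_mem_open (⟨hqW, hq⟩ : q ∈ W ∩ U)
      (hWopen.inter hU)
    exact ⟨V, ⟨hVB, (hVsub.trans inter_subset_right),
      measure_mono_null (hVsub.trans inter_subset_left) hWnull⟩, hqV⟩
  have : μ (⋃₀ S) = 0 := by
    apply (measure_sUnion_null_iff (hctble.mono (sep_subset _ _))).2
    · intro V hV; exact hV.2.2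
  exact measure_mono_null hsub this

lemma supp_nonempty (μ : Measure Circle') [IsProbabilityMeasure μ] :
    (measSupport μ).Nonempty := by
  by_contra h
  rw [Set.not_nonempty_iff_eq_empty] at h
  have : μ univ = 0 := null_of_open_disjoint_supp isOpen_univ (by simp [h])
  simp at this

lemma atom_of_mem_finite_supp {μ : Measure Circle'} (hfin : (measSupport μ).Finite)
    {p : Circle'} (hp : p ∈ measSupport μ) : μ {p} ≠ 0 := by
  set W := (measSupport μ \ {p})ᶜ with hW
  have hWopen : IsOpen W := ((hfin.subset diff_subset).isClosed).isOpen_compl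
  have hpW : p ∈ W := by simp [hW]
  have hWpos : μ W ≠ 0 := hp W hWopen hpW
  have hdiff : μ (W \ {p}) = 0 := by
    apply null_of_open_disjoint_supp (hWopen.sdiff isClosed_singleton)
    rw [Set.eq_empty_iff_forall_notMem]
    rintro z ⟨⟨hz1, hz2⟩, hz3⟩
    exact hz1 ⟨hz3, hz2⟩
  intro hnull
  apply hWpos
  have hle : μ W ≤ μ {p} + μ (W \ {p}) :=
    le_trans (measure_mono (by intro z hz; by_cases hzp : z = p <;> simp [hzp, hz]))
      (measure_union_le _ _)
  rw [hnull, hdiff] at hle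
  simpa using hle


end S9

namespace S9

lemma lift_unique {a r r' : ℝ} (hr : r ∈ Ico a (a + 1)) (hr' : r' ∈ Ico a (a + 1))
    (h : (r : Circle') = (r' : Circle')) : r = r' := by
  obtain ⟨h1, h2⟩ := hr; obtain ⟨h3, h4⟩ := hr'
  exact coe_eq_window (by linarith) (by linarith) h

lemma coe_add_one (r : ℝ) : ((r + 1 : ℝ) : Circle') = (r : Circle') :=
  coe_eq_coe.2 ⟨-1, by push_cast; ring⟩

lemma exists_four_sorted {s : Set Circle'} (h : s.Infinite) :
    ∃ a c b d : ℝ, a < c ∧ c < b ∧ b < d ∧ d < a + 1 ∧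
      (a : Circle') ∈ s ∧ (c : Circle') ∈ s ∧ (b : Circle') ∈ s ∧ (d : Circle') ∈ s := by
  haveI := fact01
  obtain ⟨t, hts, htcard⟩ := h.exists_subset_card_eq 4
  set θ : Circle' → ℝ := fun z => ((AddCircle.equivIco 1 0 z : ℝ)) with hθ
  have hθmem : ∀ z, θ z ∈ Ico (0:ℝ) 1 := by
    intro z; have := (AddCircle.equivIco 1 0 z).2; simpa using this
  have hθcoe : ∀ z, ((θ z : ℝ) : Circle') = z := fun z =>
    (AddCircle.equivIco 1 0).symm_apply_apply z
  have hθinj : Function.Injective θ := by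
    intro x y hxy
    rw [← hθcoe x, ← hθcoe y, hxy]
  set T : Finset ℝ := t.image θ with hT
  have hTcard : T.card = 4 := by rw [hT, Finset.card_image_of_injective _ hθinj, htcard]
  have hTmem : ∀ r ∈ T, (r : Circle') ∈ s ∧ r ∈ Ico (0:ℝ) 1 := by
    intro r hr
    obtain ⟨z, hz, rfl⟩ := Finset.mem_image.1 hr
    exact ⟨by rw [hθcoe z]; exact hts hz, hθmem z⟩
  -- extract sorted
  have h0 : T.Nonempty := Finset.card_pos.1 (by omega)
  set m1 := T.min' h0 with hm1
  set T1 := T.erase m1 with hT1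
  have h1 : T1.Nonempty := Finset.card_pos.1 (by rw [hT1, Finset.card_erase_of_mem (T.min'_mem h0)]; omega)
  set m2 := T1.min' h1 with hm2
  set T2 := T1.erase m2 with hT2
  have h2 : T2.Nonempty := Finset.card_pos.1 (by
    rw [hT2, Finset.card_erase_of_mem (T1.min'_mem h1), hT1,
      Finset.card_erase_of_mem (T.min'_mem h0)]; omega)
  set m3 := T2.min' h2 with hm3
  set T3 := T2.erase m3 with hT3
  have h3 : T3.Nonempty := Finset.card_pos.1 (by
    rw [hT3, Finset.card_erase_of_mem (T2.min'_mem h2), hT2,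
      Finset.card_erase_of_mem (T1.min'_mem h1), hT1,
      Finset.card_erase_of_mem (T.min'_mem h0)]; omega)
  set m4 := T3.min' h3 with hm4
  have hmem1 : m1 ∈ T := T.min'_mem h0
  have hmem2 : m2 ∈ T := Finset.mem_of_mem_erase (T1.min'_mem h1)
  have hmem3 : m3 ∈ T := Finset.mem_of_mem_erase (Finset.mem_of_mem_erase (T2.min'_mem h2))
  have hmem4 : m4 ∈ T := Finset.mem_of_mem_erase (Finset.mem_of_mem_erase
    (Finset.mem_of_mem_erase (T3.min'_mem h3)))
  have h12 : m1 < m2 := lt_of_le_of_ne (T.min'_le _ hmem2)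
    (Ne.symm (Finset.ne_of_mem_erase (T1.min'_mem h1)))
  have h23 : m2 < m3 := lt_of_le_of_ne (T1.min'_le _ (Finset.mem_of_mem_erase (T2.min'_mem h2)))
    (Ne.symm (Finset.ne_of_mem_erase (T2.min'_mem h2)))
  have h34 : m3 < m4 := lt_of_le_of_ne
    (T2.min'_le _ (Finset.mem_of_mem_erase (T3.min'_mem h3)))
    (Ne.symm (Finset.ne_of_mem_erase (T3.min'_mem h3)))
  have hb1 := hTmem m1 hmem1
  have hb4 := hTmem m4 hmem4
  exact ⟨m1, m2, m3, m4, h12, h23, h34,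
    by have := hb1.2.1; have := hb4.2.2; linarith,
    hb1.1, (hTmem m2 hmem2).1, (hTmem m3 hmem3).1, hb4.1⟩

/-- If the finite sets F and G are "unlinked" (no alternating quadruple in either pattern),
then they lie in disjoint closed arc. -/
lemma arcs_of_crossfree {F G : Set Circle'} (hF : F.Finite) (hFne : F.Nonempty)
    (hG : G.Finite) (hGne : G.Nonempty) (hdis : Disjoint F G)
    (hcf2 : ¬ ∃ a c b d : ℝ, a < c ∧ c < b ∧ b < d ∧ d < a + 1 ∧
      (a : Circle') ∈ G ∧ (b : Circle') ∈ G ∧ (c : Circle') ∈ F ∧ (d : Circle') ∈ F) :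
    ∃ I J : Set Circle', IsClosedArc I ∧ IsClosedArc J ∧ Disjoint I J ∧ F ⊆ I ∧ G ⊆ J := by
  haveI := fact01
  obtain ⟨f, hf⟩ := hFne
  obtain ⟨f₀, hf₀mem, hf₀⟩ := exists_lift 0 f
  set θ : Circle' → ℝ := fun z => ((AddCircle.equivIco 1 f₀ z : ℝ)) with hθ
  have hθmem : ∀ z, θ z ∈ Ico f₀ (f₀ + 1) := fun z => (AddCircle.equivIco 1 f₀ z).2
  have hθcoe : ∀ z, ((θ z : ℝ) : Circle') = z := fun z =>
    (AddCircle.equivIco 1 f₀).symm_apply_apply z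
  have hθinj : Function.Injective θ := by
    intro x y hxy; rw [← hθcoe x, ← hθcoe y, hxy]
  have hθf : θ f = f₀ := lift_unique (hθmem f) ⟨le_refl f₀, by linarith⟩ (by rw [hθcoe, hf₀])
  set Fl : Finset ℝ := hF.toFinset.image θ with hFl
  set Gl : Finset ℝ := hG.toFinset.image θ with hGl
  have hFLprop : ∀ r ∈ Fl, (r : Circle') ∈ F ∧ r ∈ Ico f₀ (f₀ + 1) := by
    intro r hr; obtain ⟨z, hz, rfl⟩ := Finset.mem_image.1 hr
    exact ⟨by rw [hθcoe z]; exact hF.mem_toFinset.1 hz, hθmem z⟩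
  have hGLprop : ∀ r ∈ Gl, (r : Circle') ∈ G ∧ r ∈ Ico f₀ (f₀ + 1) := by
    intro r hr; obtain ⟨z, hz, rfl⟩ := Finset.mem_image.1 hr
    exact ⟨by rw [hθcoe z]; exact hG.mem_toFinset.1 hz, hθmem z⟩
  have hFGL : ∀ r ∈ Fl, ∀ r' ∈ Gl, r ≠ r' := by
    intro r hr r' hr' he
    exact absurd ((hFLprop r hr).1) (fun hrF => (Set.disjoint_left.1 hdis) hrF (he ▸ (hGLprop r' hr').1))
  have hf₀FL : f₀ ∈ Fl := by
    rw [hFl, Finset.mem_image]; exact ⟨f, hF.mem_toFinset.2 hf, hθf⟩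
  obtain ⟨gs, hgs⟩ := hGne
  set tg := θ gs with htg
  have htgG : (tg : Circle') ∈ G := (hθcoe gs) ▸ hgs
  have htgmem : tg ∈ Ico f₀ (f₀ + 1) := hθmem gs
  have htgGL : tg ∈ Gl := by rw [hGl, Finset.mem_image]; exact ⟨gs, hG.mem_toFinset.2 hgs, rfl⟩
  have hf₀tg : f₀ < tg := lt_of_le_of_ne htgmem.1 (hFGL f₀ hf₀FL tg htgGL)
  -- lower and upper bounds of the gap containing tg
  set Flo := Fl.filter (fun x => x < tg) with hFloDef
  have hlo_ne : Flo.Nonempty := ⟨f₀, Finset.mem_filter.2 ⟨hf₀FL, hf₀tg⟩⟩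
  set lo := Flo.max' hlo_ne with hlo
  have hloFL : lo ∈ Fl := Finset.mem_of_mem_filter _ (Flo.max'_mem hlo_ne)
  have hlotg : lo < tg := (Finset.mem_filter.1 (Flo.max'_mem hlo_ne)).2
  have hlof₀ : f₀ ≤ lo := Flo.le_max' f₀ (Finset.mem_filter.2 ⟨hf₀FL, hf₀tg⟩)
  set UB := insert (f₀ + 1) (Fl.filter (fun x => tg < x)) with hUB
  set hi := UB.min' (Finset.insert_nonempty _ _) with hhi
  have hhiUB : hi ∈ UB := UB.min'_mem _
  have htghi : tg < hi := by
    rcases Finset.mem_insert.1 hhiUB with h | h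
    · rw [h]; linarith [htgmem.2]
    · exact (Finset.mem_filter.1 h).2
  have hhile : hi ≤ f₀ + 1 := UB.min'_le _ (Finset.mem_insert_self _ _)
  have hloq : ∀ fl ∈ Fl, ¬ (lo < fl ∧ fl < hi) := by
    rintro fl hfl ⟨hfl1, hfl2⟩
    rcases lt_trichotomy fl tg with h | h | h
    · exact absurd (Flo.le_max' fl (Finset.mem_filter.2 ⟨hfl, h⟩)) (not_le.2 hfl1)
    · exact hFGL fl hfl tg htgGL h
    · exact absurd (UB.min'_le fl (Finset.mem_insert_of_mem (Finset.mem_filter.2 ⟨hfl, h⟩)))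
        (not_le.2 hfl2)
  -- all G-lifts are in the gap (lo, hi)
  have hgap : ∀ gl ∈ Gl, lo < gl ∧ gl < hi := by
    intro gl hgl
    have hglmem := (hGLprop gl hgl).2
    have hglG := (hGLprop gl hgl).1
    constructor
    · by_contra hle
      push_neg at hle
      have hne : gl ≠ lo := fun h => hFGL lo hloFL gl hgl (h ▸ rfl)
      have hlt : gl < lo := lt_of_le_of_ne hle hne
      have hglf₀ : f₀ < gl := lt_of_le_of_ne hglmem.1 (hFGL f₀ hf₀FL gl hgl)
      exact hcf2 ⟨gl, lo, tg, f₀ + 1, hlt, hlotg, (by linarith [htgmem.2]), (by linarith),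
        hglG, htgG, (hFLprop lo hloFL).1, by rw [coe_add_one f₀, hf₀]; exact hf⟩
    · by_contra hle
      push_neg at hle
      have hne : gl ≠ hi := by
        rcases Finset.mem_insert.1 hhiUB with h | h
        · rw [h]; intro he; rw [he] at hglmem; linarith [hglmem.2]
        · exact fun he => hFGL hi (Finset.mem_of_mem_filter _ h) gl hgl (he ▸ rfl)
      have hlt : hi < gl := lt_of_le_of_ne hle (Ne.symm hne)
      have hhiFL : hi ∈ Fl ∧ tg < hi := by
        rcases Finset.mem_insert.1 hhiUB with h | h
        · exfalso; rw [h] at hlt; linarith [hglmem.2]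
        · exact ⟨Finset.mem_of_mem_filter _ h, (Finset.mem_filter.1 h).2⟩
      exact hcf2 ⟨tg, hi, gl, f₀ + 1, hhiFL.2, hlt, (by linarith [hglmem.2]), (by linarith),
        htgG, hglG, (hFLprop hi hhiFL.1).1, by rw [coe_add_one f₀, hf₀]; exact hf⟩
  set m := Gl.min' ⟨tg, htgGL⟩ with hm
  set M := Gl.max' ⟨tg, htgGL⟩ with hM
  have hmM : m ≤ M := Gl.min'_le M (Gl.max'_mem _)
  have hmgap := hgap m (Gl.min'_mem _)
  have hMgap := hgap M (Gl.max'_mem _)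
  have hhilo1 : hi ≤ lo + 1 := by linarith
  set I := arcC hi (lo + 1) with hI
  set J := arcC m M with hJ
  have hIne : I.Nonempty := arcC_nonempty hhilo1
  have hJne : J.Nonempty := arcC_nonempty hmM
  have hdisIJ : Disjoint I J := by
    rw [Set.disjoint_left]
    intro z hzI hzJ
    obtain ⟨u, hu1, hu2, hu⟩ := mem_arcC.1 hzI
    obtain ⟨v, hv1, hv2, hv⟩ := mem_arcC.1 hzJ
    have : u = v := coe_eq_window (by linarith [hmgap.1, hMgap.2]) (by linarith [hmgap.1]) (by rw [hu, hv])
    subst this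
    linarith [hMgap.2]
  have hFI : F ⊆ I := by
    intro f' hf'
    have hmemFL : θ f' ∈ Fl := by
      rw [hFl, Finset.mem_image]; exact ⟨f', hF.mem_toFinset.2 hf', rfl⟩
    have h1 := hθmem f'
    have h2 := hloq (θ f') hmemFL
    rw [not_and_or, not_lt, not_lt] at h2
    rcases h2 with h2 | h2
    · exact mem_arcC.2 ⟨θ f' + 1, by linarith [h1.1], by linarith, by rw [coe_add_one, hθcoe]⟩
    · exact mem_arcC.2 ⟨θ f', h2, by linarith [h1.2], hθcoe f'⟩
  have hGJ : G ⊆ J := by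
    intro g' hg'
    have hmemGL : θ g' ∈ Gl := by
      rw [hGl, Finset.mem_image]; exact ⟨g', hG.mem_toFinset.2 hg', rfl⟩
    exact mem_arcC.2 ⟨θ g', Gl.min'_le _ hmemGL, Gl.le_max' _ hmemGL, hθcoe g'⟩
  refine ⟨I, J, ⟨hIne, isClosed_arcC _ _, isPreconnected_arcC _ _, ?_⟩,
    ⟨hJne, isClosed_arcC _ _, isPreconnected_arcC _ _, ?_⟩, hdisIJ, hFI, hGJ⟩
  · intro huniv
    obtain ⟨z, hz⟩ := hJne
    exact (Set.disjoint_left.1 hdisIJ) (huniv ▸ Set.mem_univ z) hz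
  · intro huniv
    obtain ⟨z, hz⟩ := hIne
    exact (Set.disjoint_left.1 hdisIJ) hz (huniv ▸ Set.mem_univ z)

end S9

namespace S9

set_option maxHeartbeats 1000000 in
lemma exists_small_arc (μ : Measure Circle') [IsProbabilityMeasure μ] (n : ℕ) (hn : 2 ≤ n) :
    ∃ k : ℕ, k < n ∧ μ (arcO ((k : ℝ)/n) (((k : ℝ) + 1)/n)) ≤ (n : ℝ≥0∞)⁻¹ := by
  have hnR : (0:ℝ) < n := by positivity
  have hinv : (1:ℝ)/n ≤ 1/2 := by
    rw [div_le_div_iff₀ hnR (by norm_num)]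
    have : (2:ℝ) ≤ n := by exact_mod_cast hn
    linarith
  set Ik : ℕ → Set Circle' := fun k => (fun r : ℝ => (r : Circle')) '' Ico ((k:ℝ)/n) (((k:ℝ)+1)/n)
    with hIk
  have hwidth : ∀ k : ℕ, ((k:ℝ)+1)/n - (k:ℝ)/n = 1/n := by
    intro k; field_simp; ring
  have hIkeq : ∀ k : ℕ, Ik k = arcC ((k:ℝ)/n) (((k:ℝ)+1)/n) \ {((((k:ℝ)+1)/n : ℝ) : Circle')} := by
    intro k
    have hw := hwidth k
    ext z
    constructor
    · rintro ⟨r, ⟨hr1, hr2⟩, rfl⟩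
      refine ⟨coe_mem_arcC hr1 hr2.le, ?_⟩
      simp only [mem_singleton_iff]
      intro he
      have : r = ((k:ℝ)+1)/n := coe_eq_window (by linarith) (by linarith) he
      linarith
    · rintro ⟨hz1, hz2⟩
      obtain ⟨r, hr1, hr2, rfl⟩ := mem_arcC.1 hz1
      refine ⟨r, ⟨hr1, lt_of_le_of_ne hr2 ?_⟩, rfl⟩
      intro he
      exact hz2 (by rw [he]; rfl)
  have hIkmeas : ∀ k : ℕ, MeasurableSet (Ik k) := by
    intro k
    rw [hIkeq k]
    exact (measurableSet_arcC _ _).diff (measurableSet_singleton _)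
  have hcover : (univ : Set Circle') ⊆ ⋃ k ∈ Finset.range n, Ik k := by
    intro z _
    obtain ⟨r, ⟨hr1, hr2⟩, rfl⟩ := exists_lift 0 z
    rw [zero_add] at hr2
    set k := ⌊r * n⌋₊ with hk
    have hk1 : (k : ℝ) ≤ r * n := Nat.floor_le (by positivity)
    have hk2 : r * n < (k : ℝ) + 1 := Nat.lt_floor_add_one _
    have hkn : k < n := by
      have h1 : r * n < n := by nlinarith
      exact_mod_cast (Nat.floor_lt (by positivity)).2 (by exact_mod_cast h1)
    refine mem_biUnion (Finset.mem_range.2 hkn) ⟨r, ⟨?_, ?_⟩, rfl⟩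
    · rw [div_le_iff₀ hnR]; linarith
    · rw [lt_div_iff₀ hnR]; linarith
  have hdisj : (↑(Finset.range n) : Set ℕ).PairwiseDisjoint Ik := by
    have key : ∀ i j : ℕ, i < n → j < n → i < j → Disjoint (Ik i) (Ik j) := by
      intro i j hi hj hij
      rw [Set.disjoint_left]
      rintro z ⟨u, ⟨hu1, hu2⟩, hu⟩ ⟨v, ⟨hv1, hv2⟩, hv⟩
      have hij1 : (i:ℝ) + 1 ≤ (j:ℝ) := by exact_mod_cast hij
      have hj1 : (j:ℝ) + 1 ≤ (n:ℝ) := by exact_mod_cast hj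
      have h1 : u < v := by
        calc u < ((i:ℝ)+1)/n := hu2
        _ ≤ (j:ℝ)/n := by apply div_le_div_of_nonneg_right hij1 hnR.le
        _ ≤ v := hv1
      have h2 : v - u < 1 := by
        have hv' : v < ((j:ℝ)+1)/n := hv2
        have : ((j:ℝ)+1)/n ≤ 1 := by rw [div_le_one hnR]; linarith
        have hu' : (0:ℝ) ≤ u := le_trans (by positivity) hu1
        linarith
      have := coe_eq_window (x := u) (y := v) (by linarith) (by linarith)
        (by show (u:Circle') = v; rw [show ((u:ℝ):Circle') = z from hu, show ((v:ℝ):Circle') = z from hv])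
      linarith
    intro i hi j hj hij
    simp only [Finset.coe_range, mem_Iio] at hi hj
    rcases hij.lt_or_gt with h | h
    · exact key i j hi hj h
    · exact (key j i hj hi h).symm
  have hsum : ∑ k ∈ Finset.range n, μ (Ik k) = 1 := by
    rw [← measure_biUnion_finset hdisj (fun k _ => hIkmeas k)]
    have : (⋃ k ∈ Finset.range n, Ik k) = univ :=
      le_antisymm (subset_univ _) hcover
    rw [this, measure_univ]
  obtain ⟨k0, hk0mem, hk0⟩ := Finset.exists_min_image (Finset.range n) (fun k => μ (Ik k))
    ⟨0, Finset.mem_range.2 (show 0 < n by omega)⟩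
  have hmul : (n:ℝ≥0∞) * μ (Ik k0) ≤ 1 := by
    calc (n:ℝ≥0∞) * μ (Ik k0) = ∑ _k ∈ Finset.range n, μ (Ik k0) := by
          rw [Finset.sum_const, Finset.card_range, nsmul_eq_mul]
    _ ≤ ∑ k ∈ Finset.range n, μ (Ik k) := Finset.sum_le_sum (fun k hk => hk0 k hk)
    _ = 1 := hsum
  have hk0le : μ (Ik k0) ≤ (n:ℝ≥0∞)⁻¹ := ENNReal.le_inv_iff_mul_le.2 (by rwa [mul_comm])
  exact ⟨k0, Finset.mem_range.1 hk0mem,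
    le_trans (measure_mono (image_mono Ioo_subset_Ico_self)) hk0le⟩

lemma exists_index {μ1 μ2 : Measure Circle'} {a c b d : ℝ}
    (h1 : a < c) (h2 : c < b) (h3 : b < d) (h4 : d < a + 1)
    (ha : (a : Circle') ∈ measSupport μ1) (hb : (b : Circle') ∈ measSupport μ1)
    (hc : (c : Circle') ∈ measSupport μ2) (hd : (d : Circle') ∈ measSupport μ2) :
    ∃ (q1 q2 q3 q4 q5 q6 q7 q8 : ℚ) (k : ℕ), 0 < k ∧
      (q1:ℝ) < q2 ∧ (q2:ℝ) ≤ q3 ∧ (q3:ℝ) < q4 ∧ (q4:ℝ) ≤ q5 ∧ (q5:ℝ) < q6 ∧ (q6:ℝ) ≤ q7 ∧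
      (q7:ℝ) < q8 ∧ (q8:ℝ) < q1 + 1 ∧
      (k:ℝ≥0∞)⁻¹ ≤ μ1 (arcO q1 q2) ∧ (k:ℝ≥0∞)⁻¹ ≤ μ1 (arcO q5 q6) ∧
      (k:ℝ≥0∞)⁻¹ ≤ μ2 (arcO q3 q4) ∧ (k:ℝ≥0∞)⁻¹ ≤ μ2 (arcO q7 q8) := by
  obtain ⟨q1, hq1a, hq1b⟩ := exists_rat_btwn (show d - 1 < a by linarith)
  obtain ⟨q2, hq2a, hq2b⟩ := exists_rat_btwn h1
  obtain ⟨q3, hq3a, hq3b⟩ := exists_rat_btwn hq2b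
  obtain ⟨q4, hq4a, hq4b⟩ := exists_rat_btwn h2
  obtain ⟨q5, hq5a, hq5b⟩ := exists_rat_btwn hq4b
  obtain ⟨q6, hq6a, hq6b⟩ := exists_rat_btwn h3
  obtain ⟨q7, hq7a, hq7b⟩ := exists_rat_btwn hq6b
  obtain ⟨q8, hq8a, hq8b⟩ := exists_rat_btwn (show d < (q1:ℝ) + 1 by linarith)
  have m1 : μ1 (arcO q1 q2) ≠ 0 := ha _ (isOpen_arcO _ _) (coe_mem_arcO (by linarith) hq2a)
  have m2 : μ1 (arcO q5 q6) ≠ 0 := hb _ (isOpen_arcO _ _) (coe_mem_arcO hq5b hq6a)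
  have m3 : μ2 (arcO q3 q4) ≠ 0 := hc _ (isOpen_arcO _ _) (coe_mem_arcO hq3b hq4a)
  have m4 : μ2 (arcO q7 q8) ≠ 0 := hd _ (isOpen_arcO _ _) (coe_mem_arcO hq7b hq8a)
  obtain ⟨n1, hn1⟩ := ENNReal.exists_inv_nat_lt m1
  obtain ⟨n2, hn2⟩ := ENNReal.exists_inv_nat_lt m2
  obtain ⟨n3, hn3⟩ := ENNReal.exists_inv_nat_lt m3
  obtain ⟨n4, hn4⟩ := ENNReal.exists_inv_nat_lt m4
  set k := n1 + n2 + n3 + n4 + 1 with hk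
  have hmono : ∀ m : ℕ, m ≤ k → (k:ℝ≥0∞)⁻¹ ≤ (m:ℝ≥0∞)⁻¹ := by
    intro m hm
    exact ENNReal.inv_le_inv.2 (by exact_mod_cast hm)
  refine ⟨q1, q2, q3, q4, q5, q6, q7, q8, k, by omega,
    by push_cast; linarith, by push_cast; linarith, by push_cast; linarith, by push_cast; linarith,
    by push_cast; linarith, by push_cast; linarith, by push_cast; linarith,
    by push_cast; linarith,
    le_trans (hmono n1 (by omega)) hn1.le, le_trans (hmono n2 (by omega)) hn2.le,
    le_trans (hmono n3 (by omega)) hn3.le, le_trans (hmono n4 (by omega)) hn4.le⟩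

end S9


namespace S9

lemma no_quad_of_null {μ1 μ2 : Measure Circle'}
    (h : ∀ q1 q2 q3 q4 q5 q6 q7 q8 : ℚ, ∀ k : ℕ, 0 < k →
      (q1:ℝ) < q2 → (q2:ℝ) ≤ q3 → (q3:ℝ) < q4 → (q4:ℝ) ≤ q5 → (q5:ℝ) < q6 → (q6:ℝ) ≤ q7 →
      (q7:ℝ) < q8 → (q8:ℝ) < q1 + 1 →
      ¬(((k:ℝ≥0∞)⁻¹ ≤ μ1 (arcO q1 q2) ∧ (k:ℝ≥0∞)⁻¹ ≤ μ1 (arcO q5 q6)) ∧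
        ((k:ℝ≥0∞)⁻¹ ≤ μ2 (arcO q3 q4) ∧ (k:ℝ≥0∞)⁻¹ ≤ μ2 (arcO q7 q8)))) :
    ¬ ∃ a c b d : ℝ, a < c ∧ c < b ∧ b < d ∧ d < a + 1 ∧
      (a:Circle') ∈ measSupport μ1 ∧ (b:Circle') ∈ measSupport μ1 ∧
      (c:Circle') ∈ measSupport μ2 ∧ (d:Circle') ∈ measSupport μ2 := by
  rintro ⟨a, c, b, d, h1, h2, h3, h4, ha, hb, hc, hd⟩
  obtain ⟨q1,q2,q3,q4,q5,q6,q7,q8,k,hk,c12,c23,c34,c45,c56,c67,c78,c81,m1,m2,m3,m4⟩ :=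
    exists_index h1 h2 h3 h4 ha hb hc hd
  exact h q1 q2 q3 q4 q5 q6 q7 q8 k hk c12 c23 c34 c45 c56 c67 c78 c81 ⟨⟨m1,m2⟩,⟨m3,m4⟩⟩

end S9

open S9 in
/-- For a boundary map `Φ : B → Prob(S¹)` associated with a minimal strongly proximal circle
action of a countable group and a doubly ergodic quasi-invariant `Γ`-space `(B, ν)`, for
almost every pair `(x, y)` the supports of `Φ(x)` and `Φ(y)` are finite and unlinked: they lie
in two disjoint closed arcs. -/
theorem statement9 {Γ B : Type*} [Group Γ] [Countable Γ]
    [MeasurableSpace B] [StandardBorelSpace B] [MulAction Γ B]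
    (ν : Measure B) [IsProbabilityMeasure ν]
    (hact : ∀ γ : Γ, Measurable fun x : B => γ • x)
    (hqi : ∀ γ : Γ, Measure.map (fun x : B => γ • x) ν ≪ ν ∧
      ν ≪ Measure.map (fun x : B => γ • x) ν)
    (herg : ∀ E : Set (B × B), MeasurableSet E →
      (∀ γ : Γ, (fun p : B × B => (γ • p.1, γ • p.2)) ⁻¹' E = E) →
      (ν.prod ν) E = 0 ∨ (ν.prod ν) Eᶜ = 0)
    (ρ : Γ →* (Circle' ≃ₜ Circle'))
    (hmsp : IsMinimalStronglyProximal ρ)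
    (Φ : B → Measure Circle')
    (hΦprob : ∀ x : B, IsProbabilityMeasure (Φ x))
    (hΦmeas : ∀ s : Set Circle', MeasurableSet s → Measurable fun x : B => Φ x s)
    (hΦequiv : ∀ γ : Γ, ∀ᵐ x ∂ν, Φ (γ • x) = Measure.map (ρ γ) (Φ x)) :
    ∀ᵐ z ∂(ν.prod ν),
      (measSupport (Φ (Prod.fst z))).Finite ∧ (measSupport (Φ (Prod.snd z))).Finite ∧
      ∃ I J : Set Circle', IsClosedArc I ∧ IsClosedArc J ∧ Disjoint I J ∧
        measSupport (Φ (Prod.fst z)) ⊆ I ∧ measSupport (Φ (Prod.snd z)) ⊆ J := by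
  classical
  haveI := fact01
  have hρmeas : ∀ γ : Γ, Measurable (ρ γ : Circle' → Circle') :=
    fun γ => (ρ γ).continuous.measurable
  -- the conull set where equivariance holds for every group element
  set B₀ : Set B := {x | ∀ γ : Γ, Φ (γ • x) = Measure.map (ρ γ) (Φ x)} with hB₀def
  have hB₀ae : ∀ᵐ x ∂ν, x ∈ B₀ := ae_all_iff.2 hΦequiv
  obtain ⟨N, hNsub, hNmeas, hNnull⟩ :=
    exists_measurable_superset_of_null (ae_iff.1 hB₀ae)
  have hprod2 : ∀ᵐ z ∂(ν.prod ν), z.1 ∈ B₀ ∧ z.2 ∈ B₀ := by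
    have h1 : (ν.prod ν) ((N ×ˢ (univ : Set B)) ∪ ((univ : Set B) ×ˢ N)) = 0 := by
      refine le_antisymm (le_trans (measure_union_le _ _) ?_) zero_le
      rw [Measure.prod_prod, Measure.prod_prod, hNnull]
      simp
    rw [ae_iff]
    refine measure_mono_null ?_ h1
    intro z hz
    simp only [mem_setOf_eq, not_and_or] at hz
    rcases hz with h | h
    · exact Or.inl ⟨hNsub h, mem_univ _⟩
    · exact Or.inr ⟨mem_univ _, hNsub h⟩
  -- recurrence lemma from ergodicity
  have lemR : ∀ S : Set (B × B), MeasurableSet S → (ν.prod ν) S ≠ 0 →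
      ∀ᵐ z ∂(ν.prod ν), ∃ γ : Γ, (γ • z.1, γ • z.2) ∈ S := by
    intro S hSmeas hSpos
    set R := ⋃ γ : Γ, (fun p : B × B => (γ • p.1, γ • p.2)) ⁻¹' S with hRdef
    have hmeasmap : ∀ γ : Γ, Measurable (fun p : B × B => (γ • p.1, γ • p.2)) :=
      fun γ => ((hact γ).comp measurable_fst).prodMk ((hact γ).comp measurable_snd)
    have hRmeas : MeasurableSet R :=
      MeasurableSet.iUnion (fun γ => hSmeas.preimage (hmeasmap γ))
    have hRinv : ∀ γ₀ : Γ, (fun p : B × B => (γ₀ • p.1, γ₀ • p.2)) ⁻¹' R = R := by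
      intro γ₀
      ext p
      simp only [hRdef, mem_iUnion, mem_preimage]
      constructor
      · rintro ⟨γ, hγ⟩
        exact ⟨γ * γ₀, by simpa [mul_smul] using hγ⟩
      · rintro ⟨γ, hγ⟩
        refine ⟨γ * γ₀⁻¹, ?_⟩
        simpa [mul_smul] using hγ
    rcases herg R hRmeas hRinv with h | h
    · exfalso
      apply hSpos
      refine measure_mono_null ?_ h
      intro p hp
      exact mem_iUnion.2 ⟨1, by simpa [one_smul] using hp⟩
    · rw [ae_iff]
      refine measure_mono_null ?_ h
      intro z hz
      simp only [mem_setOf_eq, not_exists] at hz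
      intro hzR
      obtain ⟨γ, hγ⟩ := mem_iUnion.1 hzR
      exact hz γ hγ
  -- concentration sets have positive measure
  have lemT : ∀ u v : ℝ, u < v → ∀ n : ℕ, 2 ≤ n →
      ν {x | 1 - (n : ℝ≥0∞)⁻¹ ≤ Φ x (arcC u v)} ≠ 0 := by
    intro u v huv n hn
    set T := {x | 1 - (n : ℝ≥0∞)⁻¹ ≤ Φ x (arcC u v)} with hTdef
    have hTmeas : MeasurableSet T :=
      measurableSet_le measurable_const (hΦmeas _ (measurableSet_arcC u v))
    have hsubU : B₀ ⊆ ⋃ γ : Γ, (fun x => γ • x) ⁻¹' T := by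
      intro x hx
      haveI := hΦprob x
      obtain ⟨k, hkn, hsmall⟩ := exists_small_arc (Φ x) n hn
      have hnR : (0:ℝ) < n := by positivity
      have hlt : (k : ℝ)/n < ((k : ℝ) + 1)/n := by
        apply div_lt_div_of_pos_right (by linarith) hnR
      set K := (arcO ((k:ℝ)/n) (((k:ℝ)+1)/n))ᶜ with hKdef
      have hKcl : IsClosed K := (isOpen_arcO _ _).isClosed_compl
      have hKne : K ≠ univ := by
        intro h
        have h2 := arcO_nonempty hlt
        rw [← compl_compl (arcO ((k:ℝ)/n) (((k:ℝ)+1)/n)), compl_univ_iff.1 h] at h2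
        simp at h2
      obtain ⟨γ, hγ⟩ := hmsp K hKcl hKne (arcO u v) (isOpen_arcO u v) (arcO_nonempty huv)
      refine mem_iUnion.2 ⟨γ, ?_⟩
      simp only [mem_preimage, hTdef, mem_setOf_eq]
      have heq : Φ (γ • x) = Measure.map (ρ γ) (Φ x) := hx γ
      have himgmeas : MeasurableSet ((ρ γ : Circle' → Circle') '' K) :=
        ((hKcl.isCompact.image (ρ γ).continuous).isClosed).measurableSet
      have h1 : Φ x K ≤ Φ (γ • x) (arcC u v) := by
        rw [heq]
        calc Φ x K = Φ x ((ρ γ : Circle' → Circle') ⁻¹' ((ρ γ : Circle' → Circle') '' K)) := by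
              rw [preimage_image_eq K (ρ γ).injective]
        _ = Measure.map (ρ γ) (Φ x) ((ρ γ : Circle' → Circle') '' K) :=
              (Measure.map_apply (hρmeas γ) himgmeas).symm
        _ ≤ _ := measure_mono (hγ.trans (arcO_subset_arcC u v))
      have h2 : 1 - (n:ℝ≥0∞)⁻¹ ≤ Φ x K := by
        rw [hKdef, prob_compl_eq_one_sub (measurableSet_arcO _ _)]
        exact tsub_le_tsub_left hsmall 1
      exact le_trans h2 h1
    intro hT0
    have hγ0 : ∀ γ : Γ, ν ((fun x => γ • x) ⁻¹' T) = 0 := by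
      intro γ
      have := (hqi γ).1 hT0
      rwa [Measure.map_apply (hact γ) hTmeas] at this
    have hU0 : ν (⋃ γ : Γ, (fun x => γ • x) ⁻¹' T) = 0 := measure_iUnion_null hγ0
    have hUc : ν ((⋃ γ : Γ, (fun x => γ • x) ⁻¹' T)ᶜ) = 0 := by
      refine measure_mono_null ?_ hNnull
      intro x hx
      exact hNsub (fun hmem => hx (hsubU hmem))
    have hU : (1:ℝ≥0∞) = 0 := by
      have := measure_add_measure_compl (μ := ν)
        (MeasurableSet.iUnion (fun γ => hTmeas.preimage (hact γ)))
      rw [hU0, hUc, measure_univ] at this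
      simpa using this.symm
    exact one_ne_zero hU
  -- measurable "big mass on two arcs" sets
  set Ax : ℚ → ℚ → ℚ → ℚ → ℕ → Set B := fun a b c d k =>
    {x | (k:ℝ≥0∞)⁻¹ ≤ Φ x (arcO a b) ∧ (k:ℝ≥0∞)⁻¹ ≤ Φ x (arcO c d)} with hAxdef
  have hAxmeas : ∀ (a b c d : ℚ) (k : ℕ), MeasurableSet (Ax a b c d k) := by
    intro a b c d k
    rw [hAxdef]
    simp only [setOf_and]
    exact (measurableSet_le measurable_const (hΦmeas _ (measurableSet_arcO _ _))).inter
      (measurableSet_le measurable_const (hΦmeas _ (measurableSet_arcO _ _)))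
  -- recurrence into the pair of concentration sets
  have aeConc : ∀ n : ℕ, ∀ᵐ z ∂(ν.prod ν), ∃ γ : Γ,
      1 - ((n+2 : ℕ) : ℝ≥0∞)⁻¹ ≤ Φ (γ • z.1) (arcC (1/8) (3/8)) ∧
      1 - ((n+2 : ℕ) : ℝ≥0∞)⁻¹ ≤ Φ (γ • z.2) (arcC (5/8) (7/8)) := by
    intro n
    set T1 := {x | 1 - ((n+2 : ℕ):ℝ≥0∞)⁻¹ ≤ Φ x (arcC (1/8) (3/8))} with hT1def
    set T2 := {x | 1 - ((n+2 : ℕ):ℝ≥0∞)⁻¹ ≤ Φ x (arcC (5/8) (7/8))} with hT2def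
    have hT1meas : MeasurableSet T1 :=
      measurableSet_le measurable_const (hΦmeas _ (measurableSet_arcC _ _))
    have hT2meas : MeasurableSet T2 :=
      measurableSet_le measurable_const (hΦmeas _ (measurableSet_arcC _ _))
    have hpos : (ν.prod ν) (T1 ×ˢ T2) ≠ 0 := by
      rw [Measure.prod_prod]
      exact mul_ne_zero (lemT (1/8) (3/8) (by norm_num) (n+2) (by omega))
        (lemT (5/8) (7/8) (by norm_num) (n+2) (by omega))
    filter_upwards [lemR (T1 ×ˢ T2) (hT1meas.prod hT2meas) hpos] with z hz
    obtain ⟨γ, hγ1, hγ2⟩ := hz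
    exact ⟨γ, hγ1, hγ2⟩
  -- the key unlinking lemma
  have keyLem : ∀ q1 q2 q3 q4 q5 q6 q7 q8 : ℚ, ∀ k : ℕ, 0 < k →
      (q1:ℝ) < q2 → (q2:ℝ) ≤ q3 → (q3:ℝ) < q4 → (q4:ℝ) ≤ q5 → (q5:ℝ) < q6 → (q6:ℝ) ≤ q7 →
      (q7:ℝ) < q8 → (q8:ℝ) < q1 + 1 →
      ν (Ax q1 q2 q5 q6 k) = 0 ∨ ν (Ax q3 q4 q7 q8 k) = 0 := by
    intro q1 q2 q3 q4 q5 q6 q7 q8 k hk h12 h23 h34 h45 h56 h67 h78 h81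
    by_contra hcon
    push_neg at hcon
    obtain ⟨hpos1, hpos2⟩ := hcon
    have hS : (ν.prod ν) ((Ax q1 q2 q5 q6 k) ×ˢ (Ax q3 q4 q7 q8 k)) ≠ 0 := by
      rw [Measure.prod_prod]; exact mul_ne_zero hpos1 hpos2
    have ae1 := lemR _ ((hAxmeas q1 q2 q5 q6 k).prod (hAxmeas q3 q4 q7 q8 k)) hS
    obtain ⟨z, ⟨hzB₀1, hzB₀2⟩, ⟨γ₁, hγ₁⟩, ⟨γ₂, hγ₂1, hγ₂2⟩⟩ :=
      (hprod2.and (ae1.and (aeConc k))).exists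
    obtain ⟨⟨hm1, hm2⟩, ⟨hm3, hm4⟩⟩ := hγ₁
    -- transfer the masses to x and y through γ₁
    have hmass : ∀ (x : B), x ∈ B₀ → ∀ a b : ℚ, (k:ℝ≥0∞)⁻¹ ≤ Φ (γ₁ • x) (arcO a b) →
        (k:ℝ≥0∞)⁻¹ ≤ Φ x ((ρ γ₁ : Circle' → Circle') ⁻¹' (arcO a b)) := by
      intro x hx a b hm
      rwa [hx γ₁, Measure.map_apply (hρmeas γ₁) (measurableSet_arcO _ _)] at hm
    have hP1 := hmass z.1 hzB₀1 q1 q2 hm1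
    have hP3 := hmass z.1 hzB₀1 q5 q6 hm2
    have hP2 := hmass z.2 hzB₀2 q3 q4 hm3
    have hP4 := hmass z.2 hzB₀2 q7 q8 hm4
    -- push forward by γ₂ and intersect with the concentration arcs
    have hk21 : ((k+2 : ℕ):ℝ≥0∞)⁻¹ ≤ 1 := by
      apply ENNReal.inv_le_one.2
      exact_mod_cast (by omega : 1 ≤ k + 2)
    have step : ∀ (x : B), x ∈ B₀ → ∀ (P : Set Circle'), IsOpen P →
        (k:ℝ≥0∞)⁻¹ ≤ Φ x P → ∀ u v : ℝ,
        1 - ((k+2 : ℕ):ℝ≥0∞)⁻¹ ≤ Φ (γ₂ • x) (arcC u v) →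
        ∃ p, p ∈ P ∧ (ρ γ₂ : Circle' → Circle') p ∈ arcC u v := by
      intro x hx P hP hmP u v hconc
      haveI := hΦprob (γ₂ • x)
      by_contra hemp
      push_neg at hemp
      have hsub : (ρ γ₂ : Circle' → Circle') '' P ⊆ (arcC u v)ᶜ := by
        rintro w ⟨p, hp, rfl⟩
        exact hemp p hp
      have himgmeas : MeasurableSet ((ρ γ₂ : Circle' → Circle') '' P) :=
        ((ρ γ₂).isOpenMap P hP).measurableSet
      have hval : Φ (γ₂ • x) ((ρ γ₂ : Circle' → Circle') '' P) = Φ x P := by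
        rw [hx γ₂, Measure.map_apply (hρmeas γ₂) himgmeas,
          preimage_image_eq _ (ρ γ₂).injective]
      have hcompl : Φ (γ₂ • x) ((arcC u v)ᶜ) ≤ ((k+2 : ℕ):ℝ≥0∞)⁻¹ := by
        rw [prob_compl_eq_one_sub (measurableSet_arcC u v)]
        refine tsub_le_iff_right.2 ?_
        calc (1:ℝ≥0∞) = ((k+2 : ℕ):ℝ≥0∞)⁻¹ + (1 - ((k+2 : ℕ):ℝ≥0∞)⁻¹) :=
              (add_tsub_cancel_of_le hk21).symm
        _ ≤ ((k+2 : ℕ):ℝ≥0∞)⁻¹ + Φ (γ₂ • x) (arcC u v) := add_le_add le_rfl hconc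
      have hle : (k:ℝ≥0∞)⁻¹ ≤ ((k+2 : ℕ):ℝ≥0∞)⁻¹ := by
        refine le_trans hmP ?_
        rw [← hval]
        exact le_trans (measure_mono hsub) hcompl
      have hlt : ((k+2 : ℕ):ℝ≥0∞)⁻¹ < (k:ℝ≥0∞)⁻¹ := by
        apply ENNReal.inv_lt_inv.2
        exact_mod_cast (by omega : k < k + 2)
      exact absurd hle (not_le.2 hlt)
    obtain ⟨p1, hp1P, hp1U⟩ := step z.1 hzB₀1 _ ((isOpen_arcO q1 q2).preimage (ρ γ₁).continuous)
      hP1 (1/8) (3/8) hγ₂1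
    obtain ⟨p3, hp3P, hp3U⟩ := step z.1 hzB₀1 _ ((isOpen_arcO q5 q6).preimage (ρ γ₁).continuous)
      hP3 (1/8) (3/8) hγ₂1
    obtain ⟨p2, hp2P, hp2V⟩ := step z.2 hzB₀2 _ ((isOpen_arcO q3 q4).preimage (ρ γ₁).continuous)
      hP2 (5/8) (7/8) hγ₂2
    obtain ⟨p4, hp4P, hp4V⟩ := step z.2 hzB₀2 _ ((isOpen_arcO q7 q8).preimage (ρ γ₁).continuous)
      hP4 (5/8) (7/8) hγ₂2
    -- the four points are in linked position
    obtain ⟨r1, hr11, hr12, hr1⟩ := mem_arcO.1 (mem_preimage.1 hp1P)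
    obtain ⟨r2, hr21, hr22, hr2⟩ := mem_arcO.1 (mem_preimage.1 hp2P)
    obtain ⟨r3, hr31, hr32, hr3⟩ := mem_arcO.1 (mem_preimage.1 hp3P)
    obtain ⟨r4, hr41, hr42, hr4⟩ := mem_arcO.1 (mem_preimage.1 hp4P)
    have hsep0 : Sep ((ρ γ₁ : Circle' → Circle') p1) ((ρ γ₁ : Circle' → Circle') p3)
        ((ρ γ₁ : Circle' → Circle') p2) ((ρ γ₁ : Circle' → Circle') p4) := by
      rw [← hr1, ← hr2, ← hr3, ← hr4]
      exact sep_of_lifts (by linarith) (by linarith) (by linarith) (by linarith)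
    have hsep1 : Sep p1 p3 p2 p4 := sep_comap (ρ γ₁) hsep0
    have hsep2 : Sep ((ρ γ₂ : Circle' → Circle') p1) ((ρ γ₂ : Circle' → Circle') p3)
        ((ρ γ₂ : Circle' → Circle') p2) ((ρ γ₂ : Circle' → Circle') p4) := sep_map (ρ γ₂) hsep1
    exact sep_absurd hp1U hp3U hp2V hp4V hsep2
  -- the diagonal lemma
  have diagLem : ∀ᵐ z ∂(ν.prod ν), ((Φ z.1).prod (Φ z.2)) (Set.diagonal Circle') = 0 := by
    filter_upwards [hprod2, ae_all_iff.2 aeConc] with z hz hT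
    haveI := hΦprob z.1
    haveI := hΦprob z.2
    have hinv : ∀ γ : Γ,
        ((Φ (γ • z.1)).prod (Φ (γ • z.2))) (Set.diagonal Circle') =
        ((Φ z.1).prod (Φ z.2)) (Set.diagonal Circle') := by
      intro γ
      rw [hz.1 γ, hz.2 γ, Measure.map_prod_map _ _ (hρmeas γ) (hρmeas γ),
        Measure.map_apply ((hρmeas γ).prodMap (hρmeas γ)) isClosed_diagonal.measurableSet]
      congr 1
      ext ⟨u, v⟩
      simp only [mem_preimage, Prod.map, Set.mem_diagonal_iff]
      exact ⟨fun h => (ρ γ).injective h, fun h => by rw [h]⟩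
    have hbound : ∀ n : ℕ,
        ((Φ z.1).prod (Φ z.2)) (Set.diagonal Circle') ≤
          ((n+2 : ℕ):ℝ≥0∞)⁻¹ + ((n+2 : ℕ):ℝ≥0∞)⁻¹ := by
      intro n
      obtain ⟨γ, hc1, hc2⟩ := hT n
      haveI := hΦprob (γ • z.1)
      haveI := hΦprob (γ • z.2)
      rw [← hinv γ]
      have hsub : Set.diagonal Circle' ⊆
          (((arcC (1/8) (3/8))ᶜ) ×ˢ (univ : Set Circle')) ∪
            ((univ : Set Circle') ×ˢ ((arcC (5/8) (7/8))ᶜ)) := by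
        rintro ⟨u, v⟩ hd
        have hd' : u = v := hd
        subst hd'
        by_cases hU : u ∈ arcC (1/8) (3/8)
        · right
          refine ⟨mem_univ _, fun hV => ?_⟩
          have : u ∈ arcC (1/8 : ℝ) (3/8) ∩ arcC (5/8) (7/8) := ⟨hU, hV⟩
          rw [UV_disjoint] at this
          exact this
        · exact Or.inl ⟨hU, mem_univ _⟩
      have hun := measure_union_le (μ := (Φ (γ • z.1)).prod (Φ (γ • z.2)))
        (((arcC (1/8) (3/8))ᶜ) ×ˢ (univ : Set Circle'))
        ((univ : Set Circle') ×ˢ ((arcC (5/8) (7/8))ᶜ))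
      refine le_trans (le_trans (measure_mono hsub) hun) ?_
      simp only [Measure.prod_prod, measure_univ, mul_one, one_mul]
      have hk21 : ((n+2 : ℕ):ℝ≥0∞)⁻¹ ≤ 1 := by
        apply ENNReal.inv_le_one.2
        exact_mod_cast (by omega : 1 ≤ n + 2)
      have e1 : Φ (γ • z.1) ((arcC (1/8 : ℝ) (3/8))ᶜ) ≤ ((n+2 : ℕ):ℝ≥0∞)⁻¹ := by
        rw [prob_compl_eq_one_sub (measurableSet_arcC _ _)]
        refine tsub_le_iff_right.2 ?_
        calc (1:ℝ≥0∞) = ((n+2 : ℕ):ℝ≥0∞)⁻¹ + (1 - ((n+2 : ℕ):ℝ≥0∞)⁻¹) :=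
              (add_tsub_cancel_of_le hk21).symm
        _ ≤ ((n+2 : ℕ):ℝ≥0∞)⁻¹ + Φ (γ • z.1) (arcC (1/8) (3/8)) := add_le_add le_rfl hc1
      have e2 : Φ (γ • z.2) ((arcC (5/8 : ℝ) (7/8))ᶜ) ≤ ((n+2 : ℕ):ℝ≥0∞)⁻¹ := by
        rw [prob_compl_eq_one_sub (measurableSet_arcC _ _)]
        refine tsub_le_iff_right.2 ?_
        calc (1:ℝ≥0∞) = ((n+2 : ℕ):ℝ≥0∞)⁻¹ + (1 - ((n+2 : ℕ):ℝ≥0∞)⁻¹) :=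
              (add_tsub_cancel_of_le hk21).symm
        _ ≤ ((n+2 : ℕ):ℝ≥0∞)⁻¹ + Φ (γ • z.2) (arcC (5/8) (7/8)) := add_le_add le_rfl hc2
      exact add_le_add e1 e2
    by_contra hne
    have hhalf : ((Φ z.1).prod (Φ z.2)) (Set.diagonal Circle') / 2 ≠ 0 := by
      simp only [ne_eq, ENNReal.div_eq_zero_iff]
      push_neg
      exact ⟨hne, by norm_num⟩
    obtain ⟨n, hn⟩ := ENNReal.exists_inv_nat_lt hhalf
    have h1 : ((n+2 : ℕ):ℝ≥0∞)⁻¹ ≤ (n:ℝ≥0∞)⁻¹ :=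
      ENNReal.inv_le_inv.2 (by exact_mod_cast (by omega : n ≤ n + 2))
    have hfin : ((Φ z.1).prod (Φ z.2)) (Set.diagonal Circle') ≠ ⊤ := by
      haveI : IsProbabilityMeasure ((Φ z.1).prod (Φ z.2)) := by infer_instance
      exact (measure_lt_top _ _).ne
    have hcontr : ((Φ z.1).prod (Φ z.2)) (Set.diagonal Circle') <
        ((Φ z.1).prod (Φ z.2)) (Set.diagonal Circle') := by
      calc ((Φ z.1).prod (Φ z.2)) (Set.diagonal Circle')
          ≤ ((n+2 : ℕ):ℝ≥0∞)⁻¹ + ((n+2 : ℕ):ℝ≥0∞)⁻¹ := hbound n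
      _ ≤ (n:ℝ≥0∞)⁻¹ + (n:ℝ≥0∞)⁻¹ := add_le_add h1 h1
      _ < ((Φ z.1).prod (Φ z.2)) (Set.diagonal Circle') / 2 +
            ((Φ z.1).prod (Φ z.2)) (Set.diagonal Circle') / 2 := ENNReal.add_lt_add hn hn
      _ = _ := ENNReal.add_halves _
    exact lt_irrefl _ hcontr
  -- combine the key lemma over the countable index set
  have aeAll : ∀ᵐ z ∂(ν.prod ν),
      ∀ i : ℚ × ℚ × ℚ × ℚ × ℚ × ℚ × ℚ × ℚ × ℕ,
      (0 < i.2.2.2.2.2.2.2.2 ∧ (i.1:ℝ) < i.2.1 ∧ (i.2.1:ℝ) ≤ i.2.2.1 ∧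
        (i.2.2.1:ℝ) < i.2.2.2.1 ∧ (i.2.2.2.1:ℝ) ≤ i.2.2.2.2.1 ∧
        (i.2.2.2.2.1:ℝ) < i.2.2.2.2.2.1 ∧ (i.2.2.2.2.2.1:ℝ) ≤ i.2.2.2.2.2.2.1 ∧
        (i.2.2.2.2.2.2.1:ℝ) < i.2.2.2.2.2.2.2.1 ∧ (i.2.2.2.2.2.2.2.1:ℝ) < i.1 + 1) →
      (¬(z.1 ∈ Ax i.1 i.2.1 i.2.2.2.2.1 i.2.2.2.2.2.1 i.2.2.2.2.2.2.2.2 ∧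
          z.1 ∈ Ax i.2.2.1 i.2.2.2.1 i.2.2.2.2.2.2.1 i.2.2.2.2.2.2.2.1 i.2.2.2.2.2.2.2.2) ∧
       ¬(z.2 ∈ Ax i.1 i.2.1 i.2.2.2.2.1 i.2.2.2.2.2.1 i.2.2.2.2.2.2.2.2 ∧
          z.2 ∈ Ax i.2.2.1 i.2.2.2.1 i.2.2.2.2.2.2.1 i.2.2.2.2.2.2.2.1 i.2.2.2.2.2.2.2.2) ∧
       ¬(z.1 ∈ Ax i.1 i.2.1 i.2.2.2.2.1 i.2.2.2.2.2.1 i.2.2.2.2.2.2.2.2 ∧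
          z.2 ∈ Ax i.2.2.1 i.2.2.2.1 i.2.2.2.2.2.2.1 i.2.2.2.2.2.2.2.1 i.2.2.2.2.2.2.2.2) ∧
       ¬(z.2 ∈ Ax i.1 i.2.1 i.2.2.2.2.1 i.2.2.2.2.2.1 i.2.2.2.2.2.2.2.2 ∧
          z.1 ∈ Ax i.2.2.1 i.2.2.2.1 i.2.2.2.2.2.2.1 i.2.2.2.2.2.2.2.1 i.2.2.2.2.2.2.2.2)) := by
    rw [ae_all_iff]
    rintro ⟨q1,q2,q3,q4,q5,q6,q7,q8,k⟩
    simp only []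
    by_cases hch : 0 < k ∧ (q1:ℝ) < q2 ∧ (q2:ℝ) ≤ q3 ∧ (q3:ℝ) < q4 ∧ (q4:ℝ) ≤ q5 ∧
        (q5:ℝ) < q6 ∧ (q6:ℝ) ≤ q7 ∧ (q7:ℝ) < q8 ∧ (q8:ℝ) < q1 + 1
    · obtain ⟨hk, h12, h23, h34, h45, h56, h67, h78, h81⟩ := hch
      have hnull := keyLem q1 q2 q3 q4 q5 q6 q7 q8 k hk h12 h23 h34 h45 h56 h67 h78 h81
      set A1 := Ax q1 q2 q5 q6 k with hA1
      set A2 := Ax q3 q4 q7 q8 k with hA2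
      have hA12 : ν (A1 ∩ A2) = 0 := by
        rcases hnull with h | h
        · exact measure_mono_null inter_subset_left h
        · exact measure_mono_null inter_subset_right h
      have c1 : (ν.prod ν) ((A1 ∩ A2) ×ˢ (univ : Set B)) = 0 := by
        rw [Measure.prod_prod, hA12, zero_mul]
      have c2 : (ν.prod ν) ((univ : Set B) ×ˢ (A1 ∩ A2)) = 0 := by
        rw [Measure.prod_prod, hA12, mul_zero]
      have c3 : (ν.prod ν) (A1 ×ˢ A2) = 0 := by
        rw [Measure.prod_prod]
        rcases hnull with h | h
        · rw [h, zero_mul]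
        · rw [h, mul_zero]
      have c4 : (ν.prod ν) (A2 ×ˢ A1) = 0 := by
        rw [Measure.prod_prod]
        rcases hnull with h | h
        · rw [h, mul_zero]
        · rw [h, zero_mul]
      have call : (ν.prod ν) (((A1 ∩ A2) ×ˢ (univ : Set B) ∪
          (univ : Set B) ×ˢ (A1 ∩ A2) ∪ A1 ×ˢ A2) ∪ A2 ×ˢ A1) = 0 :=
        measure_union_null (measure_union_null (measure_union_null c1 c2) c3) c4
      rw [ae_iff]
      refine measure_mono_null ?_ call
      intro z hz
      simp only [mem_setOf_eq] at hz
      have hC : ¬(¬(z.1 ∈ A1 ∧ z.1 ∈ A2) ∧ ¬(z.2 ∈ A1 ∧ z.2 ∈ A2) ∧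
          ¬(z.1 ∈ A1 ∧ z.2 ∈ A2) ∧ ¬(z.2 ∈ A1 ∧ z.1 ∈ A2)) :=
        fun hc => hz (fun _ => hc)
      by_contra hmem
      apply hC
      refine ⟨fun hAB => hmem ?_, fun hAB => hmem ?_, fun hAB => hmem ?_, fun hAB => hmem ?_⟩
      · exact Or.inl (Or.inl (Or.inl ⟨⟨hAB.1, hAB.2⟩, mem_univ _⟩))
      · exact Or.inl (Or.inl (Or.inr ⟨mem_univ _, hAB.1, hAB.2⟩))
      · exact Or.inl (Or.inr ⟨hAB.1, hAB.2⟩)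
      · exact Or.inr ⟨hAB.2, hAB.1⟩
    · exact Filter.Eventually.of_forall (fun z h => absurd h hch)
  -- endgame
  filter_upwards [aeAll, diagLem] with z hkey hdiag
  haveI := hΦprob z.1
  haveI := hΦprob z.2
  have hno11 : ¬ ∃ a c b d : ℝ, a < c ∧ c < b ∧ b < d ∧ d < a + 1 ∧
      (a:Circle') ∈ measSupport (Φ z.1) ∧ (b:Circle') ∈ measSupport (Φ z.1) ∧
      (c:Circle') ∈ measSupport (Φ z.1) ∧ (d:Circle') ∈ measSupport (Φ z.1) :=
    no_quad_of_null (fun q1 q2 q3 q4 q5 q6 q7 q8 k hk c1 c2 c3 c4 c5 c6 c7 c8 hmem =>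
      (hkey ⟨q1,q2,q3,q4,q5,q6,q7,q8,k⟩ ⟨hk,c1,c2,c3,c4,c5,c6,c7,c8⟩).1 ⟨hmem.1, hmem.2⟩)
  have hno22 : ¬ ∃ a c b d : ℝ, a < c ∧ c < b ∧ b < d ∧ d < a + 1 ∧
      (a:Circle') ∈ measSupport (Φ z.2) ∧ (b:Circle') ∈ measSupport (Φ z.2) ∧
      (c:Circle') ∈ measSupport (Φ z.2) ∧ (d:Circle') ∈ measSupport (Φ z.2) :=
    no_quad_of_null (fun q1 q2 q3 q4 q5 q6 q7 q8 k hk c1 c2 c3 c4 c5 c6 c7 c8 hmem =>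
      (hkey ⟨q1,q2,q3,q4,q5,q6,q7,q8,k⟩ ⟨hk,c1,c2,c3,c4,c5,c6,c7,c8⟩).2.1 ⟨hmem.1, hmem.2⟩)
  have hnocross : ¬ ∃ a c b d : ℝ, a < c ∧ c < b ∧ b < d ∧ d < a + 1 ∧
      (a:Circle') ∈ measSupport (Φ z.2) ∧ (b:Circle') ∈ measSupport (Φ z.2) ∧
      (c:Circle') ∈ measSupport (Φ z.1) ∧ (d:Circle') ∈ measSupport (Φ z.1) :=
    no_quad_of_null (fun q1 q2 q3 q4 q5 q6 q7 q8 k hk c1 c2 c3 c4 c5 c6 c7 c8 hmem =>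
      (hkey ⟨q1,q2,q3,q4,q5,q6,q7,q8,k⟩ ⟨hk,c1,c2,c3,c4,c5,c6,c7,c8⟩).2.2.2 ⟨hmem.1, hmem.2⟩)
  have hfin1 : (measSupport (Φ z.1)).Finite := by
    by_contra hinf
    obtain ⟨a, c, b, d, h1, h2, h3, h4, ha, hc, hb, hd⟩ := exists_four_sorted hinf
    exact hno11 ⟨a, c, b, d, h1, h2, h3, h4, ha, hb, hc, hd⟩
  have hfin2 : (measSupport (Φ z.2)).Finite := by
    by_contra hinf
    obtain ⟨a, c, b, d, h1, h2, h3, h4, ha, hc, hb, hd⟩ := exists_four_sorted hinf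
    exact hno22 ⟨a, c, b, d, h1, h2, h3, h4, ha, hb, hc, hd⟩
  have hdisjsupp : Disjoint (measSupport (Φ z.1)) (measSupport (Φ z.2)) := by
    rw [Set.disjoint_left]
    intro p hp1 hp2
    have a1 := atom_of_mem_finite_supp hfin1 hp1
    have a2 := atom_of_mem_finite_supp hfin2 hp2
    have hsub : ({p} ×ˢ {p} : Set (Circle' × Circle')) ⊆ Set.diagonal Circle' := by
      rintro ⟨u, v⟩ ⟨hu, hv⟩
      simp only [mem_singleton_iff] at hu hv
      show u = v
      rw [hu, hv]
    have hle := measure_mono (μ := (Φ z.1).prod (Φ z.2)) hsub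
    rw [hdiag, Measure.prod_prod] at hle
    rcases mul_eq_zero.1 (le_antisymm hle zero_le) with h | h
    exacts [a1 h, a2 h]
  obtain ⟨I, J, hI, hJ, hIJ, hFI, hGJ⟩ :=
    arcs_of_crossfree hfin1 (supp_nonempty _) hfin2 (supp_nonempty _) hdisjsupp hnocross
  exact ⟨hfin1, hfin2, I, J, hI, hJ, hIJ, hFI, hGJ⟩
end
end

section
/- Fix an integer k ≥ 3. Let 𝒜 be a family of k-element subsets of the circle S¹ that are pairwise unlinked: any two distinct members A, A' ∈ 𝒜 are contained in two disjoint closed arcs of S¹. Then 𝒜 is at most countable. More precisely, for every ε > 0, the subfamily 𝒜_ε of those A ∈ 𝒜 whose separation sep(A) = min{ d(a,a') : a ≠ a' ∈ A } is at least ε has cardinality at most (k−2)/ε, where d is the standard arc-length metric on S¹ = ℝ/ℤ normalized so that the total length of S¹ is 1. -/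
noncomputable section

open MeasureTheory Set Function
open scoped ENNReal

namespace CirclePack


open Set

/-- Rotation coordinate: position of `x` relative to basepoint `c` on circle of length `ℓ`. -/
def rot (ℓ c x : ℝ) : ℝ := ℓ * Int.fract ((x - c)/ℓ)

/-- Cyclic (strict) betweenness for real representatives. -/
def cyc (x y z : ℝ) : Prop := (x < y ∧ y < z) ∨ (y < z ∧ z < x) ∨ (z < x ∧ x < y)

/-- Crossing (linking) of two finite sets of representatives. -/
def Cross (A B : Finset ℝ) : Prop :=
  ∃ a ∈ A, ∃ a' ∈ A, ∃ b ∈ B, ∃ b' ∈ B, cyc a b a' ∧ cyc a' b' a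

variable {ℓ c x y z : ℝ}

lemma rot_nonneg (hℓ : 0 < ℓ) (c x : ℝ) : 0 ≤ rot ℓ c x :=
  mul_nonneg hℓ.le (Int.fract_nonneg _)

lemma rot_lt (hℓ : 0 < ℓ) (c x : ℝ) : rot ℓ c x < ℓ := by
  have := Int.fract_lt_one ((x - c)/ℓ)
  calc rot ℓ c x < ℓ * 1 := by exact (mul_lt_mul_iff_right₀ hℓ).mpr this
  _ = ℓ := mul_one ℓ

lemma rot_self (hℓ : 0 < ℓ) (c : ℝ) : rot ℓ c c = 0 := by
  simp [rot]

lemma rot_eq_ite (hℓ : 0 < ℓ) (hc : c ∈ Icc 0 ℓ) (hx : x ∈ Ico 0 ℓ) :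
    rot ℓ c x = if x < c then x - c + ℓ else x - c := by
  rcases hc with ⟨hc0, hcl⟩; rcases hx with ⟨hx0, hxl⟩
  by_cases h : x < c
  · have h1 : (x - c)/ℓ < 0 := div_neg_of_neg_of_pos (by linarith) hℓ
    have h2 : (-1 : ℝ) ≤ (x - c)/ℓ := by
      rw [neg_le, ← neg_div]; exact div_le_one_of_le₀ (by linarith) hℓ.le
    have hfl : ⌊(x - c)/ℓ⌋ = -1 := by
      apply Int.floor_eq_iff.mpr
      constructor
      · simpa using h2
      · push_cast; linarith
    rw [rot, if_pos h, Int.fract, hfl]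
    push_cast
    field_simp
    ring
  · push_neg at h
    have h1 : 0 ≤ (x - c)/ℓ := div_nonneg (by linarith) hℓ.le
    have h2 : (x - c)/ℓ < 1 := by
      rw [div_lt_one hℓ]; linarith
    have : Int.fract ((x - c)/ℓ) = (x - c)/ℓ := Int.fract_eq_self.mpr ⟨h1, h2⟩
    rw [rot, this, if_neg (not_lt.mpr h)]
    field_simp


lemma rot_comp (hℓ : 0 < ℓ) (b c x : ℝ) : rot ℓ b (rot ℓ c x) = rot ℓ (c + b) x := by
  unfold rot
  congr 1
  have : (ℓ * Int.fract ((x - c)/ℓ) - b)/ℓ = (x - c - b)/ℓ - (⌊(x - c)/ℓ⌋ : ℤ) := by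
    rw [Int.fract]
    field_simp
    ring
  rw [this, Int.fract_sub_intCast]
  congr 1
  ring

lemma rot_period (hℓ : 0 < ℓ) (n : ℤ) (c x : ℝ) : rot ℓ (c + n * ℓ) x = rot ℓ c x := by
  unfold rot
  congr 1
  have : (x - (c + n * ℓ))/ℓ = (x - c)/ℓ - n := by field_simp; ring
  rw [this, Int.fract_sub_intCast]

lemma rot_base (hℓ : 0 < ℓ) (hx : x ∈ Ico 0 ℓ) : rot ℓ 0 x = x := by
  have := rot_eq_ite hℓ (show (0:ℝ) ∈ Icc 0 ℓ from ⟨le_refl _, hℓ.le⟩) hx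
  simpa [not_lt.mpr hx.1] using this

lemma rot_left_inv (hℓ : 0 < ℓ) (hc : c ∈ Ico 0 ℓ) (hx : x ∈ Ico 0 ℓ) :
    rot ℓ (rot ℓ c 0) (rot ℓ c x) = x := by
  rw [rot_comp hℓ]
  have h0 : rot ℓ c 0 = if (0:ℝ) < c then ℓ - c else -c := by
    have := rot_eq_ite hℓ ⟨hc.1, hc.2.le⟩ (show (0:ℝ) ∈ Ico 0 ℓ from ⟨le_refl _, hℓ⟩)
    rcases lt_or_ge 0 c with h | h
    · rw [if_pos h]; rw [this, if_pos h]; ring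
    · rw [if_neg (not_lt.mpr h)]; rw [this, if_neg (not_lt.mpr h)]; ring
  rcases lt_or_ge 0 c with h | h
  · rw [h0, if_pos h]
    have : c + (ℓ - c) = 0 + (1:ℤ) * ℓ := by push_cast; ring
    rw [this, rot_period hℓ 1 0 x]
    exact rot_base hℓ hx
  · rw [h0, if_neg (not_lt.mpr h)]
    have hc0 : c = 0 := le_antisymm h hc.1
    simp [hc0]
    exact rot_base hℓ hx

lemma rot_injOn (hℓ : 0 < ℓ) (hc : c ∈ Ico 0 ℓ) (hx : x ∈ Ico 0 ℓ) (hy : y ∈ Ico 0 ℓ)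
    (h : rot ℓ c x = rot ℓ c y) : x = y := by
  have := congrArg (rot ℓ (rot ℓ c 0)) h
  rwa [rot_left_inv hℓ hc hx, rot_left_inv hℓ hc hy] at this

/-- The rotated difference is the same or the complementary one. -/
lemma rot_abs_sub (hℓ : 0 < ℓ) (hc : c ∈ Icc 0 ℓ) (hx : x ∈ Ico 0 ℓ) (hy : y ∈ Ico 0 ℓ) :
    |rot ℓ c x - rot ℓ c y| = |x - y| ∨ |rot ℓ c x - rot ℓ c y| = ℓ - |x - y| := by
  rw [rot_eq_ite hℓ hc hx, rot_eq_ite hℓ hc hy]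
  rcases lt_or_ge x c with h1 | h1 <;> rcases lt_or_ge y c with h2 | h2
  · left; rw [if_pos h1, if_pos h2]; congr 1; ring
  · right; rw [if_pos h1, if_neg (not_lt.mpr h2)]
    have hyx : y - x ≤ ℓ := by rcases hy with ⟨_,_⟩; rcases hx with ⟨_,_⟩; linarith
    rw [abs_of_nonneg (by linarith : (0:ℝ) ≤ x - c + ℓ - (y - c)), abs_of_nonpos (by linarith : x - y ≤ 0)]
    ring
  · right; rw [if_neg (not_lt.mpr h1), if_pos h2]
    rw [abs_of_nonpos (by rcases hy with ⟨_,_⟩; rcases hx with ⟨_,_⟩; linarith : x - c - (y - c + ℓ) ≤ 0),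
      abs_of_nonneg (by linarith : (0:ℝ) ≤ x - y)]
    ring
  · left; rw [if_neg (not_lt.mpr h1), if_neg (not_lt.mpr h2)]; congr 1; ring

lemma cyc_shift (L : ℝ) : cyc (x - L) (y - L) (z - L) ↔ cyc x y z := by
  simp [cyc, sub_lt_sub_iff_right]

lemma cyc_rot (hℓ : 0 < ℓ) (hc : c ∈ Icc 0 ℓ) (hx : x ∈ Ico 0 ℓ) (hy : y ∈ Ico 0 ℓ)
    (hz : z ∈ Ico 0 ℓ) (h : cyc x y z) : cyc (rot ℓ c x) (rot ℓ c y) (rot ℓ c z) := by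
  rw [rot_eq_ite hℓ hc hx, rot_eq_ite hℓ hc hy, rot_eq_ite hℓ hc hz]
  rcases hx with ⟨hx0, hxl⟩; rcases hy with ⟨hy0, hyl⟩; rcases hz with ⟨hz0, hzl⟩
  unfold cyc at h ⊢
  split_ifs with p q r <;>
  rcases h with ⟨ha, hb⟩ | ⟨ha, hb⟩ | ⟨ha, hb⟩ <;>
  first
    | (left; constructor <;> linarith)
    | (right; left; constructor <;> linarith)
    | (right; right; constructor <;> linarith)


lemma cyc_rot_rev (hℓ : 0 < ℓ) (hc : c ∈ Ico 0 ℓ) (hx : x ∈ Ico 0 ℓ) (hy : y ∈ Ico 0 ℓ)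
    (hz : z ∈ Ico 0 ℓ) (h : cyc (rot ℓ c x) (rot ℓ c y) (rot ℓ c z)) : cyc x y z := by
  have h0 : rot ℓ c 0 ∈ Icc 0 ℓ := ⟨rot_nonneg hℓ c 0, (rot_lt hℓ c 0).le⟩
  have := cyc_rot hℓ h0 ⟨rot_nonneg hℓ c x, rot_lt hℓ c x⟩ ⟨rot_nonneg hℓ c y, rot_lt hℓ c y⟩
    ⟨rot_nonneg hℓ c z, rot_lt hℓ c z⟩ h
  rwa [rot_left_inv hℓ hc hx, rot_left_inv hℓ hc hy, rot_left_inv hℓ hc hz] at this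

/-- A finite set of reals that is pairwise `ε`-separated has spread at least `(card-1)·ε`. -/
lemma spread_ge (ε : ℝ) (hε : 0 < ε) :
    ∀ (s : Finset ℝ) (hs : s.Nonempty), (∀ x ∈ s, ∀ y ∈ s, x ≠ y → ε ≤ |x - y|) →
      ((s.card : ℝ) - 1) * ε ≤ s.max' hs - s.min' hs := by
  intro s
  induction s using Finset.strongInduction with
  | _ s ih =>
    intro hs hsep
    rcases eq_or_lt_of_le (Finset.one_le_card.mpr hs) with h1 | h1
    · -- card = 1
      rcases Finset.card_eq_one.mp h1.symm with ⟨a, rfl⟩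
      simp
    · -- card ≥ 2
      have hmaxmem := s.max'_mem hs
      have hne : (s.erase (s.max' hs)).Nonempty := by
        rw [← Finset.card_pos, Finset.card_erase_of_mem hmaxmem]
        omega
      have hsub : s.erase (s.max' hs) ⊂ s := Finset.erase_ssubset hmaxmem
      have ih' := ih _ hsub hne (fun x hx y hy hxy =>
        hsep x (Finset.mem_of_mem_erase hx) y (Finset.mem_of_mem_erase hy) hxy)
      have hcard : ((s.erase (s.max' hs)).card : ℝ) = (s.card : ℝ) - 1 := by
        rw [Finset.card_erase_of_mem hmaxmem]
        have : 1 ≤ s.card := Finset.one_le_card.mpr hs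
        push_cast [Nat.cast_sub this]
        ring
      set t := s.erase (s.max' hs) with ht
      have hmax't : t.max' hne ∈ s := Finset.mem_of_mem_erase (t.max'_mem hne)
      have hmaxne : t.max' hne ≠ s.max' hs := Finset.ne_of_mem_erase (t.max'_mem hne)
      have hle : t.max' hne ≤ s.max' hs := s.le_max' _ hmax't
      have hstep : t.max' hne + ε ≤ s.max' hs := by
        have := hsep _ hmax't _ hmaxmem hmaxne
        rw [abs_of_nonpos (by linarith)] at this
        linarith
      have hminle : s.min' hs ≤ t.min' hne := Finset.min'_le _ _ (Finset.mem_of_mem_erase (t.min'_mem hne))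
      have : ((t.card : ℝ) - 1) * ε ≤ t.max' hne - t.min' hne := ih'
      rw [hcard] at this
      nlinarith [hε.le]


lemma rot_eq_zero_iff (hℓ : 0 < ℓ) (hc : c ∈ Ico 0 ℓ) (hx : x ∈ Ico 0 ℓ) :
    rot ℓ c x = 0 ↔ x = c := by
  constructor
  · intro h
    exact rot_injOn hℓ hc hx hc (by rw [h, rot_self hℓ])
  · rintro rfl; exact rot_self hℓ _

lemma rot_pos_of_ne (hℓ : 0 < ℓ) (hc : c ∈ Ico 0 ℓ) (hx : x ∈ Ico 0 ℓ) (hne : x ≠ c) :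
    0 < rot ℓ c x :=
  lt_of_le_of_ne (rot_nonneg hℓ c x) (fun h => hne ((rot_eq_zero_iff hℓ hc hx).mp h.symm))

lemma rot_rebase (hℓ : 0 < ℓ) (hb : c ∈ Ico 0 ℓ) (hc : x ∈ Ico 0 ℓ) (t : ℝ) :
    rot ℓ (rot ℓ c x) (rot ℓ c t) = rot ℓ x t := by
  rw [rot_comp hℓ]
  rw [rot_eq_ite hℓ ⟨hb.1, hb.2.le⟩ hc]
  by_cases h : x < c
  · rw [if_pos h]
    have : c + (x - c + ℓ) = x + (1:ℤ) * ℓ := by push_cast; ring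
    rw [this, rot_period hℓ]
  · rw [if_neg h]
    have : c + (x - c) = x + (0:ℤ) * ℓ := by push_cast; ring
    rw [this, rot_period hℓ]

/-- Key combinatorial lemma: a set `B` unlinked from `A` lies inside a single gap of `A`,
namely the gap "just below" a suitable `c ∈ A`. -/
lemma exists_gap (hℓ : 0 < ℓ) (A B : Finset ℝ) (hA : ∀ a ∈ A, a ∈ Ico (0:ℝ) ℓ)
    (hB : ∀ b ∈ B, b ∈ Ico (0:ℝ) ℓ) (hAne : A.Nonempty) (hBne : B.Nonempty)
    (hdisj : ∀ x ∈ A, x ∉ B) (hcross : ¬ Cross A B) :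
    ∃ c ∈ A, ∀ b ∈ B, ∀ a ∈ A, rot ℓ c a < rot ℓ c b := by
  obtain ⟨b0, hb0⟩ := hBne
  have hb0' := hB b0 hb0
  set img := A.image (rot ℓ b0) with himg
  have himgne : img.Nonempty := hAne.image _
  obtain ⟨c, hcA, hcm⟩ := Finset.mem_image.mp (img.min'_mem himgne)
  have hc' := hA c hcA
  set m := img.min' himgne with hm
  have hcb0 : c ≠ b0 := fun h => hdisj c hcA (h ▸ hb0)
  have hmpos : 0 < m := by rw [← hcm]; exact rot_pos_of_ne hℓ hb0' hc' hcb0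
  have hmlt : m < ℓ := by rw [← hcm]; exact rot_lt hℓ b0 c
  refine ⟨c, hcA, ?_⟩
  intro b hb a ha
  by_contra hcon
  push_neg at hcon
  have ha' := hA a ha
  have hb' := hB b hb
  have hba : b ≠ a := fun h => hdisj a ha (h ▸ hb)
  have hlt : rot ℓ c b < rot ℓ c a :=
    lt_of_le_of_ne hcon (fun h => hba (rot_injOn hℓ hc' hb' ha' h))
  -- rot relative to c expressed via b0 coordinates
  have hre : ∀ t : ℝ, rot ℓ c t = rot ℓ m (rot ℓ b0 t) := by
    intro t
    rw [← hcm, rot_rebase hℓ hb0' hc']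
  have hmIcc : m ∈ Icc 0 ℓ := ⟨hmpos.le, hmlt.le⟩
  -- b0's coordinate relative to c is ℓ - m
  have hb0c : rot ℓ c b0 = ℓ - m := by
    rw [hre, rot_self hℓ]
    rw [rot_eq_ite hℓ hmIcc ⟨le_refl 0, hℓ⟩, if_pos hmpos]
    ring
  -- a's coordinate: z_a ≥ m hence rot c a = z_a - m < ℓ - m
  have hza : m ≤ rot ℓ b0 a := Finset.min'_le img _ (Finset.mem_image_of_mem _ ha)
  have hzalt : rot ℓ b0 a < ℓ := rot_lt hℓ b0 a
  have hca : rot ℓ c a = rot ℓ b0 a - m := by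
    rw [hre, rot_eq_ite hℓ hmIcc ⟨rot_nonneg hℓ b0 a, hzalt⟩, if_neg (not_lt.mpr hza)]
  have hcb_pos : 0 < rot ℓ c b := rot_pos_of_ne hℓ hc' hb' (fun h => hdisj c hcA (h ▸ hb))
  have hcc : rot ℓ c c = 0 := rot_self hℓ c
  -- build the crossing
  apply hcross
  refine ⟨c, hcA, a, ha, b, hb, b0, hb0, ?_, ?_⟩
  · -- cyc c b a
    apply cyc_rot_rev hℓ hc' hc' hb' ha'
    rw [hcc]
    exact Or.inl ⟨hcb_pos, hlt⟩
  · -- cyc a b0 c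
    apply cyc_rot_rev hℓ hc' ha' hb0' hc'
    rw [hcc, hb0c]
    right; right
    constructor
    · rw [hca]; linarith
    · rw [hca]; linarith


/-- Pivot lemma: in a finite pairwise-unlinked family some member has a single gap
containing all the other members. -/
lemma exists_pivot (hℓ : 0 < ℓ) (F : Finset (Finset ℝ)) (hFne : F.Nonempty)
    (hmem : ∀ A ∈ F, (∀ a ∈ A, a ∈ Ico (0:ℝ) ℓ) ∧ A.Nonempty)
    (hpair : ∀ A ∈ F, ∀ B ∈ F, A ≠ B → (∀ x ∈ A, x ∉ B) ∧ ¬ Cross A B) :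
    ∃ A ∈ F, ∃ c ∈ A, ∀ B ∈ F, B ≠ A → ∀ b ∈ B, ∀ a ∈ A, rot ℓ c a < rot ℓ c b := by
  induction F using Finset.strongInduction with
  | _ F ih =>
  rcases eq_or_lt_of_le (Finset.one_le_card.mpr hFne) with h1 | h1
  · -- singleton
    obtain ⟨A, rfl⟩ := Finset.card_eq_one.mp h1.symm
    obtain ⟨c, hc⟩ := (hmem A (Finset.mem_singleton_self A)).2
    exact ⟨A, Finset.mem_singleton_self A, c, hc, by
      intro B hB hBA
      exact absurd (Finset.mem_singleton.mp hB) hBA⟩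
  · obtain ⟨A₁, hA₁⟩ := hFne
    set F' := F.erase A₁ with hF'
    have hF'ne : F'.Nonempty := by
      rw [← Finset.card_pos, Finset.card_erase_of_mem hA₁]; omega
    have hF'sub : F' ⊂ F := Finset.erase_ssubset hA₁
    obtain ⟨A, hAF', c, hcA, hpiv⟩ := ih F' hF'sub hF'ne
      (fun B hB => hmem B (Finset.mem_of_mem_erase hB))
      (fun B hB C hC h => hpair B (Finset.mem_of_mem_erase hB) C (Finset.mem_of_mem_erase hC) h)
    have hAF : A ∈ F := Finset.mem_of_mem_erase hAF'
    have hAA₁ : A ≠ A₁ := Finset.ne_of_mem_erase hAF'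
    have hAIco := (hmem A hAF).1
    have hA₁Ico := (hmem A₁ hA₁).1
    have hA₁ne := (hmem A₁ hA₁).2
    have hAne := (hmem A hAF).2
    -- where does A₁ sit relative to A?
    obtain ⟨c', hc'A, hgap⟩ := exists_gap hℓ A A₁ hAIco hA₁Ico hAne hA₁ne
      (hpair A hAF A₁ hA₁ hAA₁).1 (hpair A hAF A₁ hA₁ hAA₁).2
    by_cases hcc : c' = c
    · -- same gap: A remains a pivot for the whole family
      refine ⟨A, hAF, c, hcA, ?_⟩
      intro B hB hBA b hb a ha
      by_cases hBA₁ : B = A₁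
      · subst hBA₁; exact hcc ▸ hgap b hb a ha
      · exact hpiv B (Finset.mem_erase.mpr ⟨hBA₁, hB⟩) hBA b hb a ha
    · -- different gaps: A₁ becomes the pivot
      have hc'Ico := hAIco c' hc'A
      have hcIco := hAIco c hcA
      -- work in c'-coordinates
      set y : ℝ → ℝ := rot ℓ c' with hy
      have hyIco : ∀ t, y t ∈ Ico 0 ℓ := fun t => ⟨rot_nonneg hℓ c' t, rot_lt hℓ c' t⟩
      set imgA := A.image y with himgA
      have himgAne : imgA.Nonempty := hAne.image _
      set M := imgA.max' himgAne with hM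
      obtain ⟨amax, hamax, hamaxy⟩ := Finset.mem_image.mp (imgA.max'_mem himgAne)
      rw [← hM] at hamaxy
      set imgA₁ := A₁.image y with himgA₁
      have himgA₁ne : imgA₁.Nonempty := hA₁ne.image _
      set v := imgA₁.min' himgA₁ne with hv
      obtain ⟨c₁, hc₁A₁, hc₁y⟩ := Finset.mem_image.mp (imgA₁.min'_mem himgA₁ne)
      rw [← hv] at hc₁y
      have hMlt : M < v := by
        rw [← hamaxy, ← hc₁y]
        exact hgap c₁ hc₁A₁ amax hamax
      have hvlt : v < ℓ := by rw [← hc₁y]; exact rot_lt hℓ c' c₁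
      have hMle : ∀ a ∈ A, y a ≤ M := fun a ha => Finset.le_max' _ _ (Finset.mem_image_of_mem _ ha)
      have hvle : ∀ x ∈ A₁, v ≤ y x := fun x hx => Finset.min'_le _ _ (Finset.mem_image_of_mem _ hx)
      -- every b in any B ∈ F' has y b < y c ≤ M
      have hycpos : 0 < y c := rot_pos_of_ne hℓ hc'Ico hcIco (fun h => hcc h.symm)
      have hkey : ∀ B ∈ F', B ≠ A → ∀ b ∈ B, y b < y c := by
        intro B hB hBA b hb
        have hbIco := (hmem B (Finset.mem_of_mem_erase hB)).1 b hb
        have hIH := hpiv B hB hBA b hb c' hc'A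
        -- rot relative to c expressed via c'-coordinates
        have hre : ∀ t : ℝ, rot ℓ c t = rot ℓ (y c) (y t) := fun t =>
          (rot_rebase hℓ hc'Ico hcIco t).symm
        rw [hre c', hre b] at hIH
        have hyc' : y c' = 0 := rot_self hℓ c'
        rw [hyc'] at hIH
        have h0 : rot ℓ (y c) 0 = ℓ - y c := by
          rw [rot_eq_ite hℓ ⟨(hyIco c).1, (hyIco c).2.le⟩ ⟨le_refl 0, hℓ⟩, if_pos hycpos]; ring
        rw [h0] at hIH
        by_contra hcon
        push_neg at hcon
        have : rot ℓ (y c) (y b) = y b - y c := by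
          rw [rot_eq_ite hℓ ⟨(hyIco c).1, (hyIco c).2.le⟩ (hyIco b), if_neg (not_lt.mpr hcon)]
        rw [this] at hIH
        have := (hyIco b).2
        linarith
      -- conclude: A₁ with basepoint c₁ is a pivot for the whole family
      refine ⟨A₁, hA₁, c₁, hc₁A₁, ?_⟩
      intro B hB hBA₁ b hb x hx
      have hbIco := (hmem B hB).1 b hb
      have hxIco := hA₁Ico x hx
      have hc₁Ico := hA₁Ico c₁ hc₁A₁
      have hre : ∀ t : ℝ, rot ℓ c₁ t = rot ℓ v (y t) := fun t => by
        rw [← hc₁y]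
        exact (rot_rebase hℓ hc'Ico hc₁Ico t).symm
      have hvIcc : v ∈ Icc 0 ℓ := ⟨hc₁y ▸ (hyIco c₁).1, hvlt.le⟩
      have hybv : y b < v := by
        by_cases hBA : B = A
        · subst hBA
          exact lt_of_le_of_lt (hMle b hb) hMlt
        · exact lt_of_lt_of_le (hkey B (Finset.mem_erase.mpr ⟨hBA₁, hB⟩) hBA b hb)
            (le_trans (hMle c hcA) hMlt.le)
      have hx1 : rot ℓ c₁ x = y x - v := by
        rw [hre, rot_eq_ite hℓ hvIcc (hyIco x), if_neg (not_lt.mpr (hvle x hx))]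
      have hb1 : rot ℓ c₁ b = y b - v + ℓ := by
        rw [hre, rot_eq_ite hℓ hvIcc (hyIco b), if_pos hybv]
      rw [hx1, hb1]
      have := (hyIco x).2
      have := (hyIco b).1
      linarith


/-- Separation of a configuration on a circle of length `ℓ`. -/
def SepOn (ℓ ε : ℝ) (A : Finset ℝ) : Prop :=
  ∀ x ∈ A, ∀ y ∈ A, x ≠ y → ε ≤ |x - y| ∧ ε ≤ ℓ - |x - y|

lemma sep_rot (hℓ : 0 < ℓ) (hc : c ∈ Icc 0 ℓ) {ε : ℝ} {A : Finset ℝ}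
    (hA : ∀ a ∈ A, a ∈ Ico (0:ℝ) ℓ) (hsep : SepOn ℓ ε A) {u v : ℝ} (hu : u ∈ A) (hv : v ∈ A)
    (huv : u ≠ v) :
    ε ≤ |rot ℓ c u - rot ℓ c v| ∧ ε ≤ ℓ - |rot ℓ c u - rot ℓ c v| := by
  obtain ⟨h1, h2⟩ := hsep u hu v hv huv
  rcases rot_abs_sub hℓ hc (hA u hu) (hA v hv) with h | h <;> rw [h] <;>
    constructor <;> linarith

lemma image_eq_of_injOn {g : ℝ → ℝ} {S : Set ℝ} (hg : ∀ x ∈ S, ∀ y ∈ S, g x = g y → x = y)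
    {B₁ B₂ : Finset ℝ} (h1 : ∀ b ∈ B₁, b ∈ S) (h2 : ∀ b ∈ B₂, b ∈ S)
    (h : B₁.image g = B₂.image g) : B₁ = B₂ := by
  ext t
  constructor
  · intro ht
    have : g t ∈ B₂.image g := h ▸ Finset.mem_image_of_mem g ht
    obtain ⟨s, hs, hgs⟩ := Finset.mem_image.mp this
    rw [← hg s (h2 s hs) t (h1 t ht) hgs]; exact hs
  · intro ht
    have : g t ∈ B₁.image g := h ▸ Finset.mem_image_of_mem g ht
    obtain ⟨s, hs, hgs⟩ := Finset.mem_image.mp this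
    rw [← hg s (h1 s hs) t (h2 t ht) hgs]; exact hs

/-- Core counting lemma: `n` pairwise unlinked, `ε`-separated `k`-point configurations on a
circle of length `ℓ` force `(n(k-2)+2)ε ≤ ℓ`. -/
lemma core (k : ℕ) (hk : 3 ≤ k) {ε : ℝ} (hε : 0 < ε) :
    ∀ n : ℕ, ∀ ℓ : ℝ, 0 < ℓ → ∀ F : Finset (Finset ℝ), F.card = n → F.Nonempty →
    (∀ A ∈ F, A.card = k ∧ (∀ a ∈ A, a ∈ Ico (0:ℝ) ℓ) ∧ SepOn ℓ ε A) →
    (∀ A ∈ F, ∀ B ∈ F, A ≠ B → (∀ x ∈ A, x ∉ B) ∧ ¬ Cross A B) →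
    ((n : ℝ) * ((k:ℝ) - 2) + 2) * ε ≤ ℓ := by
  intro n
  induction n using Nat.strong_induction_on with
  | _ n ih =>
  intro ℓ hℓ F hcardF hFne hmem hpair
  have hn1 : 1 ≤ n := hcardF ▸ Finset.one_le_card.mpr hFne
  -- find a pivot
  obtain ⟨A, hAF, c, hcA, hpiv⟩ := exists_pivot hℓ F hFne
    (fun B hB => ⟨(hmem B hB).2.1, Finset.card_pos.mp (by rw [(hmem B hB).1]; omega)⟩)
    hpair
  obtain ⟨hAcard, hAIco, hAsep⟩ := hmem A hAF
  have hcIco : c ∈ Ico (0:ℝ) ℓ := hAIco c hcA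
  have hcIcc : c ∈ Icc (0:ℝ) ℓ := ⟨hcIco.1, hcIco.2.le⟩
  set y : ℝ → ℝ := rot ℓ c with hy
  have hyIco : ∀ t, y t ∈ Ico 0 ℓ := fun t => ⟨rot_nonneg hℓ c t, rot_lt hℓ c t⟩
  set imgA := A.image y with himgA
  have himgAne : imgA.Nonempty := (Finset.card_pos.mp (by rw [hAcard]; omega)).image _
  have himgAcard : imgA.card = k := by
    rw [himgA, Finset.card_image_of_injOn, hAcard]
    intro u hu v hv huv
    exact rot_injOn hℓ hcIco (hAIco u hu) (hAIco v hv) huv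
  have himgsep : ∀ u ∈ imgA, ∀ v ∈ imgA, u ≠ v → ε ≤ |u - v| := by
    intro u hu v hv huv
    obtain ⟨u', hu', rfl⟩ := Finset.mem_image.mp hu
    obtain ⟨v', hv', rfl⟩ := Finset.mem_image.mp hv
    exact (sep_rot hℓ hcIcc hAIco hAsep hu' hv' (fun h => huv (h ▸ rfl))).1
  set M := imgA.max' himgAne with hM
  obtain ⟨amax, hamax, hamaxy⟩ := Finset.mem_image.mp (imgA.max'_mem himgAne)
  rw [← hM] at hamaxy
  have hamaxy' : rot ℓ c amax = M := hamaxy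
  have hminnn : 0 ≤ imgA.min' himgAne := by
    obtain ⟨w, hw, hwy⟩ := Finset.mem_image.mp (imgA.min'_mem himgAne)
    rw [← hwy]; exact (hyIco w).1
  have hspread := spread_ge ε hε imgA himgAne himgsep
  rw [himgAcard] at hspread
  have hMge : ((k:ℝ) - 1) * ε ≤ M := by rw [hM]; linarith
  have hMlt : M < ℓ := by rw [← hamaxy]; exact (hyIco amax).2
  rcases eq_or_lt_of_le hn1 with h1 | h1
  · -- base case n = 1 : kε ≤ ℓ
    -- use the pair (amax, c)
    have hk2 : (2:ℕ) ≤ k := by omega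
    have hcards : 2 ≤ A.card := by omega
    have hk3 : (3:ℝ) ≤ (k:ℝ) := by exact_mod_cast hk
    have hamaxc : amax ≠ c := by
      intro h
      have hM0 : M = 0 := by rw [← hamaxy, h]; exact rot_self hℓ c
      nlinarith
    have hsep2 := sep_rot hℓ hcIcc hAIco hAsep hamax hcA hamaxc
    have hycc : rot ℓ c c = 0 := rot_self hℓ c
    rw [hycc, hamaxy'] at hsep2
    have : ℓ - |M - 0| ≥ ε := hsep2.2
    have hMnn : 0 ≤ M := by nlinarith
    rw [sub_zero, abs_of_nonneg hMnn] at this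
    rw [← h1]
    push_cast
    linarith
  · -- inductive step n ≥ 2
    have hk3 : (3:ℝ) ≤ (k:ℝ) := by exact_mod_cast hk
    set L : ℝ := ((k:ℝ) - 2) * ε with hL
    have hLnn : 0 ≤ L := by rw [hL]; nlinarith
    have hML : L + ε ≤ M := by rw [hL]; nlinarith
    set ℓ' := ℓ - L with hℓ''
    have hℓ'pos : 0 < ℓ' := by rw [hℓ'']; nlinarith
    set g : ℝ → ℝ := fun t => rot ℓ c t - L with hgdef
    set F' := F.erase A with hF'
    have hF'card : F'.card = n - 1 := by rw [hF', Finset.card_erase_of_mem hAF, hcardF]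
    have hF'ne : F'.Nonempty := by
      rw [← Finset.card_pos, hF'card]; omega
    have htop : ∀ B ∈ F', ∀ b ∈ B, M < rot ℓ c b := by
      intro B hB b hb
      have := hpiv B (Finset.mem_of_mem_erase hB) (Finset.ne_of_mem_erase hB) b hb amax hamax
      exact hamaxy' ▸ this
    have hginj : ∀ u ∈ Ico (0:ℝ) ℓ, ∀ v ∈ Ico (0:ℝ) ℓ, g u = g v → u = v := by
      intro u hu v hv huv
      rw [hgdef] at huv
      simp only [sub_left_inj] at huv
      exact rot_injOn hℓ hcIco hu hv huv
    have hBIcoF : ∀ B ∈ F', ∀ b ∈ B, b ∈ Ico (0:ℝ) ℓ := fun B hB =>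
      (hmem B (Finset.mem_of_mem_erase hB)).2.1
    set G := F'.image (fun B => B.image g) with hG
    have hGcard : G.card = n - 1 := by
      rw [hG, Finset.card_image_of_injOn, hF'card]
      intro B₁ h₁ B₂ h₂ h
      exact image_eq_of_injOn (S := Ico (0:ℝ) ℓ) hginj
        (hBIcoF B₁ (by exact_mod_cast h₁)) (hBIcoF B₂ (by exact_mod_cast h₂)) h
    have hGne : G.Nonempty := hF'ne.image _
    have hGmem : ∀ B' ∈ G, B'.card = k ∧ (∀ b ∈ B', b ∈ Ico (0:ℝ) ℓ') ∧ SepOn ℓ' ε B' := by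
      intro B' hB'
      obtain ⟨B, hB, rfl⟩ := Finset.mem_image.mp hB'
      obtain ⟨hBk, hBIco, hBsep⟩ := hmem B (Finset.mem_of_mem_erase hB)
      refine ⟨?_, ?_, ?_⟩
      · rw [Finset.card_image_of_injOn, hBk]
        intro u hu v hv huv
        exact hginj u (hBIco u hu) v (hBIco v hv) huv
      · intro b' hb'
        obtain ⟨b, hb, rfl⟩ := Finset.mem_image.mp hb'
        have h1 := htop B hB b hb
        have h2 := rot_lt hℓ c b
        constructor
        · rw [hgdef]; dsimp only; nlinarith
        · rw [hgdef, hℓ'']; dsimp only; linarith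
      · intro u' hu' v' hv' huv'
        obtain ⟨u, hu, rfl⟩ := Finset.mem_image.mp hu'
        obtain ⟨v, hv, rfl⟩ := Finset.mem_image.mp hv'
        have huvne : u ≠ v := fun h => huv' (h ▸ rfl)
        have habs : |g u - g v| = |rot ℓ c u - rot ℓ c v| := by rw [hgdef]; ring_nf
        have hs := sep_rot hℓ hcIcc hBIco hBsep hu hv huvne
        have h1u := htop B hB u hu
        have h1v := htop B hB v hv
        have h2u := rot_lt hℓ c u
        have h2v := rot_lt hℓ c v
        constructor
        · rw [habs]; exact hs.1
        · rw [habs, hℓ'']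
          rcases abs_cases (rot ℓ c u - rot ℓ c v) with ⟨he, _⟩ | ⟨he, _⟩ <;> rw [he] <;> linarith
    have hGpair : ∀ P ∈ G, ∀ Q ∈ G, P ≠ Q → (∀ x ∈ P, x ∉ Q) ∧ ¬ Cross P Q := by
      intro P hP Q hQ hPQ
      obtain ⟨B₁, hB₁, rfl⟩ := Finset.mem_image.mp hP
      obtain ⟨B₂, hB₂, rfl⟩ := Finset.mem_image.mp hQ
      have hB₁₂ : B₁ ≠ B₂ := fun h => hPQ (h ▸ rfl)
      obtain ⟨hdisj, hcross⟩ := hpair B₁ (Finset.mem_of_mem_erase hB₁)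
        B₂ (Finset.mem_of_mem_erase hB₂) hB₁₂
      have hIco₁ := hBIcoF B₁ hB₁
      have hIco₂ := hBIcoF B₂ hB₂
      constructor
      · intro x hx hx2
        obtain ⟨b₁, hb₁, rfl⟩ := Finset.mem_image.mp hx
        obtain ⟨b₂, hb₂, hb₂e⟩ := Finset.mem_image.mp hx2
        have : b₂ = b₁ := hginj b₂ (hIco₂ b₂ hb₂) b₁ (hIco₁ b₁ hb₁) hb₂e
        exact hdisj b₁ hb₁ (this ▸ hb₂)
      · rintro ⟨p, hp, p', hp', q, hq, q', hq', h1, h2⟩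
        obtain ⟨a1, ha1, rfl⟩ := Finset.mem_image.mp hp
        obtain ⟨a2, ha2, rfl⟩ := Finset.mem_image.mp hp'
        obtain ⟨b1, hb1, rfl⟩ := Finset.mem_image.mp hq
        obtain ⟨b2, hb2, rfl⟩ := Finset.mem_image.mp hq'
        apply hcross
        refine ⟨a1, ha1, a2, ha2, b1, hb1, b2, hb2, ?_, ?_⟩
        · have := (cyc_shift (x := rot ℓ c a1) (y := rot ℓ c b1) (z := rot ℓ c a2) L).mp h1
          exact cyc_rot_rev hℓ hcIco (hIco₁ a1 ha1) (hIco₂ b1 hb1) (hIco₁ a2 ha2) this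
        · have := (cyc_shift (x := rot ℓ c a2) (y := rot ℓ c b2) (z := rot ℓ c a1) L).mp h2
          exact cyc_rot_rev hℓ hcIco (hIco₁ a2 ha2) (hIco₂ b2 hb2) (hIco₁ a1 ha1) this
    have hIH := ih (n - 1) (by omega) ℓ' hℓ'pos G hGcard hGne hGmem hGpair
    have hcast : ((n - 1 : ℕ) : ℝ) = (n : ℝ) - 1 := by
      rw [Nat.cast_sub hn1]; norm_num
    rw [hcast, hℓ''] at hIH
    rw [hL] at hIH
    nlinarith [hIH]


/-! ### Bridge from the circle to real coordinates -/

section Bridge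

/-- The canonical representative in `[0,1)` of a point of the circle. -/
def liftR (z : Circle') : ℝ := ((AddCircle.equivIco 1 0 z : {x // x ∈ Ico (0:ℝ) (0+1)}) : ℝ)

lemma liftR_mem (z : Circle') : liftR z ∈ Ico (0:ℝ) 1 := by
  have := (AddCircle.equivIco 1 0 z).2
  simpa [liftR] using this

lemma coe_liftR (z : Circle') : ((liftR z : ℝ) : Circle') = z := by
  have : ((AddCircle.equivIco 1 0).symm (AddCircle.equivIco 1 0 z)) = z :=
    Equiv.symm_apply_apply _ _
  exact this

lemma liftR_inj {z w : Circle'} (h : liftR z = liftR w) : z = w := by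
  rw [← coe_liftR z, ← coe_liftR w, h]

lemma coe_eq_int {x y : ℝ} (h : (x : Circle') = y) : ∃ m : ℤ, x - y = m := by
  rw [QuotientAddGroup.eq_iff_sub_mem, AddSubgroup.mem_zmultiples_iff] at h
  obtain ⟨m, hm⟩ := h
  exact ⟨m, by rw [← hm]; simp [zsmul_eq_mul]⟩

lemma coe_add_int (x : ℝ) (m : ℤ) : ((x + m : ℝ) : Circle') = x := by
  have : ((m:ℝ) : Circle') = 0 := by
    rw [QuotientAddGroup.eq_zero_iff, AddSubgroup.mem_zmultiples_iff]
    exact ⟨m, by simp [zsmul_eq_mul]⟩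
  rw [AddCircle.coe_add, this, add_zero]

lemma norm_coe_le (r : ℝ) : ‖(r : Circle')‖ ≤ |r| := by
  rw [AddCircle.norm_eq]
  norm_num
  rcases eq_or_ne (round r) 0 with h | h
  · simp [h]
  · have h1 : (1:ℝ) ≤ |(round r : ℝ)| := by exact_mod_cast Int.one_le_abs h
    have h2 : |r - round r| ≤ 1/2 := abs_sub_round r
    have h3 : |(round r : ℝ)| - |r| ≤ |r - round r| := by
      have := abs_sub_abs_le_abs_sub (round r : ℝ) r
      rw [abs_sub_comm] at this
      linarith
    linarith

lemma dist_coe_le (x y : ℝ) (m : ℤ) : dist (x : Circle') (y : Circle') ≤ |x - y - m| := by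
  have h1 : dist (x : Circle') (y : Circle') = ‖((x - y - m : ℝ) : Circle')‖ := by
    rw [dist_eq_norm]
    congr 1
    have : ((x - y - m : ℝ) : Circle') = ((x - y : ℝ) : Circle') := by
      have := coe_add_int (x - y - m) m
      simpa using this
    rw [this, AddCircle.coe_sub]
  rw [h1]
  exact norm_coe_le _

lemma no_int_in_01 {m : ℤ} (h0 : (0:ℝ) < m) (h1 : (m:ℝ) < 1) : False := by
  have a : 0 < m := by exact_mod_cast h0
  have b : m < 1 := by exact_mod_cast h1
  omega

lemma no_alt {I J : Set Circle'} (hI : IsClosedArc I) (hJ : IsClosedArc J)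
    (hd : Disjoint I J) {u1 v1 u2 v2 : ℝ} (hu1 : u1 ∈ Ico (0:ℝ) 1) (hv1 : v1 ∈ Ico (0:ℝ) 1)
    (hu2 : u2 ∈ Ico (0:ℝ) 1) (hv2 : v2 ∈ Ico (0:ℝ) 1)
    (h12 : u1 < v1) (h23 : v1 < u2) (h34 : u2 < v2)
    (hu1I : (u1 : Circle') ∈ I) (hu2I : (u2 : Circle') ∈ I)
    (hv1J : (v1 : Circle') ∈ J) (hv2J : (v2 : Circle') ∈ J) : False := by
  set U : Set Circle' := ((↑) : ℝ → Circle') '' Ioo v1 v2 with hU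
  set V : Set Circle' := ((↑) : ℝ → Circle') '' Ioo v2 (v1+1) with hV
  have hopen : IsOpenMap ((↑) : ℝ → Circle') := QuotientAddGroup.isOpenMap_coe
  have hUopen : IsOpen U := hopen _ isOpen_Ioo
  have hVopen : IsOpen V := hopen _ isOpen_Ioo
  have hdisjUV : Disjoint U V := by
    rw [Set.disjoint_left]
    rintro z ⟨x, hx, rfl⟩ ⟨w, hw, hwz⟩
    obtain ⟨m, hm⟩ := coe_eq_int hwz
    have : (0:ℝ) < m := by rw [← hm]; rcases hx with ⟨hx1, hx2⟩; rcases hw with ⟨hw1, hw2⟩; linarith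
    have : (m:ℝ) < 1 := by rw [← hm]; rcases hx with ⟨hx1, hx2⟩; rcases hw with ⟨hw1, hw2⟩; linarith
    exact no_int_in_01 ‹(0:ℝ) < m› this
  have hv1I : (v1 : Circle') ∉ I := fun h => (Set.disjoint_left.mp hd h) hv1J
  have hv2I : (v2 : Circle') ∉ I := fun h => (Set.disjoint_left.mp hd h) hv2J
  have hcover : I ⊆ U ∪ V := by
    intro z hz
    set r := ((AddCircle.equivIco 1 v1 z : {x // x ∈ Ico v1 (v1+1)}) : ℝ) with hr
    have hrz : ((r : ℝ) : Circle') = z := by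
      have : ((AddCircle.equivIco 1 v1).symm (AddCircle.equivIco 1 v1 z)) = z :=
        Equiv.symm_apply_apply _ _
      exact this
    have hrmem : r ∈ Ico v1 (v1+1) := (AddCircle.equivIco 1 v1 z).2
    have hrne1 : r ≠ v1 := by
      rintro h
      rw [h] at hrz
      exact hv1I (hrz ▸ hz)
    have hrne2 : r ≠ v2 := by
      rintro h
      rw [h] at hrz
      exact hv2I (hrz ▸ hz)
    rcases lt_or_ge r v2 with h | h
    · left
      exact ⟨r, ⟨lt_of_le_of_ne hrmem.1 (Ne.symm hrne1), h⟩, hrz⟩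
    · right
      exact ⟨r, ⟨lt_of_le_of_ne h (Ne.symm hrne2), hrmem.2⟩, hrz⟩
  rcases (hI.2.2.1).subset_or_subset hUopen hVopen hdisjUV hcover with hsub | hsub
  · obtain ⟨x, hx, hxz⟩ := hsub hu1I
    obtain ⟨m, hm⟩ := coe_eq_int hxz
    have h0 : (0:ℝ) < m := by rw [← hm]; rcases hx with ⟨hx1, hx2⟩; linarith [hu1.1]
    have h1 : (m:ℝ) < 1 := by rw [← hm]; rcases hx with ⟨hx1, hx2⟩; linarith [hu1.1, hv2.2]
    exact no_int_in_01 h0 h1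
  · obtain ⟨x, hx, hxz⟩ := hsub hu2I
    obtain ⟨m, hm⟩ := coe_eq_int hxz
    have h0 : (0:ℝ) < m := by rw [← hm]; rcases hx with ⟨hx1, hx2⟩; linarith
    have h1 : (m:ℝ) < 1 := by rw [← hm]; rcases hx with ⟨hx1, hx2⟩; linarith
    exact no_int_in_01 h0 h1

lemma noCross_lift {A B : Finset Circle'} {I J : Set Circle'}
    (hI : IsClosedArc I) (hJ : IsClosedArc J) (hd : Disjoint I J)
    (hAI : (A : Set Circle') ⊆ I) (hBJ : (B : Set Circle') ⊆ J) :
    ¬ Cross (A.image liftR) (B.image liftR) := by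
  rintro ⟨p, hp, p', hp', q, hq, q', hq', h1, h2⟩
  obtain ⟨zp, hzp, rfl⟩ := Finset.mem_image.mp hp
  obtain ⟨zp', hzp', rfl⟩ := Finset.mem_image.mp hp'
  obtain ⟨zq, hzq, rfl⟩ := Finset.mem_image.mp hq
  obtain ⟨zq', hzq', rfl⟩ := Finset.mem_image.mp hq'
  have hpI : ((liftR zp : ℝ) : Circle') ∈ I := by rw [coe_liftR]; exact hAI hzp
  have hp'I : ((liftR zp' : ℝ) : Circle') ∈ I := by rw [coe_liftR]; exact hAI hzp'
  have hqJ : ((liftR zq : ℝ) : Circle') ∈ J := by rw [coe_liftR]; exact hBJ hzq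
  have hq'J : ((liftR zq' : ℝ) : Circle') ∈ J := by rw [coe_liftR]; exact hBJ hzq'
  have hpm := liftR_mem zp
  have hp'm := liftR_mem zp'
  have hqm := liftR_mem zq
  have hq'm := liftR_mem zq'
  rcases h1 with ⟨ha, hb⟩ | ⟨ha, hb⟩ | ⟨ha, hb⟩ <;> rcases h2 with ⟨hc, he⟩ | ⟨hc, he⟩ | ⟨hc, he⟩ <;>
  first
    | linarith
    | exact no_alt hI hJ hd hpm hqm hp'm hq'm (by linarith) (by linarith) (by linarith)
        hpI hp'I hqJ hq'J
    | exact no_alt hI hJ hd hp'm hq'm hpm hqm (by linarith) (by linarith) (by linarith)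
        hp'I hpI hq'J hqJ
    | exact no_alt hJ hI hd.symm hq'm hpm hqm hp'm (by linarith) (by linarith) (by linarith)
        hq'J hqJ hpI hp'I
    | exact no_alt hJ hI hd.symm hqm hp'm hq'm hpm (by linarith) (by linarith) (by linarith)
        hqJ hq'J hp'I hpI

end Bridge


/-! ### Main counting bound on the circle -/

lemma key (k : ℕ) (hk : 3 ≤ k) (𝒜 : Set (Finset Circle'))
    (hcard : ∀ A ∈ 𝒜, A.card = k)
    (hunlinked : ∀ A ∈ 𝒜, ∀ A' ∈ 𝒜, A ≠ A' →
      ∃ I J : Set Circle', IsClosedArc I ∧ IsClosedArc J ∧ Disjoint I J ∧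
        (A : Set Circle') ⊆ I ∧ (A' : Set Circle') ⊆ J)
    {ε : ℝ} (hε : 0 < ε) (F : Finset (Finset Circle'))
    (hF : ∀ A ∈ F, A ∈ 𝒜 ∧ ∀ a ∈ A, ∀ a' ∈ A, a ≠ a' → ε ≤ dist a a') :
    (F.card : ℝ) * ε ≤ (k:ℝ) - 2 := by
  have hk3 : (3:ℝ) ≤ (k:ℝ) := by exact_mod_cast hk
  rcases F.eq_empty_or_nonempty with rfl | hFne
  · simp only [Finset.card_empty, Nat.cast_zero, zero_mul]; nlinarith
  set G := F.image (fun A => A.image liftR) with hG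
  have hinjA : ∀ A₁ A₂ : Finset Circle', A₁.image liftR = A₂.image liftR → A₁ = A₂ := by
    intro A₁ A₂ h
    ext z
    constructor
    · intro hz
      have : liftR z ∈ A₂.image liftR := h ▸ Finset.mem_image_of_mem _ hz
      obtain ⟨w, hw, hwz⟩ := Finset.mem_image.mp this
      rwa [← liftR_inj hwz]
    · intro hz
      have : liftR z ∈ A₁.image liftR := h.symm ▸ Finset.mem_image_of_mem _ hz
      obtain ⟨w, hw, hwz⟩ := Finset.mem_image.mp this
      rwa [← liftR_inj hwz]
  have hGcard : G.card = F.card := Finset.card_image_of_injOn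
    (fun A₁ _ A₂ _ h => hinjA A₁ A₂ h)
  have hGne : G.Nonempty := hFne.image _
  have hGmem : ∀ Alift ∈ G, Alift.card = k ∧ (∀ a ∈ Alift, a ∈ Ico (0:ℝ) 1) ∧ SepOn 1 ε Alift := by
    intro Alift hAlift
    obtain ⟨A, hA, rfl⟩ := Finset.mem_image.mp hAlift
    obtain ⟨hA𝒜, hAsep⟩ := hF A hA
    refine ⟨?_, ?_, ?_⟩
    · rw [Finset.card_image_of_injOn (fun z _ w _ h => liftR_inj h)]
      exact hcard A hA𝒜
    · intro a ha
      obtain ⟨z, _, rfl⟩ := Finset.mem_image.mp ha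
      exact liftR_mem z
    · intro u hu v hv huv
      obtain ⟨z, hz, rfl⟩ := Finset.mem_image.mp hu
      obtain ⟨w, hw, rfl⟩ := Finset.mem_image.mp hv
      have hzw : z ≠ w := fun h => huv (h ▸ rfl)
      have hd : ε ≤ dist z w := hAsep z hz w hw hzw
      rw [← coe_liftR z, ← coe_liftR w] at hd
      have h0 := dist_coe_le (liftR z) (liftR w) 0
      have hu1 := liftR_mem z
      have hv1 := liftR_mem w
      constructor
      · have : ε ≤ |liftR z - liftR w - ((0:ℤ):ℝ)| := le_trans hd h0
        simpa using this
      · rcases le_or_gt (liftR w) (liftR z) with hc | hc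
        · have h1 := dist_coe_le (liftR z) (liftR w) 1
          have habs1 : |liftR z - liftR w - ((1:ℤ):ℝ)| = 1 - (liftR z - liftR w) := by
            rw [abs_of_nonpos (by push_cast; rcases hu1 with ⟨_,_⟩; rcases hv1 with ⟨_,_⟩; linarith)]
            push_cast; ring
          have habs2 : |liftR z - liftR w| = liftR z - liftR w := abs_of_nonneg (by linarith)
          rw [habs2]
          rw [habs1] at h1
          linarith [le_trans hd h1]
        · have h1 := dist_coe_le (liftR z) (liftR w) (-1)
          have habs1 : |liftR z - liftR w - ((-1:ℤ):ℝ)| = 1 - (liftR w - liftR z) := by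
            rw [abs_of_nonneg (by push_cast; rcases hu1 with ⟨_,_⟩; rcases hv1 with ⟨_,_⟩; linarith)]
            push_cast; ring
          have habs2 : |liftR z - liftR w| = liftR w - liftR z := by
            rw [abs_of_nonpos (by linarith)]; ring
          rw [habs2]
          rw [habs1] at h1
          linarith [le_trans hd h1]
  have hGpair : ∀ P ∈ G, ∀ Q ∈ G, P ≠ Q → (∀ x ∈ P, x ∉ Q) ∧ ¬ Cross P Q := by
    intro P hP Q hQ hPQ
    obtain ⟨A₁, hA₁, rfl⟩ := Finset.mem_image.mp hP
    obtain ⟨A₂, hA₂, rfl⟩ := Finset.mem_image.mp hQ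
    have hA₁₂ : A₁ ≠ A₂ := fun h => hPQ (h ▸ rfl)
    obtain ⟨I, J, hI, hJ, hd, hAI, hAJ⟩ := hunlinked A₁ (hF A₁ hA₁).1 A₂ (hF A₂ hA₂).1 hA₁₂
    refine ⟨?_, noCross_lift hI hJ hd hAI hAJ⟩
    intro x hx hx2
    obtain ⟨z, hz, rfl⟩ := Finset.mem_image.mp hx
    obtain ⟨w, hw, hwz⟩ := Finset.mem_image.mp hx2
    have : w = z := liftR_inj hwz
    subst this
    exact Set.disjoint_left.mp hd (hAI hz) (hAJ hw)
  have hcore := core k hk hε G.card 1 one_pos G rfl hGne hGmem hGpair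
  rw [hGcard] at hcore
  have hcnn : (0:ℝ) ≤ (F.card : ℝ) := Nat.cast_nonneg _
  nlinarith [hcore, mul_nonneg hcnn hε.le]

end CirclePack

/-- A family of pairwise unlinked `k`-point subsets of the circle (`k ≥ 3`) is at most
countable; more precisely, the subfamily of sets with separation at least `ε` has at most
`(k−2)/ε` elements. -/
theorem statement10 (k : ℕ) (hk : 3 ≤ k) (𝒜 : Set (Finset Circle'))
    (hcard : ∀ A ∈ 𝒜, A.card = k)
    (hunlinked : ∀ A ∈ 𝒜, ∀ A' ∈ 𝒜, A ≠ A' →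
      ∃ I J : Set Circle', IsClosedArc I ∧ IsClosedArc J ∧ Disjoint I J ∧
        (A : Set Circle') ⊆ I ∧ (A' : Set Circle') ⊆ J) :
    𝒜.Countable ∧
      ∀ ε : ℝ, 0 < ε →
        ({A ∈ 𝒜 | ∀ a ∈ A, ∀ a' ∈ A, a ≠ a' → ε ≤ dist a a'}).Finite ∧
        (Nat.card ({A ∈ 𝒜 | ∀ a ∈ A, ∀ a' ∈ A, a ≠ a' → ε ≤ dist a a'}) : ℝ) ≤
          ((k : ℝ) - 2) / ε := by
  have main : ∀ ε : ℝ, 0 < ε →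
      ({A ∈ 𝒜 | ∀ a ∈ A, ∀ a' ∈ A, a ≠ a' → ε ≤ dist a a'}).Finite ∧
      (Nat.card ({A ∈ 𝒜 | ∀ a ∈ A, ∀ a' ∈ A, a ≠ a' → ε ≤ dist a a'}) : ℝ) ≤
        ((k : ℝ) - 2) / ε := by
    intro ε hε
    set S := {A ∈ 𝒜 | ∀ a ∈ A, ∀ a' ∈ A, a ≠ a' → ε ≤ dist a a'} with hSdef
    have hkey : ∀ F : Finset (Finset Circle'), ↑F ⊆ S → (F.card : ℝ) * ε ≤ (k:ℝ) - 2 := by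
      intro F hFS
      exact CirclePack.key k hk 𝒜 hcard hunlinked hε F (fun A hA => hFS hA)
    have hfin : S.Finite := by
      by_contra hinf
      rw [← Set.not_infinite, not_not] at hinf
      obtain ⟨F, hFS, hFcard⟩ := hinf.exists_subset_card_eq (⌈((k:ℝ)-2)/ε⌉₊ + 1)
      have h1 := hkey F hFS
      rw [hFcard] at h1
      have h2 : ((k:ℝ)-2)/ε ≤ (⌈((k:ℝ)-2)/ε⌉₊ : ℝ) := Nat.le_ceil _
      rw [div_le_iff₀ hε] at h2
      push_cast at h1
      nlinarith
    refine ⟨hfin, ?_⟩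
    have h1 := hkey hfin.toFinset (by rw [Set.Finite.coe_toFinset])
    rw [Nat.card_eq_card_finite_toFinset hfin]
    rw [le_div_iff₀ hε]
    exact h1
  constructor
  · -- countability
    have hsub : 𝒜 ⊆ ⋃ n : ℕ,
        {A ∈ 𝒜 | ∀ a ∈ A, ∀ a' ∈ A, a ≠ a' → (1/((n:ℝ)+1) : ℝ) ≤ dist a a'} := by
      intro A hA
      have hk0 : 1 < A.card := by rw [hcard A hA]; omega
      obtain ⟨a₀, ha₀, a₁, ha₁, hne01⟩ := Finset.one_lt_card.mp hk0
      set P := (A ×ˢ A).filter (fun p => p.1 ≠ p.2) with hP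
      have hPne : P.Nonempty := ⟨(a₀, a₁), by
        rw [hP, Finset.mem_filter, Finset.mem_product]; exact ⟨⟨ha₀, ha₁⟩, hne01⟩⟩
      set DS := P.image (fun p => dist p.1 p.2) with hDS
      have hDSne : DS.Nonempty := hPne.image _
      set δ := DS.min' hDSne with hδ
      have hδpos : 0 < δ := by
        obtain ⟨p, hp, hpd⟩ := Finset.mem_image.mp (DS.min'_mem hDSne)
        rw [hδ, ← hpd]
        exact dist_pos.mpr (Finset.mem_filter.mp hp).2
      obtain ⟨n, hn⟩ := exists_nat_gt (1/δ)
      refine Set.mem_iUnion.mpr ⟨n, hA, ?_⟩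
      intro a ha a' ha' hne'
      have hmem : dist a a' ∈ DS := Finset.mem_image.mpr ⟨(a,a'),
        Finset.mem_filter.mpr ⟨Finset.mem_product.mpr ⟨ha, ha'⟩, hne'⟩, rfl⟩
      have h1 : δ ≤ dist a a' := Finset.min'_le _ _ hmem
      have h2 : (1/((n:ℝ)+1):ℝ) ≤ δ := by
        rw [div_le_iff₀ (by positivity)]
        rw [div_lt_iff₀ hδpos] at hn
        nlinarith
      linarith
    refine Set.Countable.mono hsub (Set.countable_iUnion (fun n => ?_))
    exact (main (1/((n:ℝ)+1)) (by positivity)).1.countable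
  · exact main
end
end
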